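/- arXiv:1503.04117 — 11 statements merged into one kernel-verified Lean document; each statement's English description precedes it below -/
import Mathlib

section
/- For r, q ∈ (0,1) and x > 0, the ratio of infinite q-Pochhammer symbols (r;q)_∞ / (rq^x;q)_∞ converges to (1−r)^x as q → 1⁻. -/
set_option maxHeartbeats 800000
open Real Filter Set

lemma aux_slope (x : ℝ) (hx : 0 < x) :
    Tendsto (fun t : ℝ => (t ^ x - 1) / (t - 1)) (nhdsWithin 1 (Ioo (0:ℝ) 1)) (nhds x) := by
  have h : HasDerivAt (fun t : ℝ => t ^ x) (x * (1:ℝ) ^ (x - 1)) 1 :=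
    hasDerivAt_rpow_const (Or.inl one_ne_zero)
  rw [hasDerivAt_iff_tendsto_slope] at h
  have h2 : Tendsto (slope (fun t : ℝ => t ^ x) 1) (nhdsWithin 1 (Ioo (0:ℝ) 1)) (nhds x) := by
    simpa using h.mono_left (nhdsWithin_mono _ (fun t (ht : t ∈ Ioo (0:ℝ) 1) => ne_of_lt ht.2))
  refine h2.congr' ?_
  filter_upwards [self_mem_nhdsWithin] with t ht
  rw [slope_def_field, Real.one_rpow]

lemma aux_bound (x : ℝ) (hx : 0 < x) {t : ℝ} (ht : t ∈ Ioo (0:ℝ) 1) :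
    1 - t ^ x ≤ max 1 x * (1 - t) := by
  rcases le_total x 1 with h | h
  · have h1 : t ^ (1:ℝ) ≤ t ^ x := rpow_le_rpow_of_exponent_ge ht.1 ht.2.le h
    rw [rpow_one] at h1
    have h2 : (1:ℝ) ≤ max 1 x := le_max_left 1 x
    nlinarith [ht.2]
  · have hb : 1 + x * (t - 1) ≤ (1 + (t - 1)) ^ x :=
      one_add_mul_self_le_rpow_one_add (by linarith [ht.1.le]) h
    have h1 : 1 + x * (t - 1) ≤ t ^ x := by
      have : (1:ℝ) + (t - 1) = t := by ring
      rwa [this] at hb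
    rw [max_eq_right h]
    nlinarith

lemma aux_log_bound {u r' : ℝ} (hu : 0 ≤ u) (hur : u ≤ r') (hr : r' < 1) :
    |Real.log (1 - u)| ≤ u / (1 - r') := by
  have h1 : 0 < 1 - u := by linarith
  have h2 : 0 < 1 - r' := by linarith
  have hle : Real.log (1 - u) ≤ 0 := Real.log_nonpos (by linarith) (by linarith)
  rw [abs_of_nonpos hle, ← Real.log_inv]
  have h3 : Real.log (1 - u)⁻¹ ≤ (1 - u)⁻¹ - 1 :=
    Real.log_le_sub_one_of_pos (by positivity)
  have h4 : (1 - u)⁻¹ - 1 = u / (1 - u) := by field_simp; ring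
  have h5 : u / (1 - u) ≤ u / (1 - r') :=
    div_le_div_of_nonneg_left hu h2 (by linarith)
  linarith [h3, h4 ▸ h3]

lemma aux_summable_log {r' q : ℝ} (h0 : 0 ≤ r') (h1 : r' < 1) (hq0 : 0 ≤ q) (hq1 : q < 1) :
    Summable fun i : ℕ => Real.log (1 - r' * q ^ i) := by
  apply Summable.of_norm_bounded
    ((summable_geometric_of_lt_one hq0 hq1).mul_left (r' / (1 - r')))
  intro i
  have hq : q ^ i ≤ 1 := pow_le_one₀ hq0 hq1.le
  have hu : 0 ≤ r' * q ^ i := by positivity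
  have hur : r' * q ^ i ≤ r' := by nlinarith
  have := aux_log_bound hu hur h1
  rw [Real.norm_eq_abs]
  calc |Real.log (1 - r' * q ^ i)| ≤ r' * q ^ i / (1 - r') := this
    _ = r' / (1 - r') * q ^ i := by ring

lemma aux_prod {r' q : ℝ} (h0 : 0 < r') (h1 : r' < 1) (hq0 : 0 ≤ q) (hq1 : q < 1) :
    (∏' i : ℕ, (1 - r' * q ^ i)) =
    Real.exp (∑' i : ℕ, Real.log (1 - r' * q ^ i)) := by
  have hs := aux_summable_log h0.le h1 hq0 hq1
  have hpos : ∀ i : ℕ, 0 < 1 - r' * q ^ i := by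
    intro i
    have hq : q ^ i ≤ 1 := pow_le_one₀ hq0 hq1.le
    nlinarith
  have h := hs.hasSum.rexp
  have h2 : HasProd (fun i : ℕ => 1 - r' * q ^ i)
      (Real.exp (∑' i : ℕ, Real.log (1 - r' * q ^ i))) := by
    exact HasProd.congr_fun h (fun i => (Real.exp_log (hpos i)).symm)
  exact h2.tprod_eq
lemma aux_ratio {r x q : ℝ} (hr0 : 0 < r) (hr1 : r < 1) (hx : 0 < x)
    (hq0 : 0 < q) (hq1 : q < 1) :
    (∏' i : ℕ, (1 - r * q ^ i)) / (∏' i : ℕ, (1 - r * q ^ (x + (i:ℝ)))) =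
    Real.exp (∑' n : ℕ, r ^ (n+1) * ((q ^ (n+1)) ^ x - 1) / ((n+1 : ℝ) * (1 - q ^ (n+1)))) := by
  have hqx0 : 0 < q ^ x := rpow_pos_of_pos hq0 x
  have hqx1 : q ^ x < 1 := rpow_lt_one hq0.le hq1 hx
  set p := r * q ^ x with hp
  have hp0 : 0 < p := by positivity
  have hpr : p < r := by
    rw [hp]; nlinarith
  have hp1 : p < 1 := hpr.trans hr1
  -- rewrite the second product
  have hconv : ∀ i : ℕ, (1 : ℝ) - r * q ^ (x + (i:ℝ)) = 1 - p * q ^ i := by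
    intro i
    rw [Real.rpow_add hq0, Real.rpow_natCast, hp]; ring_nf
  rw [tprod_congr hconv, aux_prod hr0 hr1 hq0.le hq1, aux_prod hp0 hp1 hq0.le hq1,
    ← Real.exp_sub]
  congr 1
  -- the double sum
  set a : ℕ → ℕ → ℝ := fun i n => (p ^ (n+1) - r ^ (n+1)) / (n+1) * (q ^ (n+1)) ^ i with ha
  have hqn : ∀ n : ℕ, q ^ (n+1) < 1 := fun n => pow_lt_one₀ hq0.le hq1 (Nat.succ_ne_zero n)
  have hqn0 : ∀ n : ℕ, 0 < q ^ (n+1) := fun n => pow_pos hq0 _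
  have hlog : ∀ i : ℕ, HasSum (fun n => a i n)
      (Real.log (1 - r * q ^ i) - Real.log (1 - p * q ^ i)) := by
    intro i
    have hqi : q ^ i ≤ 1 := pow_le_one₀ hq0.le hq1.le
    have hqi0 : 0 < q ^ i := pow_pos hq0 i
    have h1 : |r * q ^ i| < 1 := by rw [abs_of_nonneg (by positivity)]; nlinarith
    have h2 : |p * q ^ i| < 1 := by rw [abs_of_nonneg (by positivity)]; nlinarith
    have H := (hasSum_pow_div_log_of_abs_lt_one h2).sub (hasSum_pow_div_log_of_abs_lt_one h1)
    have heq : ∀ n : ℕ, (p * q ^ i) ^ (n+1) / (n+1) - (r * q ^ i) ^ (n+1) / (n+1) = a i n := by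
      intro n
      rw [ha]
      simp only [mul_pow, ← pow_right_comm q (n+1) i]
      ring
    have : (-Real.log (1 - p * q ^ i) - -Real.log (1 - r * q ^ i)) =
        Real.log (1 - r * q ^ i) - Real.log (1 - p * q ^ i) := by ring
    rw [this] at H
    exact H.congr_fun (fun n => (heq n).symm)
  have hsum_i : ∀ n : ℕ, Summable (fun i => a i n) := by
    intro n
    exact (summable_geometric_of_lt_one (hqn0 n).le (hqn n)).mul_left _
  have huncurry : Summable (Function.uncurry a) := by
    apply Summable.of_norm_bounded
      (Summable.mul_of_nonneg (summable_geometric_of_lt_one hq0.le hq1)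
        ((Summable.mul_left r (summable_geometric_of_lt_one hr0.le hr1)).congr
          (fun n => (pow_succ' r n).symm))
        (fun i => by positivity) (fun n => by positivity))
    rintro ⟨i, n⟩
    have hqi : (q ^ (n+1)) ^ i ≤ q ^ i := by
      rw [← pow_right_comm]
      calc (q ^ i) ^ (n+1) ≤ (q ^ i) ^ 1 :=
            pow_le_pow_of_le_one (by positivity) (pow_le_one₀ hq0.le hq1.le) (Nat.le_add_left 1 n)
        _ = q ^ i := pow_one _
    have hpn : p ^ (n+1) ≤ r ^ (n+1) := pow_le_pow_left₀ hp0.le hpr.le _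
    have h1 : |p ^ (n+1) - r ^ (n+1)| ≤ r ^ (n+1) := by
      rw [abs_of_nonpos (by linarith)]
      have : 0 ≤ p ^ (n+1) := by positivity
      linarith
    have hn1 : (1:ℝ) ≤ (n:ℝ) + 1 := by simp [Nat.cast_nonneg]
    rw [show Function.uncurry a (i, n) = a i n from rfl, Real.norm_eq_abs, ha]
    simp only
    rw [abs_mul, abs_div, abs_of_nonneg (by positivity : (0:ℝ) ≤ (q ^ (n+1)) ^ i),
      abs_of_nonneg (by positivity : (0:ℝ) ≤ ((n:ℝ)+1))]
    calc |p ^ (n+1) - r ^ (n+1)| / ((n:ℝ)+1) * (q ^ (n+1)) ^ i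
        ≤ r ^ (n+1) / 1 * q ^ i := by
          apply mul_le_mul _ hqi (by positivity) (by positivity)
          exact div_le_div₀ (by positivity) h1 one_pos hn1
      _ = q ^ i * r ^ (n+1) := by ring
  have hs1 := aux_summable_log hr0.le hr1 hq0.le hq1
  have hs2 := aux_summable_log hp0.le hp1 hq0.le hq1
  rw [← hs1.tsum_sub hs2]
  rw [tsum_congr (fun i : ℕ => ((hlog i).tsum_eq).symm)]
  rw [← huncurry.tsum_comm' (fun i => (hlog i).summable) hsum_i]
  refine tsum_congr (fun n => ?_)
  have hgeo : ∑' i : ℕ, (q ^ (n+1)) ^ i = (1 - q ^ (n+1))⁻¹ :=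
    tsum_geometric_of_lt_one (hqn0 n).le (hqn n)
  rw [ha]
  simp only
  rw [tsum_mul_left, hgeo]
  have hkey : p ^ (n+1) = r ^ (n+1) * (q ^ (n+1) : ℝ) ^ x := by
    rw [hp, mul_pow]
    congr 1
    rw [← Real.rpow_natCast (q ^ x) (n+1), ← Real.rpow_mul hq0.le,
      mul_comm x (((n+1 : ℕ)) : ℝ), Real.rpow_mul hq0.le, Real.rpow_natCast]
  rw [hkey]
  have hne1 : (1:ℝ) - q ^ (n+1) ≠ 0 := by
    have := hqn n; linarith
  have hne2 : ((n:ℝ) + 1) ≠ 0 := by positivity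
  field_simp

/-- The ratio of infinite q-Pochhammer symbols `(r;q)_∞ / (r q^x; q)_∞` converges
to `(1-r)^x` as `q → 1⁻`. -/
theorem qPochhammer_ratio_tendsto (r x : ℝ) (hr : r ∈ Set.Ioo (0:ℝ) 1) (hx : 0 < x) :
    Filter.Tendsto
      (fun q : ℝ => (∏' i : ℕ, (1 - r * q ^ i)) / ∏' i : ℕ, (1 - r * q ^ (x + (i:ℝ))))
      (nhdsWithin 1 (Set.Ioo (0:ℝ) 1)) (nhds ((1 - r) ^ x)) := by
  obtain ⟨hr0, hr1⟩ := hr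
  set c : ℝ → ℕ → ℝ :=
    fun q n => r ^ (n+1) * ((q ^ (n+1)) ^ x - 1) / ((n+1 : ℝ) * (1 - q ^ (n+1))) with hc
  have hrabs : |r| < 1 := by rw [abs_of_nonneg hr0.le]; exact hr1
  have hg : HasSum (fun n : ℕ => (-x) * (r ^ (n+1) / ((n:ℝ)+1))) (x * Real.log (1 - r)) := by
    have h := (hasSum_pow_div_log_of_abs_lt_one hrabs).mul_left (-x)
    have : (-x) * (-Real.log (1 - r)) = x * Real.log (1 - r) := by ring
    rwa [this] at h
  have hsumr : Summable (fun n : ℕ => r ^ (n+1)) :=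
    (Summable.mul_left r (summable_geometric_of_lt_one hr0.le hr1)).congr
      (fun n => (pow_succ' r n).symm)
  have key : Tendsto (fun q => ∑' n, c q n) (nhdsWithin 1 (Set.Ioo (0:ℝ) 1))
      (nhds (∑' n : ℕ, (-x) * (r ^ (n+1) / ((n:ℝ)+1)))) := by
    apply tendsto_tsum_of_dominated_convergence (bound := fun n : ℕ => max 1 x * r ^ (n+1))
      (hsumr.mul_left _)
    · intro n
      have hpow : Tendsto (fun q : ℝ => q ^ (n+1)) (nhdsWithin 1 (Set.Ioo (0:ℝ) 1))
          (nhdsWithin 1 (Set.Ioo (0:ℝ) 1)) := by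
        rw [tendsto_nhdsWithin_iff]
        constructor
        · have h1 := (continuous_pow (n+1)).tendsto (1:ℝ)
          simpa using h1.mono_left nhdsWithin_le_nhds
        · filter_upwards [self_mem_nhdsWithin] with q hq
          exact ⟨pow_pos hq.1 _, pow_lt_one₀ hq.1.le hq.2 (Nat.succ_ne_zero n)⟩
      have hslope := (aux_slope x hx).comp hpow
      have h2 := hslope.const_mul (-(r ^ (n+1) / ((n:ℝ)+1)))
      have hval : -(r ^ (n+1) / ((n:ℝ)+1)) * x = (-x) * (r ^ (n+1) / ((n:ℝ)+1)) := by ring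
      rw [hval] at h2
      refine h2.congr' ?_
      filter_upwards [self_mem_nhdsWithin] with q hq
      have ht := hq
      have htm : q ^ (n+1) ∈ Set.Ioo (0:ℝ) 1 :=
        ⟨pow_pos hq.1 _, pow_lt_one₀ hq.1.le hq.2 (Nat.succ_ne_zero n)⟩
      have hne1 : q ^ (n+1) - 1 ≠ 0 := by have := htm.2; intro h; apply absurd this; linarith [sub_eq_zero.mp h]
      have hne2 : ((n:ℝ) + 1) ≠ 0 := by positivity
      have hne3 : (1:ℝ) - q ^ (n+1) ≠ 0 := by have := htm.2; linarith
      rw [hc]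
      simp only [Function.comp]
      field_simp
      ring
    · filter_upwards [self_mem_nhdsWithin] with q hq
      intro n
      set t : ℝ := q ^ (n+1) with hts
      have htm : t ∈ Set.Ioo (0:ℝ) 1 :=
        ⟨pow_pos hq.1 _, pow_lt_one₀ hq.1.le hq.2 (Nat.succ_ne_zero n)⟩
      have htx1 : t ^ x ≤ 1 := (rpow_le_one htm.1.le htm.2.le hx.le)
      have hnum : r ^ (n+1) * (t ^ x - 1) ≤ 0 :=
        mul_nonpos_of_nonneg_of_nonpos (by positivity) (by linarith)
      have hden : (0:ℝ) < ((n:ℝ)+1) * (1 - t) := by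
        have := htm.2
        have h1 : (0:ℝ) < 1 - t := by linarith
        positivity
      have hb := aux_bound x hx htm
      rw [hc]
      simp only
      rw [Real.norm_eq_abs, abs_div, abs_of_nonpos hnum, abs_of_nonneg hden.le]
      have hneg : -(r ^ (n+1) * (t ^ x - 1)) = r ^ (n+1) * (1 - t ^ x) := by ring
      rw [hneg, div_le_iff₀ hden]
      have e1 : r ^ (n+1) * (1 - t ^ x) ≤ r ^ (n+1) * (max 1 x * (1 - t)) :=
        mul_le_mul_of_nonneg_left hb (by positivity)
      have hn1 : (1:ℝ) ≤ (n:ℝ) + 1 := by simp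
      have hmx : (0:ℝ) ≤ max 1 x := le_trans zero_le_one (le_max_left 1 x)
      have h1t : (0:ℝ) ≤ 1 - t := by linarith [htm.2]
      nlinarith [pow_nonneg hr0.le (n+1), mul_nonneg (mul_nonneg hmx (pow_nonneg hr0.le (n+1))) h1t]
  rw [hg.tsum_eq] at key
  have hexp : Tendsto (fun q => Real.exp (∑' n, c q n)) (nhdsWithin 1 (Set.Ioo (0:ℝ) 1))
      (nhds ((1 - r) ^ x)) := by
    have h := (Real.continuous_exp.tendsto _).comp key
    have : Real.exp (x * Real.log (1 - r)) = (1 - r) ^ x := by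
      rw [Real.rpow_def_of_pos (by linarith), mul_comm]
    rwa [this] at h
  refine hexp.congr' ?_
  filter_upwards [self_mem_nhdsWithin] with q hq
  exact (aux_ratio hr0 hr1 hx hq.1 hq.2).symm
end

section
/- For all real y and all q ∈ (0,1), |Γ(1+iy)| ≤ |Γ_q(1+iy)|, where Γ_q is the q-Gamma function. -/
open Filter Topology Finset
open scoped Nat

lemma aux_sinh {x : ℝ} (hx : 0 ≤ x) : 2 * Real.exp (-x) * x ≤ 1 - Real.exp (-x) ^ 2 := by
  have h := Real.self_le_sinh_iff.mpr hx
  rw [Real.sinh_eq] at h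
  have h2 : Real.exp (-x) * Real.exp x = 1 := by
    rw [← Real.exp_add]; simp
  nlinarith [Real.exp_pos (-x), Real.exp_pos x]

/-- The q-Gamma function `Γ_q(z) = (q;q)_∞ / (q^z;q)_∞ · (1-q)^(1-z)`. -/
noncomputable def qGamma (q : ℝ) (z : ℂ) : ℂ :=
  ((∏' n : ℕ, (1 - (q:ℂ) ^ (n + 1))) / ∏' n : ℕ, (1 - (q:ℂ) ^ (z + n)))
    * (1 - (q:ℂ)) ^ ((1:ℂ) - z)

set_option maxHeartbeats 2000000 in
/-- For all real `y` and `q ∈ (0,1)`, `|Γ(1+iy)| ≤ |Γ_q(1+iy)|`. -/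
theorem abs_Gamma_le_abs_qGamma (y q : ℝ) (hq : q ∈ Set.Ioo (0:ℝ) 1) :
    ‖Complex.Gamma (1 + y * Complex.I)‖
      ≤ ‖qGamma q (1 + y * Complex.I)‖ := by
  obtain ⟨hq0, hq1⟩ := hq
  set z : ℂ := 1 + y * Complex.I with hz
  set L : ℝ := Real.log q with hLdef
  have hL : L < 0 := Real.log_neg hq0 hq1
  set θ : ℝ := y * L with hθdef
  set w : ℕ → ℂ := fun n => (q:ℂ) ^ (z + n) with hwdef
  have hw : ∀ n : ℕ, w n = ((q ^ (n+1) : ℝ) : ℂ) * Complex.exp (θ * Complex.I) := by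
    intro n
    have hq0' : (q:ℂ) ≠ 0 := by exact_mod_cast hq0.ne'
    rw [hwdef]
    simp only
    rw [Complex.cpow_def_of_ne_zero hq0', ← Complex.ofReal_log hq0.le]
    have : (L : ℂ) * (z + n) = ((((n:ℝ)+1) * L : ℝ) : ℂ) + ((θ:ℝ):ℂ) * Complex.I := by
      rw [hz, hθdef]; push_cast; ring
    rw [this, Complex.exp_add, ← Complex.ofReal_exp]
    congr 2
    rw [show ((n:ℝ)+1) * L = ((n+1 : ℕ):ℝ) * L by push_cast; ring]
    rw [Real.exp_nat_mul, Real.exp_log hq0]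
  have hexpL : Real.exp L = q := Real.exp_log hq0
  have hθsq : θ^2 = y^2*L^2 := by rw [hθdef]; ring
  have hzjsq : ∀ j : ℕ, ‖z + j‖ ^ 2 = ((j:ℝ)+1)^2 + y^2 := by
    intro j
    rw [Complex.sq_norm, Complex.normSq_apply]
    simp [hz]
    ring
  have hzre : z.re = 1 := by simp [hz]
  have h1mz : ((1:ℂ) - z).re = 0 := by simp [hz]
  have hden : (∏' n : ℕ, ((1:ℂ) - (q:ℂ) ^ (z + n))) = ∏' n, ((1:ℂ) - w n) := rfl
  clear_value z L θ w
  clear hz hLdef hθdef hwdef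
  have hQ0 : ∀ n : ℕ, 0 < q ^ (n+1) := fun n => pow_pos hq0 _
  have hQ1 : ∀ n : ℕ, q ^ (n+1) < 1 := fun n => pow_lt_one₀ hq0.le hq1 (by omega)
  have habsw : ∀ n, ‖w n‖ = q ^ (n+1) := by
    intro n
    rw [hw n, norm_mul, Complex.norm_real, Real.norm_eq_abs, Complex.norm_exp_ofReal_mul_I, mul_one,
      abs_of_pos (hQ0 n)]
  have hb_lb : ∀ n, 1 - q^(n+1) ≤ ‖1 - w n‖ := by
    intro n
    have h := norm_add_le (1 - w n) (w n)
    rw [sub_add_cancel, norm_one, habsw n] at h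
    linarith
  have hbpos : ∀ n, 0 < ‖1 - w n‖ := fun n => lt_of_lt_of_le (by linarith [hQ1 n]) (hb_lb n)
  have hzjpos : ∀ j : ℕ, 0 < ‖z + j‖ := by
    intro j
    have h1 : ‖z + j‖ ^ 2 > 0 := by
      rw [hzjsq j]; positivity
    have h2 := norm_nonneg (z + j)
    nlinarith
  -- the key pointwise inequality
  have key : ∀ j : ℕ, ((j:ℝ)+1) / ‖z + j‖ ≤ (1 - q^(j+1)) / ‖1 - w j‖ := by
    intro j
    set m : ℝ := (j:ℝ) + 1 with hm
    have hm1 : 1 ≤ m := by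
      rw [hm]
      have : (0:ℝ) ≤ (j:ℝ) := Nat.cast_nonneg j
      linarith
    have hzj : ‖z + j‖ ^ 2 = m^2 + y^2 := by rw [hzjsq j, hm]
    have hzjpos := hzjpos j
    set Q : ℝ := q ^ (j+1) with hQdef
    set C : ℝ := Real.cos θ with hC
    set S : ℝ := Real.sin θ with hS
    have hwj : ‖1 - w j‖ ^ 2 = (1 - Q*C)^2 + (Q*S)^2 := by
      rw [Complex.sq_norm, Complex.normSq_apply, hw j, ← hQdef]
      simp only [Complex.sub_re, Complex.sub_im, Complex.one_re, Complex.one_im, Complex.mul_re,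
        Complex.mul_im, Complex.ofReal_re, Complex.ofReal_im, Complex.exp_ofReal_mul_I_re,
        Complex.exp_ofReal_mul_I_im, ← hC, ← hS]
      ring
    rw [div_le_div_iff₀ hzjpos (hbpos j)]
    have h2 : (0:ℝ) ≤ (1 - Q) * ‖z + j‖ := by
      have := hQ1 j; rw [← hQdef] at this
      have : 0 ≤ 1 - Q := by linarith
      positivity
    refine le_of_pow_le_pow_left₀ two_ne_zero h2 ?_
    rw [mul_pow, mul_pow, hwj, hzj]
    -- now prove m^2 * ((1-Q*C)^2 + (Q*S)^2) ≤ (1-Q)^2 * (m^2 + y^2)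
    set r : ℝ := Real.exp (((j:ℝ)+1) * L / 2) with hr
    have hrpos : 0 < r := Real.exp_pos _
    have hr2 : r^2 = Q := by
      rw [hQdef, hr, ← Real.exp_nat_mul,
        show ((2:ℕ):ℝ) * (((j:ℝ)+1)*L/2) = ((j+1:ℕ):ℝ)*L by push_cast; ring,
        Real.exp_nat_mul, hexpL]
    have hxnn : 0 ≤ ((j:ℝ)+1) * (-L) / 2 := by
      have : 0 ≤ -L := by linarith
      positivity
    have hsinh := aux_sinh hxnn
    have hexp : Real.exp (-(((j:ℝ)+1) * (-L) / 2)) = r := by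
      rw [hr]; ring_nf
    rw [hexp] at hsinh
    -- hsinh : 2 * r * (m * (-L) / 2) ≤ 1 - r^2
    have hkey : m * r * (-L) ≤ 1 - Q := by
      rw [← hr2]; rw [hm]; nlinarith [hsinh]
    have hkeynn : 0 ≤ m * r * (-L) := by
      have : 0 ≤ -L := by linarith
      positivity
    have hsq : (m * r * (-L))^2 ≤ (1-Q)^2 := by
      apply pow_le_pow_left₀ hkeynn hkey
    have hcos : 1 - θ^2/2 ≤ C := Real.one_sub_sq_div_two_le_cos
    have htrig : S^2 + C^2 = 1 := Real.sin_sq_add_cos_sq θ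
    have hQpos := hQ0 j
    rw [← hQdef] at hQpos
    have h3 : 1 - C ≤ y^2*L^2/2 := by
      linarith [hcos, hθsq.symm.le]
    have hmQ : (0:ℝ) ≤ m^2*Q := by positivity
    have e1 : 2*(m^2*Q)*(1-C) ≤ (m^2*Q)*(y^2*L^2) := by
      have := mul_le_mul_of_nonneg_left h3 hmQ
      clear_value m Q C
      nlinarith [this]
    have e2 : (m^2*Q)*(y^2*L^2) = y^2 * (m*r*(-L))^2 := by
      rw [← hr2]; ring
    have e3 : y^2 * (m*r*(-L))^2 ≤ y^2*(1-Q)^2 :=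
      mul_le_mul_of_nonneg_left hsq (sq_nonneg y)
    clear_value m Q C S r
    have e4 : 2*(m^2*Q)*(1-C) ≤ y^2*(1-Q)^2 := by
      calc 2*(m^2*Q)*(1-C) ≤ (m^2*Q)*(y^2*L^2) := e1
        _ = y^2 * (m*r*(-L))^2 := e2
        _ ≤ y^2*(1-Q)^2 := e3
    have hS2 : (Q*S)^2 = Q^2 - (Q*C)^2 := by
      have h5 : (Q*S)^2 + (Q*C)^2 = Q^2*(S^2+C^2) := by ring
      rw [htrig] at h5
      linarith [h5]
    have expand : m^2 * ((1-Q*C)^2 + (Q*S)^2) = m^2*(1-Q)^2 + 2*(m^2*Q)*(1-C) := by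
      rw [hS2]; ring
    have expand2 : (1-Q)^2*(m^2+y^2) = m^2*(1-Q)^2 + y^2*(1-Q)^2 := by ring
    rw [expand, expand2]
    linarith [e4]
  -- summability facts
  have hsgeo : Summable (fun n : ℕ => q ^ (n+1)) := by
    have h := (summable_geometric_of_lt_one hq0.le hq1).mul_right q
    refine h.congr fun n => ?_
    rw [pow_succ]
  have hsw : Summable w := by
    apply Summable.of_norm
    refine hsgeo.congr fun n => ?_
    rw [← habsw n]
  have hsA : Summable (fun n : ℕ => (q:ℂ)^(n+1)) := by
    apply Summable.of_norm
    refine hsgeo.congr fun n => ?_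
    rw [norm_pow, Complex.norm_real, Real.norm_eq_abs, abs_of_pos hq0]
  have hlogW : Summable (fun n => Complex.log (1 - w n)) := hsw.clog_one_sub
  have hlogA : Summable (fun n : ℕ => Complex.log (1 - (q:ℂ)^(n+1))) := hsA.clog_one_sub
  have hW_ne : ∀ n : ℕ, (1:ℂ) - w n ≠ 0 := fun n => norm_pos_iff.mp (hbpos n)
  have hA_eq : ∀ n : ℕ, (1:ℂ) - (q:ℂ)^(n+1) = ((1 - q^(n+1) : ℝ) : ℂ) := by
    intro n; push_cast; ring
  have hA_ne : ∀ n : ℕ, (1:ℂ) - (q:ℂ)^(n+1) ≠ 0 := by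
    intro n
    intro h
    rw [hA_eq n, Complex.ofReal_eq_zero] at h
    linarith [hQ1 n]
  have hDexp : Complex.exp (∑' n, Complex.log (1 - w n)) = ∏' n, (1 - w n) := by
    simpa using Complex.cexp_tsum_eq_tprod (f := fun n => 1 - w n) hW_ne hlogW
  have hMD : Multipliable (fun n => (1:ℂ) - w n) :=
    Complex.multipliable_of_summable_log (f := fun n => 1 - w n) hlogW
  have hMA : Multipliable (fun n : ℕ => (1:ℂ) - (q:ℂ)^(n+1)) :=
    Complex.multipliable_of_summable_log (f := fun n : ℕ => 1 - (q:ℂ)^(n+1)) hlogA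
  have hD_ne : (∏' n, ((1:ℂ) - w n)) ≠ 0 := hDexp ▸ Complex.exp_ne_zero _
  have hBprod : HasProd (fun n => ‖1 - w n‖) (‖∏' n, ((1:ℂ) - w n)‖) := by
    simpa using hMD.hasProd.norm
  have hAprod : HasProd (fun n : ℕ => 1 - q^(n+1))
      (‖∏' n : ℕ, ((1:ℂ) - (q:ℂ)^(n+1))‖) := by
    have h := hMA.hasProd.norm
    rw [show (fun n : ℕ => ‖(1:ℂ) - (q:ℂ)^(n+1)‖) = fun n : ℕ => 1 - q^(n+1) from
      funext fun n => by
        rw [hA_eq n, Complex.norm_real, Real.norm_eq_abs,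
          abs_of_pos (by linarith [hQ1 n])]] at h
    exact h
  -- identify |qGamma q z|
  have hqG : ‖qGamma q z‖
      = ‖∏' n : ℕ, ((1:ℂ) - (q:ℂ)^(n+1))‖ / ‖∏' n, ((1:ℂ) - w n)‖ := by
    rw [qGamma, hden, norm_mul, norm_div]
    have hone : ‖(1 - (q:ℂ)) ^ ((1:ℂ) - z)‖ = 1 := by
      rw [show (1:ℂ) - (q:ℂ) = ((1-q:ℝ):ℂ) by push_cast; ring,
        Complex.norm_cpow_eq_rpow_re_of_pos (by linarith)]
      rw [h1mz]
      exact Real.rpow_zero _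
    rw [hone, mul_one]
  -- limits
  have hGam : Tendsto (fun n => ‖Complex.GammaSeq z n‖) atTop
      (𝓝 (‖Complex.Gamma z‖)) :=
    (continuous_norm.tendsto _).comp (Complex.GammaSeq_tendsto_Gamma z)
  have hdlim : Tendsto (fun n : ℕ => ∏ j ∈ range n, ((1 - q^(j+1)) / ‖1 - w j‖))
      atTop (𝓝 (‖∏' n : ℕ, ((1:ℂ) - (q:ℂ)^(n+1))‖
        / ‖∏' n, ((1:ℂ) - w n)‖)) := by
    have h3 := hAprod.tendsto_prod_nat.div hBprod.tendsto_prod_nat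
      (ne_of_gt (norm_pos_iff.mpr hD_ne))
    refine h3.congr fun n => ?_
    simp [Finset.prod_div_distrib]
  have hdlim' : Tendsto (fun n : ℕ => ∏ j ∈ range (n+1), ((1 - q^(j+1)) / ‖1 - w j‖))
      atTop (𝓝 (‖∏' n : ℕ, ((1:ℂ) - (q:ℂ)^(n+1))‖
        / ‖∏' n, ((1:ℂ) - w n)‖)) :=
    hdlim.comp (tendsto_add_atTop_nat 1)
  -- eventual bound
  have hev : ∀ᶠ n in atTop, ‖Complex.GammaSeq z n‖
      ≤ ∏ j ∈ range (n+1), ((1 - q^(j+1)) / ‖1 - w j‖) := by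
    filter_upwards [eventually_ge_atTop 1] with n hn
    have hprodpos : 0 < ∏ j ∈ range (n+1), ‖z + j‖ :=
      Finset.prod_pos fun j _ => hzjpos j
    have habsGS : ‖Complex.GammaSeq z n‖
        = (n:ℝ) * (n ! : ℝ) / ∏ j ∈ range (n+1), ‖z + j‖ := by
      rw [Complex.GammaSeq, norm_div, norm_mul, norm_prod]
      congr 1
      rw [show ((n:ℕ):ℂ) = (((n:ℝ)):ℂ) by push_cast; rfl,
        Complex.norm_cpow_eq_rpow_re_of_pos (by exact_mod_cast hn : (0:ℝ) < (n:ℝ)),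
        hzre, Real.rpow_one, Complex.norm_natCast]
    calc ‖Complex.GammaSeq z n‖
        = (n:ℝ) * (n ! : ℝ) / ∏ j ∈ range (n+1), ‖z + j‖ := habsGS
      _ ≤ (((n+1)! : ℕ) : ℝ) / ∏ j ∈ range (n+1), ‖z + j‖ := by
          have hnum : (n:ℝ) * (n ! : ℝ) ≤ (((n+1)! : ℕ) : ℝ) := by
            rw [Nat.factorial_succ]
            push_cast
            have h0 : (0:ℝ) ≤ (n ! : ℝ) := by positivity
            nlinarith
          gcongr
      _ = ∏ j ∈ range (n+1), (((j:ℝ)+1) / ‖z + j‖) := by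
          rw [Finset.prod_div_distrib]
          congr 1
          rw [show (fun j : ℕ => ((j:ℝ)+1)) = fun j : ℕ => (((j+1 : ℕ)):ℝ) from
            funext fun j => by push_cast; ring]
          rw [← Nat.cast_prod]
          rw [Finset.prod_range_add_one_eq_factorial]
      _ ≤ ∏ j ∈ range (n+1), ((1 - q^(j+1)) / ‖1 - w j‖) :=
          Finset.prod_le_prod
            (fun j _ => div_nonneg (by positivity) (norm_nonneg _))
            (fun j _ => key j)
  have hfin := le_of_tendsto_of_tendsto hGam hdlim' hev
  rwa [hqG]
end

section
/- For all Q ∈ (0,1) and all real Y, the inequality Y²(1−Q)² ≥ 2Q(1 − cos(Y log Q)) holds. -/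
lemma beta_key_aux {Q : ℝ} (hQ : Q ∈ Set.Ioo (0:ℝ) 1) :
    Real.sqrt Q * (-Real.log Q) ≤ 1 - Q := by
  obtain ⟨h0, h1⟩ := hQ
  have hs : 0 < Real.sqrt Q := Real.sqrt_pos.2 h0
  set x : ℝ := (Real.sqrt Q)⁻¹ with hx
  have hxpos : 0 < x := inv_pos.2 hs
  have hlog : Real.log x = -(Real.log Q) / 2 := by
    rw [hx, Real.log_inv, Real.log_sqrt h0.le]
    ring
  have hsinh : Real.sinh (Real.log x) = (x - x⁻¹) / 2 := Real.sinh_log hxpos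
  have hnn : 0 ≤ Real.log x := by
    rw [hlog]
    have := Real.log_neg h0 h1
    linarith
  have h2 : Real.log x ≤ (x - x⁻¹) / 2 := hsinh ▸ (Real.self_le_sinh_iff.2 hnn)
  have hxinv : x⁻¹ = Real.sqrt Q := by rw [hx, inv_inv]
  have hmul : Real.sqrt Q * x = 1 := by
    rw [hx, mul_inv_cancel₀ hs.ne']
  have hsq : Real.sqrt Q * Real.sqrt Q = Q := Real.mul_self_sqrt h0.le
  have := mul_le_mul_of_nonneg_left h2 hs.le
  calc Real.sqrt Q * (-Real.log Q)
      = 2 * (Real.sqrt Q * Real.log x) := by rw [hlog]; ring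
    _ ≤ 2 * (Real.sqrt Q * ((x - x⁻¹) / 2)) := by linarith
    _ = Real.sqrt Q * x - Real.sqrt Q * x⁻¹ := by ring
    _ = 1 - Q := by rw [hmul, hxinv, hsq]

theorem beta_fpp_key_inequality (Q Y : ℝ) (hQ : Q ∈ Set.Ioo (0:ℝ) 1) :
    Y ^ 2 * (1 - Q) ^ 2 ≥ 2 * Q * (1 - Real.cos (Y * Real.log Q)) := by
  obtain ⟨h0, h1⟩ := hQ
  have hcos : 1 - Real.cos (Y * Real.log Q) ≤ (Y * Real.log Q) ^ 2 / 2 := by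
    have := Real.one_sub_sq_div_two_le_cos (x := Y * Real.log Q)
    linarith
  have hkey : Real.sqrt Q * (-Real.log Q) ≤ 1 - Q := beta_key_aux ⟨h0, h1⟩
  have hnn : 0 ≤ Real.sqrt Q * (-Real.log Q) := by
    have := Real.log_neg h0 h1
    have := Real.sqrt_nonneg Q
    nlinarith
  have hsq : (Real.sqrt Q * (-Real.log Q)) ^ 2 ≤ (1 - Q) ^ 2 := by
    nlinarith
  have hQlog : Q * (Real.log Q) ^ 2 ≤ (1 - Q) ^ 2 := by
    have : (Real.sqrt Q * (-Real.log Q)) ^ 2 = Q * (Real.log Q) ^ 2 := by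
      rw [mul_pow, Real.sq_sqrt h0.le]; ring
    linarith
  nlinarith [sq_nonneg Y, mul_le_mul_of_nonneg_left hcos (by positivity : (0:ℝ) ≤ 2 * Q),
    mul_le_mul_of_nonneg_left hQlog (sq_nonneg Y)]
end

section
/- For all x > 0, the polygamma functions satisfy Ψ₄(x)Ψ₂(x) > Ψ₃(x)², where Ψ_n denotes the n-th polygamma function (the n-th derivative of the digamma function). -/
open MeasureTheory Set Real

lemma integrable_poly_exp (x : ℝ) (hx : 0 < x) (m : ℕ) :
    IntegrableOn (fun t : ℝ => t ^ m * Real.exp (-x * t)) (Set.Ioi 0) := by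
  have h := integrableOn_rpow_mul_exp_neg_mul_rpow (s := (m : ℝ)) (p := 1)
    (by exact_mod_cast neg_one_lt_zero.trans_le (Nat.cast_nonneg m)) zero_lt_one hx
  simpa [Real.rpow_natCast, Real.rpow_one] using h

lemma denom_pos {t : ℝ} (ht : 0 < t) : 0 < 1 - Real.exp (-t) :=
  sub_pos.mpr (Real.exp_lt_one_iff.mpr (by linarith))

lemma integrable_kernel (x : ℝ) (hx : 0 < x) (k : ℕ) (hk : 1 ≤ k) :
    IntegrableOn (fun t : ℝ => t ^ k * Real.exp (-x * t) / (1 - Real.exp (-t)))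
      (Set.Ioi 0) := by
  have hmeas : AEStronglyMeasurable
      (fun t : ℝ => t ^ k * Real.exp (-x * t) / (1 - Real.exp (-t)))
      (volume.restrict (Set.Ioi 0)) := by
    apply ContinuousOn.aestronglyMeasurable _ measurableSet_Ioi
    apply ContinuousOn.div
    · exact ((continuous_pow k).mul (by continuity)).continuousOn
    · exact (continuous_const.sub (by continuity)).continuousOn
    · exact fun t ht => (denom_pos ht).ne'
  have hint : Integrable (fun t : ℝ => t ^ (k-1) * Real.exp (-x * t) + t ^ k * Real.exp (-x * t))
      (volume.restrict (Set.Ioi 0)) :=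
    (integrable_poly_exp x hx (k-1)).add (integrable_poly_exp x hx k)
  refine hint.mono' hmeas ?_
  rw [ae_restrict_iff' measurableSet_Ioi]
  filter_upwards with t ht
  have ht : (0:ℝ) < t := ht
  have hd := denom_pos ht
  have hnum : 0 ≤ t ^ k * Real.exp (-x * t) := by positivity
  rw [Real.norm_eq_abs, abs_of_nonneg (by positivity)]
  have h1t : (0:ℝ) < 1 + t := by linarith
  have hlow : t / (1 + t) ≤ 1 - Real.exp (-t) := by
    have h1 : Real.exp (-t) ≤ 1 / (1 + t) := by
      rw [Real.exp_neg, inv_eq_one_div]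
      exact one_div_le_one_div_of_le h1t (by linarith [Real.add_one_le_exp t])
    have h2 : t / (1 + t) = 1 - 1 / (1 + t) := by field_simp; ring
    rw [h2]; linarith
  have hka : t ^ (k-1) * t = t ^ k := by rw [← pow_succ, Nat.sub_add_cancel hk]
  calc t ^ k * Real.exp (-x * t) / (1 - Real.exp (-t))
      ≤ t ^ k * Real.exp (-x * t) / (t / (1 + t)) := by
        apply div_le_div_of_nonneg_left hnum ?_ hlow
        · positivity
    _ = t ^ (k-1) * Real.exp (-x * t) + t ^ k * Real.exp (-x * t) := by
        rw [div_div_eq_mul_div, div_eq_iff ht.ne', ← hka]; ring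

lemma kernel_nonneg_ae (x : ℝ) (k : ℕ) :
    0 ≤ᵐ[volume.restrict (Set.Ioi (0:ℝ))]
      (fun t : ℝ => t ^ k * Real.exp (-x * t) / (1 - Real.exp (-t))) := by
  filter_upwards [ae_restrict_mem measurableSet_Ioi] with t ht
  have ht : (0:ℝ) < t := ht
  have hd := denom_pos ht
  positivity

/-- The n-th polygamma function, via its integral representation
`Ψ_n(x) = −∫_0^∞ (−t)^n e^{−xt}/(1−e^{−t}) dt` (valid for `n ≥ 1`, `x > 0`). -/
noncomputable def polygamma (n : ℕ) (x : ℝ) : ℝ :=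
  -∫ t in Set.Ioi (0:ℝ), (-t) ^ n * Real.exp (-x * t) / (1 - Real.exp (-t))

/-- For all `x > 0`, `Ψ₄(x)Ψ₂(x) > Ψ₃(x)²`. -/
theorem polygamma_four_two_gt_three_sq (x : ℝ) (hx : 0 < x) :
    polygamma 3 x ^ 2 < polygamma 4 x * polygamma 2 x := by
  set A := ∫ t in Set.Ioi (0:ℝ), t ^ 2 * Real.exp (-x * t) / (1 - Real.exp (-t)) with hA_def
  set B := ∫ t in Set.Ioi (0:ℝ), t ^ 3 * Real.exp (-x * t) / (1 - Real.exp (-t)) with hB_def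
  set C := ∫ t in Set.Ioi (0:ℝ), t ^ 4 * Real.exp (-x * t) / (1 - Real.exp (-t)) with hC_def
  have hI2 := integrable_kernel x hx 2 (by norm_num)
  have hI3 := integrable_kernel x hx 3 (by norm_num)
  have hI4 := integrable_kernel x hx 4 (by norm_num)
  have hp2 : polygamma 2 x = -A := by
    unfold polygamma
    rw [show (fun t : ℝ => (-t) ^ 2 * Real.exp (-x * t) / (1 - Real.exp (-t)))
      = (fun t : ℝ => t ^ 2 * Real.exp (-x * t) / (1 - Real.exp (-t))) from
      funext fun t => by ring]
  have hp4 : polygamma 4 x = -C := by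
    unfold polygamma
    rw [show (fun t : ℝ => (-t) ^ 4 * Real.exp (-x * t) / (1 - Real.exp (-t)))
      = (fun t : ℝ => t ^ 4 * Real.exp (-x * t) / (1 - Real.exp (-t))) from
      funext fun t => by ring]
  have hp3 : polygamma 3 x = B := by
    unfold polygamma
    rw [show (fun t : ℝ => (-t) ^ 3 * Real.exp (-x * t) / (1 - Real.exp (-t)))
      = (fun t : ℝ => -(t ^ 3 * Real.exp (-x * t) / (1 - Real.exp (-t)))) from
      funext fun t => by ring, MeasureTheory.integral_neg, neg_neg]
  have hA : 0 < A := by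
    rw [hA_def, setIntegral_pos_iff_support_of_nonneg_ae (kernel_nonneg_ae x 2) hI2]
    have hsub : Set.Ioi (0:ℝ) ⊆
        Function.support (fun t : ℝ => t ^ 2 * Real.exp (-x * t) / (1 - Real.exp (-t)))
          ∩ Set.Ioi 0 := by
      intro t ht
      have ht' : (0:ℝ) < t := ht
      have hd := denom_pos ht'
      exact ⟨by simp only [Function.mem_support]; positivity, ht⟩
    calc (0 : ENNReal) < volume (Set.Ioi (0:ℝ)) := by simp [Real.volume_Ioi]
      _ ≤ _ := measure_mono hsub
  -- quadratic function
  set q : ℝ → ℝ := fun t => (A * t - B) ^ 2 * t ^ 2 * Real.exp (-x * t) / (1 - Real.exp (-t))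
    with hq_def
  have hqfun : q = fun t : ℝ =>
      A ^ 2 * (t ^ 4 * Real.exp (-x * t) / (1 - Real.exp (-t)))
      - 2 * A * B * (t ^ 3 * Real.exp (-x * t) / (1 - Real.exp (-t)))
      + B ^ 2 * (t ^ 2 * Real.exp (-x * t) / (1 - Real.exp (-t))) :=
    funext fun t => by rw [hq_def]; ring
  have hIq : MeasureTheory.IntegrableOn q (Set.Ioi 0) := by
    rw [hqfun]
    exact ((hI4.const_mul _).sub (hI3.const_mul _)).add (hI2.const_mul _)
  have hq_nonneg : 0 ≤ᵐ[volume.restrict (Set.Ioi (0:ℝ))] q := by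
    filter_upwards [ae_restrict_mem measurableSet_Ioi] with t ht
    have ht : (0:ℝ) < t := ht
    have hd := denom_pos ht
    rw [hq_def]
    positivity
  have hqpos : 0 < ∫ t in Set.Ioi (0:ℝ), q t := by
    rw [setIntegral_pos_iff_support_of_nonneg_ae hq_nonneg hIq]
    have hsub : Set.Ioi (|B| / A + 1) ⊆ Function.support q ∩ Set.Ioi 0 := by
      intro t ht
      have ht' : |B| / A + 1 < t := ht
      have hM : 0 < |B| / A + 1 := by positivity
      have ht0 : (0:ℝ) < t := hM.trans ht'
      have hd := denom_pos ht0
      have hAtB : 0 < A * t - B := by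
        have h2 : A * (|B| / A + 1) < A * t := (mul_lt_mul_iff_right₀ hA).mpr ht'
        have h3 : A * (|B| / A + 1) = |B| + A := by field_simp
        have h4 := le_abs_self B
        linarith
      refine ⟨?_, ht0⟩
      simp only [Function.mem_support, hq_def]
      positivity
    calc (0 : ENNReal) < volume (Set.Ioi (|B| / A + 1)) := by simp [Real.volume_Ioi]
      _ ≤ _ := measure_mono hsub
  have h3' : MeasureTheory.Integrable
      (fun t : ℝ => 2 * A * B * (t ^ 3 * Real.exp (-x * t) / (1 - Real.exp (-t))))
      (volume.restrict (Set.Ioi 0)) := hI3.const_mul _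
  have h4' : MeasureTheory.Integrable
      (fun t : ℝ => A ^ 2 * (t ^ 4 * Real.exp (-x * t) / (1 - Real.exp (-t))))
      (volume.restrict (Set.Ioi 0)) := hI4.const_mul _
  have h2' : MeasureTheory.Integrable
      (fun t : ℝ => B ^ 2 * (t ^ 2 * Real.exp (-x * t) / (1 - Real.exp (-t))))
      (volume.restrict (Set.Ioi 0)) := hI2.const_mul _
  have hsplit : (∫ t in Set.Ioi (0:ℝ), q t) = A ^ 2 * C - 2 * A * B * B + B ^ 2 * A := by
    rw [hqfun]
    have h43 : MeasureTheory.Integrable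
        (fun t : ℝ => A ^ 2 * (t ^ 4 * Real.exp (-x * t) / (1 - Real.exp (-t)))
          - 2 * A * B * (t ^ 3 * Real.exp (-x * t) / (1 - Real.exp (-t))))
        (volume.restrict (Set.Ioi 0)) := h4'.sub h3'
    simp only [MeasureTheory.integral_add h43 h2', MeasureTheory.integral_sub h4' h3',
      MeasureTheory.integral_const_mul]
    rfl
  rw [hsplit] at hqpos
  rw [hp2, hp3, hp4]
  nlinarith [hqpos, hA, sq_nonneg B]
end

section
/- For all α, β, θ > 0: (Ψ₂(θ+α+β) − Ψ₂(θ+α))(Ψ₁(θ+α+β) − Ψ₁(θ)) − (Ψ₁(θ+α+β) − Ψ₁(θ+α))(Ψ₂(θ+α+β) − Ψ₂(θ)) > 0, where Ψ₁, Ψ₂ are the trigamma and tetragamma functions. Equivalently, h'''(θ) > 0 where h'''(θ) = Ψ₂(θ+α) − Ψ₂(α+β+θ) + [(Ψ₁(α+θ) − Ψ₁(α+β+θ))/(Ψ₁(θ) − Ψ₁(α+β+θ))](Ψ₂(α+β+θ) − Ψ₂(θ)). -/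
/-- The trigamma function `Ψ₁(x) = Σ_{n≥0} 1/(n+x)²`. -/
noncomputable def trigamma (x : ℝ) : ℝ := ∑' n : ℕ, 1 / ((n:ℝ) + x) ^ 2
/-- The tetragamma function `Ψ₂(x) = −Σ_{n≥0} 2/(n+x)³`. -/
noncomputable def tetragamma (x : ℝ) : ℝ := -∑' n : ℕ, 2 / ((n:ℝ) + x) ^ 3

open MeasureTheory

noncomputable def S3 (t : ℝ) : ℝ := ∑' n : ℕ, 2 / ((n:ℝ) + t) ^ 3
noncomputable def S4 (t : ℝ) : ℝ := ∑' n : ℕ, 6 / ((n:ℝ) + t) ^ 4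

lemma npos {n : ℕ} {t : ℝ} (ht : 0 < t) : 0 < (n:ℝ) + t := by positivity

lemma summable_k {x : ℝ} (hx : 0 < x) {k : ℕ} (hk : 2 ≤ k) :
    Summable (fun n : ℕ => 1 / ((n:ℝ) + x) ^ k) := by
  have h1 : (1:ℝ) < (k:ℝ) := by exact_mod_cast lt_of_lt_of_le one_lt_two hk
  have := (Real.summable_one_div_nat_add_rpow x (k:ℝ)).mpr h1
  refine this.congr fun n => ?_
  rw [abs_of_pos (npos hx), Real.rpow_natCast]

lemma summable_c {x : ℝ} (hx : 0 < x) (c : ℝ) {k : ℕ} (hk : 2 ≤ k) :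
    Summable (fun n : ℕ => c / ((n:ℝ) + x) ^ k) := by
  have := (summable_k hx hk).mul_left c
  refine this.congr fun n => ?_
  rw [mul_one_div]

lemma S3_pos {t : ℝ} (ht : 0 < t) : 0 < S3 t :=
  Summable.tsum_pos (summable_c ht 2 (by norm_num)) (fun n => by positivity) 0 (by positivity)

lemma S4_pos {t : ℝ} (ht : 0 < t) : 0 < S4 t :=
  Summable.tsum_pos (summable_c ht 6 (by norm_num)) (fun n => by positivity) 0 (by positivity)

lemma half {a b u v : ℝ} (ha : 0 < a) (hab : a ≤ b) (hu : u ≤ 0) (huv : 0 < u + v) :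
    0 < u / b + v / a := by
  have hb : 0 < b := lt_of_lt_of_le ha hab
  have h1 : u / a ≤ u / b := by
    rw [div_le_div_iff₀ ha hb]; nlinarith
  have h2 : 0 < (u + v) / a := div_pos huv ha
  rw [add_div] at h2
  linarith

/-- key algebraic inequality -/
lemma key_alg {p q d : ℝ} (hp : 0 < p) (hq : 0 < q) (hd : 0 < d) :
    0 < (p + d - q) / (q * (p + d)) ^ 4 + (q + d - p) / (p * (q + d)) ^ 4 := by
  have hqP : 0 < (q * (p + d)) ^ 4 := by positivity
  have hpQ : 0 < (p * (q + d)) ^ 4 := by positivity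
  have hsum : 0 < (p + d - q) + (q + d - p) := by linarith
  rcases le_or_gt (p + d - q) 0 with h1 | h1
  · -- q ≥ p + d  ⇒ q > p ⇒ p(q+d) ≤ q(p+d)? : p(q+d) - q(p+d) = d(p-q) ≤ 0
    have hle : (p * (q + d)) ^ 4 ≤ (q * (p + d)) ^ 4 := by
      apply pow_le_pow_left₀ (by positivity)
      nlinarith
    exact half hpQ hle h1 hsum
  · rcases le_or_gt (q + d - p) 0 with h2 | h2
    · have hle : (q * (p + d)) ^ 4 ≤ (p * (q + d)) ^ 4 := by
        apply pow_le_pow_left₀ (by positivity)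
        nlinarith
      have := half hqP hle h2 (by linarith : (0:ℝ) < (q + d - p) + (p + d - q))
      linarith
    · have := div_pos h1 hqP
      have := div_pos h2 hpQ
      linarith

set_option maxHeartbeats 1000000 in
lemma pair_id {q P : ℝ} (hq : q ≠ 0) (hP : P ≠ 0) :
    6/q^4 * (2/P^3) - 6/P^4*(2/q^3) = 12*((P - q)/(q*P)^4) := by
  field_simp
  ring

lemma term_pos {x y : ℝ} (hy : 0 < y) (hxy : y < x) (m n : ℕ) :
    0 < 6/((m:ℝ)+y)^4 * (2/((n:ℝ)+x)^3) - 6/((m:ℝ)+x)^4 * (2/((n:ℝ)+y)^3)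
      + (6/((n:ℝ)+y)^4 * (2/((m:ℝ)+x)^3) - 6/((n:ℝ)+x)^4 * (2/((m:ℝ)+y)^3)) := by
  have hp : 0 < (m:ℝ) + y := npos hy
  have hq : 0 < (n:ℝ) + y := npos hy
  have hd : 0 < x - y := by linarith
  have key := key_alg hp hq hd
  have e1 : (m:ℝ) + x = ((m:ℝ) + y) + (x - y) := by ring
  have e2 : (n:ℝ) + x = ((n:ℝ) + y) + (x - y) := by ring
  rw [e1, e2]
  set p := (m:ℝ) + y with hpdef
  set q := (n:ℝ) + y with hqdef
  set d := x - y with hddef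
  have hP : (0:ℝ) < p + d := by linarith
  have hQ : (0:ℝ) < q + d := by linarith
  have A := pair_id hq.ne' hP.ne'
  have B := pair_id hp.ne' hQ.ne'
  linarith

lemma summable_prod {x y : ℝ} (hx : 0 < x) (hy : 0 < y) :
    Summable (fun z : ℕ × ℕ => 6/((z.1:ℝ)+y)^4 * (2/((z.2:ℝ)+x)^3)) :=
  Summable.mul_of_nonneg (f := fun n : ℕ => 6/((n:ℝ)+y)^4)
    (g := fun n : ℕ => 2/((n:ℝ)+x)^3)
    (summable_c hy 6 (k := 4) (by norm_num))
    (summable_c hx 2 (k := 3) (by norm_num)) (fun n => by positivity) (fun n => by positivity)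

lemma tsum_prod_eq {x y : ℝ} (hx : 0 < x) (hy : 0 < y) :
    S4 y * S3 x = ∑' z : ℕ × ℕ, 6/((z.1:ℝ)+y)^4 * (2/((z.2:ℝ)+x)^3) := by
  apply tsum_mul_tsum_of_summable_norm (f := fun n : ℕ => 6/((n:ℝ)+y)^4)
    (g := fun n : ℕ => 2/((n:ℝ)+x)^3)
  · refine ((summable_c hy 6 (k := 4) (by norm_num))).congr fun n => ?_
    rw [Real.norm_eq_abs, abs_of_nonneg (by positivity)]
  · refine ((summable_c hx 2 (k := 3) (by norm_num))).congr fun n => ?_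
    rw [Real.norm_eq_abs, abs_of_nonneg (by positivity)]

lemma ratio_lt {x y : ℝ} (hy : 0 < y) (hxy : y < x) : S4 x * S3 y < S4 y * S3 x := by
  have hx : 0 < x := hy.trans hxy
  set f : ℕ × ℕ → ℝ := fun z => 6/((z.1:ℝ)+y)^4 * (2/((z.2:ℝ)+x)^3) with hf
  set g : ℕ × ℕ → ℝ := fun z => 6/((z.1:ℝ)+x)^4 * (2/((z.2:ℝ)+y)^3) with hg
  have hfs : Summable f := summable_prod hx hy
  have hgs : Summable g := summable_prod hy hx
  have e1 : S4 y * S3 x = ∑' z, f z := tsum_prod_eq hx hy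
  have e2 : S4 x * S3 y = ∑' z, g z := tsum_prod_eq hy hx
  rw [e1, e2, ← sub_pos, ← Summable.tsum_sub hfs hgs]
  set h : ℕ × ℕ → ℝ := fun z => f z - g z with hh
  have hhs : Summable h := hfs.sub hgs
  have hhs' : Summable (fun z : ℕ × ℕ => h z.swap) :=
    ((Equiv.prodComm ℕ ℕ).summable_iff).mpr hhs
  have hswap : ∑' z : ℕ × ℕ, h z.swap = ∑' z, h z := (Equiv.prodComm ℕ ℕ).tsum_eq h
  have hdouble : ∑' z : ℕ × ℕ, (h z + h z.swap) = (∑' z, h z) + ∑' z : ℕ × ℕ, h z.swap :=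
    Summable.tsum_add hhs hhs'
  have hterm : ∀ z : ℕ × ℕ, 0 < h z + h z.swap := by
    rintro ⟨a, b⟩
    have := term_pos hy hxy a b
    simp only [hh, hf, hg, Prod.swap]
    linarith
  have hpos : 0 < ∑' z : ℕ × ℕ, (h z + h z.swap) :=
    Summable.tsum_pos (hhs.add hhs') (fun z => (hterm z).le) (0, 0) (hterm (0, 0))
  rw [hdouble, hswap] at hpos
  linarith

lemma ratio_le {x y : ℝ} (hy : 0 < y) (hxy : y ≤ x) : S4 x * S3 y ≤ S4 y * S3 x := by
  rcases eq_or_lt_of_le hxy with h | h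
  · subst h; exact le_rfl
  · exact (ratio_lt hy h).le

lemma hasDeriv3 (n : ℕ) {t : ℝ} (ht : 0 < t) :
    HasDerivAt (fun u => -(1/((n:ℝ)+u)^2)) (2/((n:ℝ)+t)^3) t := by
  have h0 : (0:ℝ) < (n:ℝ) + t := npos ht
  have h : HasDerivAt (fun u : ℝ => (n:ℝ) + u) 1 t := (hasDerivAt_id t).const_add _
  have h2 := (h.fun_pow 2).fun_inv (by positivity)
  have h3 := h2.fun_neg
  convert h3 using 1
  · rfl
  · rfl
  · funext u; rw [one_div]
  · field_simp
    ring

lemma hasDeriv4 (n : ℕ) {t : ℝ} (ht : 0 < t) :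
    HasDerivAt (fun u => -(2/((n:ℝ)+u)^3)) (6/((n:ℝ)+t)^4) t := by
  have h0 : (0:ℝ) < (n:ℝ) + t := npos ht
  have h : HasDerivAt (fun u : ℝ => (n:ℝ) + u) 1 t := (hasDerivAt_id t).const_add _
  have h2 := ((h.fun_pow 3).fun_inv (by positivity)).const_mul (2:ℝ)
  have h3 := h2.fun_neg
  have heq : (fun u : ℝ => -(2/((n:ℝ)+u)^3)) = fun x : ℝ => -(2 * (((n:ℝ) + x) ^ 3)⁻¹) := by
    funext u; rw [div_eq_mul_inv]
  rw [heq]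
  convert h3 using 1
  · rfl
  · rfl
  norm_num
  field_simp
  ring

lemma contOn3 (n : ℕ) {s : Set ℝ} (hs : ∀ t ∈ s, 0 < t) :
    ContinuousOn (fun t => 2/((n:ℝ)+t)^3) s := by
  apply ContinuousOn.div continuousOn_const
  · fun_prop
  · intro t ht; have := npos (n := n) (hs t ht); positivity

lemma contOn4 (n : ℕ) {s : Set ℝ} (hs : ∀ t ∈ s, 0 < t) :
    ContinuousOn (fun t => 6/((n:ℝ)+t)^4) s := by
  apply ContinuousOn.div continuousOn_const
  · fun_prop
  · intro t ht; have := npos (n := n) (hs t ht); positivity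

lemma int3 (n : ℕ) {x y : ℝ} (hx : 0 < x) (hxy : x ≤ y) :
    ∫ t in x..y, 2/((n:ℝ)+t)^3 = 1/((n:ℝ)+x)^2 - 1/((n:ℝ)+y)^2 := by
  have huIcc : Set.uIcc x y = Set.Icc x y := Set.uIcc_of_le hxy
  have hpos : ∀ t ∈ Set.uIcc x y, 0 < t := by
    rw [huIcc]; intro t ht; exact lt_of_lt_of_le hx ht.1
  rw [intervalIntegral.integral_eq_sub_of_hasDerivAt
    (f := fun u => -(1/((n:ℝ)+u)^2)) (fun t ht => hasDeriv3 n (hpos t ht))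
    ((contOn3 n hpos).intervalIntegrable)]
  ring

lemma int4 (n : ℕ) {x y : ℝ} (hx : 0 < x) (hxy : x ≤ y) :
    ∫ t in x..y, 6/((n:ℝ)+t)^4 = 2/((n:ℝ)+x)^3 - 2/((n:ℝ)+y)^3 := by
  have huIcc : Set.uIcc x y = Set.Icc x y := Set.uIcc_of_le hxy
  have hpos : ∀ t ∈ Set.uIcc x y, 0 < t := by
    rw [huIcc]; intro t ht; exact lt_of_lt_of_le hx ht.1
  rw [intervalIntegral.integral_eq_sub_of_hasDerivAt
    (f := fun u => -(2/((n:ℝ)+u)^3)) (fun t ht => hasDeriv4 n (hpos t ht))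
    ((contOn4 n hpos).intervalIntegrable)]
  ring

lemma integral_S3 {x y : ℝ} (hx : 0 < x) (hxy : x ≤ y) :
    ∫ t in x..y, S3 t
      = (∑' n : ℕ, 1/((n:ℝ)+x)^2) - ∑' n : ℕ, 1/((n:ℝ)+y)^2 := by
  have hy : 0 < y := lt_of_lt_of_le hx hxy
  have hIoc : ∀ t ∈ Set.Ioc x y, 0 < t := fun t ht => hx.trans ht.1
  have hIcc : ∀ t ∈ Set.Icc x y, 0 < t := fun t ht => lt_of_lt_of_le hx ht.1
  have hInt : ∀ n : ℕ, Integrable (fun t => 2/((n:ℝ)+t)^3)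
      (volume.restrict (Set.Ioc x y)) := by
    intro n
    have := (contOn3 n hIcc).integrableOn_Icc (μ := volume)
    exact (this.mono_set Set.Ioc_subset_Icc_self)
  have hval : ∀ n : ℕ, ∫ t in Set.Ioc x y, ‖2/((n:ℝ)+t)^3‖
      = 1/((n:ℝ)+x)^2 - 1/((n:ℝ)+y)^2 := by
    intro n
    rw [← int3 n hx hxy, intervalIntegral.integral_of_le hxy]
    apply setIntegral_congr_fun measurableSet_Ioc
    intro t ht
    have := npos (n := n) (hIoc t ht)
    simp only [Real.norm_eq_abs]
    rw [abs_of_nonneg (by positivity)]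
  have hsum : Summable (fun n : ℕ => ∫ t in Set.Ioc x y, ‖2/((n:ℝ)+t)^3‖) := by
    refine (((summable_k hx (k := 2) le_rfl).sub (summable_k hy (k := 2) le_rfl))).congr
      fun n => ?_
    rw [hval n]
  have swap := MeasureTheory.integral_tsum_of_summable_integral_norm
    (F := fun (n : ℕ) (t : ℝ) => 2/((n:ℝ)+t)^3)
    (μ := volume.restrict (Set.Ioc x y)) hInt hsum
  rw [intervalIntegral.integral_of_le hxy]
  simp only [S3]
  rw [← swap]
  rw [← Summable.tsum_sub (summable_k hx (k := 2) le_rfl) (summable_k hy (k := 2) le_rfl)]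
  congr 1
  funext n
  rw [← int3 n hx hxy, intervalIntegral.integral_of_le hxy]

lemma integral_S4 {x y : ℝ} (hx : 0 < x) (hxy : x ≤ y) :
    ∫ t in x..y, S4 t = S3 x - S3 y := by
  have hy : 0 < y := lt_of_lt_of_le hx hxy
  have hIoc : ∀ t ∈ Set.Ioc x y, 0 < t := fun t ht => hx.trans ht.1
  have hIcc : ∀ t ∈ Set.Icc x y, 0 < t := fun t ht => lt_of_lt_of_le hx ht.1
  have hInt : ∀ n : ℕ, Integrable (fun t => 6/((n:ℝ)+t)^4)
      (volume.restrict (Set.Ioc x y)) := by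
    intro n
    have := (contOn4 n hIcc).integrableOn_Icc (μ := volume)
    exact (this.mono_set Set.Ioc_subset_Icc_self)
  have hval : ∀ n : ℕ, ∫ t in Set.Ioc x y, ‖6/((n:ℝ)+t)^4‖
      = 2/((n:ℝ)+x)^3 - 2/((n:ℝ)+y)^3 := by
    intro n
    rw [← int4 n hx hxy, intervalIntegral.integral_of_le hxy]
    apply setIntegral_congr_fun measurableSet_Ioc
    intro t ht
    have := npos (n := n) (hIoc t ht)
    simp only [Real.norm_eq_abs]
    rw [abs_of_nonneg (by positivity)]
  have hsum : Summable (fun n : ℕ => ∫ t in Set.Ioc x y, ‖6/((n:ℝ)+t)^4‖) := by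
    refine (((summable_c hx 2 (k := 3) (by norm_num)).sub
      (summable_c hy 2 (k := 3) (by norm_num)))).congr fun n => ?_
    rw [hval n]
  have swap := MeasureTheory.integral_tsum_of_summable_integral_norm
    (F := fun (n : ℕ) (t : ℝ) => 6/((n:ℝ)+t)^4)
    (μ := volume.restrict (Set.Ioc x y)) hInt hsum
  rw [intervalIntegral.integral_of_le hxy]
  simp only [S3, S4]
  rw [← swap]
  rw [← Summable.tsum_sub (summable_c hx 2 (k := 3) (by norm_num)) (summable_c hy 2 (k := 3) (by norm_num))]
  congr 1
  funext n
  rw [← int4 n hx hxy, intervalIntegral.integral_of_le hxy]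

lemma S3_anti {s t : ℝ} (hs : 0 < s) (hst : s ≤ t) : S3 t ≤ S3 s := by
  have ht : 0 < t := lt_of_lt_of_le hs hst
  apply Summable.tsum_le_tsum _ (summable_c ht 2 (k := 3) (by norm_num))
    (summable_c hs 2 (k := 3) (by norm_num))
  intro n
  have h1 := npos (n := n) hs
  apply div_le_div_of_nonneg_left (by norm_num) (by positivity)
  apply pow_le_pow_left₀ (by positivity)
  linarith

lemma S4_anti {s t : ℝ} (hs : 0 < s) (hst : s ≤ t) : S4 t ≤ S4 s := by
  have ht : 0 < t := lt_of_lt_of_le hs hst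
  apply Summable.tsum_le_tsum _ (summable_c ht 6 (k := 4) (by norm_num))
    (summable_c hs 6 (k := 4) (by norm_num))
  intro n
  have h1 := npos (n := n) hs
  apply div_le_div_of_nonneg_left (by norm_num) (by positivity)
  apply pow_le_pow_left₀ (by positivity)
  linarith

lemma S3_intble {x y : ℝ} (hx : 0 < x) (hxy : x ≤ y) :
    IntervalIntegrable S3 volume x y := by
  apply AntitoneOn.intervalIntegrable
  rw [Set.uIcc_of_le hxy]
  intro s hs t ht hst
  exact S3_anti (lt_of_lt_of_le hx hs.1) hst

lemma S4_intble {x y : ℝ} (hx : 0 < x) (hxy : x ≤ y) :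
    IntervalIntegrable S4 volume x y := by
  apply AntitoneOn.intervalIntegrable
  rw [Set.uIcc_of_le hxy]
  intro s hs t ht hst
  exact S4_anti (lt_of_lt_of_le hx hs.1) hst

lemma S3_lower {t : ℝ} (ht : 0 < t) : 2 / t ^ 3 ≤ S3 t := by
  have h := Summable.le_tsum (summable_c ht 2 (k := 3) (by norm_num)) 0
    (fun j _ => by positivity)
  simpa [S3] using h

lemma integral_S3_pos {x y : ℝ} (hx : 0 < x) (hxy : x < y) :
    0 < ∫ t in x..y, S3 t := by
  have hy : 0 < y := hx.trans hxy
  have h1 : ∫ t in x..y, (2 / y ^ 3) ≤ ∫ t in x..y, S3 t := by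
    apply intervalIntegral.integral_mono_on hxy.le
      intervalIntegrable_const (S3_intble hx hxy.le)
    intro t ht
    have htpos : 0 < t := lt_of_lt_of_le hx ht.1
    calc 2 / y ^ 3 ≤ 2 / t ^ 3 := by
          apply div_le_div_of_nonneg_left (by norm_num) (by positivity)
          exact pow_le_pow_left₀ htpos.le ht.2 3
      _ ≤ S3 t := S3_lower htpos
  have h2 : (0:ℝ) < ∫ t in x..y, (2 / y ^ 3) := by
    rw [intervalIntegral.integral_const, smul_eq_mul]
    have : 0 < y - x := by linarith
    positivity
  linarith

/-- On `[u, b]` with `b` the right endpoint: `S4 b / S3 b * S3 t ≤ S4 t`. -/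
lemma ratio_bound_left {b t : ℝ} (ht : 0 < t) (htb : t ≤ b) :
    S4 b / S3 b * S3 t ≤ S4 t := by
  have hb : 0 < b := lt_of_lt_of_le ht htb
  rw [div_mul_eq_mul_div, div_le_iff₀ (S3_pos hb)]
  have := ratio_le ht htb
  nlinarith
lemma ratio_bound_right {b t : ℝ} (hb : 0 < b) (hbt : b ≤ t) :
    S4 t ≤ S4 b / S3 b * S3 t := by
  have ht : 0 < t := lt_of_lt_of_le hb hbt
  rw [div_mul_eq_mul_div, le_div_iff₀ (S3_pos hb)]
  have := ratio_le hb hbt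
  nlinarith


lemma tetra_eq (u : ℝ) : tetragamma u = -S3 u := rfl

lemma trig_diff {x y : ℝ} (hx : 0 < x) (hxy : x ≤ y) :
    trigamma x - trigamma y = ∫ t in x..y, S3 t := (integral_S3 hx hxy).symm

/-- weighted integral bound on the left of `b` -/
lemma int_bound_left {u b : ℝ} (hu : 0 < u) (hub : u ≤ b) :
    S4 b / S3 b * ∫ t in u..b, S3 t ≤ ∫ t in u..b, S4 t := by
  rw [← intervalIntegral.integral_const_mul]
  apply intervalIntegral.integral_mono_on hub
    ((S3_intble hu hub).const_mul _) (S4_intble hu hub)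
  intro t ht
  exact ratio_bound_left (lt_of_lt_of_le hu ht.1) ht.2

lemma int_bound_right {b v : ℝ} (hb : 0 < b) (hbv : b ≤ v) :
    ∫ t in b..v, S4 t ≤ S4 b / S3 b * ∫ t in b..v, S3 t := by
  rw [← intervalIntegral.integral_const_mul]
  apply intervalIntegral.integral_mono_on hbv
    (S4_intble hb hbv) ((S3_intble hb hbv).const_mul _)
  intro t ht
  exact ratio_bound_right hb ht.1

lemma int_bound_right_strict {b c : ℝ} (hb : 0 < b) (hbc : b < c) :
    ∫ t in b..c, S4 t < S4 b / S3 b * ∫ t in b..c, S3 t := by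
  set m := (b + c) / 2 with hm
  have hbm : b < m := by rw [hm]; linarith
  have hmc : m < c := by rw [hm]; linarith
  have hm0 : 0 < m := hb.trans hbm
  have hsplit4 : (∫ t in b..m, S4 t) + ∫ t in m..c, S4 t = ∫ t in b..c, S4 t :=
    intervalIntegral.integral_add_adjacent_intervals
      (S4_intble hb hbm.le) (S4_intble hm0 hmc.le)
  have hsplit3 : (∫ t in b..m, S3 t) + ∫ t in m..c, S3 t = ∫ t in b..c, S3 t :=
    intervalIntegral.integral_add_adjacent_intervals
      (S3_intble hb hbm.le) (S3_intble hm0 hmc.le)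
  have h1 : ∫ t in b..m, S4 t ≤ S4 b / S3 b * ∫ t in b..m, S3 t :=
    int_bound_right hb hbm.le
  have h2 : ∫ t in m..c, S4 t ≤ S4 m / S3 m * ∫ t in m..c, S3 t :=
    int_bound_right hm0 hmc.le
  have hkk : S4 m / S3 m < S4 b / S3 b := by
    rw [div_lt_div_iff₀ (S3_pos hm0) (S3_pos hb)]
    exact ratio_lt hb hbm
  have hpos : 0 < ∫ t in m..c, S3 t := integral_S3_pos hm0 hmc
  have h3 : S4 m / S3 m * ∫ t in m..c, S3 t < S4 b / S3 b * ∫ t in m..c, S3 t := by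
    exact mul_lt_mul_of_pos_right hkk hpos
  rw [← hsplit4, ← hsplit3, mul_add]
  linarith

/-- Positivity of `h'''(θ)` for the Beta RWRE, in cross-product form. -/
theorem h_third_derivative_pos (α β θ : ℝ) (hα : 0 < α) (hβ : 0 < β) (hθ : 0 < θ) :
    0 < (tetragamma (θ + α + β) - tetragamma (θ + α)) * (trigamma (θ + α + β) - trigamma θ)
        - (trigamma (θ + α + β) - trigamma (θ + α))
            * (tetragamma (θ + α + β) - tetragamma θ) := by
  set a := θ with ha'
  set b := θ + α with hb'
  set c := θ + α + β with hc'
  have ha : 0 < a := hθ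
  have hab : a < b := by rw [hb']; linarith
  have hbc : b < c := by rw [hb', hc']; linarith
  have hb : 0 < b := ha.trans hab
  have hc : 0 < c := hb.trans hbc
  have hac : a < c := hab.trans hbc
  -- rewrite differences
  have e1 : trigamma c - trigamma a = -∫ t in a..c, S3 t := by
    rw [← trig_diff ha hac.le]; ring
  have e2 : trigamma c - trigamma b = -∫ t in b..c, S3 t := by
    rw [← trig_diff hb hbc.le]; ring
  have e3 : tetragamma c - tetragamma a = ∫ t in a..c, S4 t := by
    rw [tetra_eq, tetra_eq, integral_S4 ha hac.le]; ring
  have e4 : tetragamma c - tetragamma b = ∫ t in b..c, S4 t := by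
    rw [tetra_eq, tetra_eq, integral_S4 hb hbc.le]; ring
  rw [e1, e2, e3, e4]
  have hsplit3 : (∫ t in a..b, S3 t) + ∫ t in b..c, S3 t = ∫ t in a..c, S3 t :=
    intervalIntegral.integral_add_adjacent_intervals
      (S3_intble ha hab.le) (S3_intble hb hbc.le)
  have hsplit4 : (∫ t in a..b, S4 t) + ∫ t in b..c, S4 t = ∫ t in a..c, S4 t :=
    intervalIntegral.integral_add_adjacent_intervals
      (S4_intble ha hab.le) (S4_intble hb hbc.le)
  set A3 := ∫ t in a..b, S3 t
  set B3 := ∫ t in b..c, S3 t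
  set A4 := ∫ t in a..b, S4 t
  set B4 := ∫ t in b..c, S4 t
  set κ := S4 b / S3 b with hκ
  have hA3 : 0 < A3 := integral_S3_pos ha hab
  have hB3 : 0 < B3 := integral_S3_pos hb hbc
  have hA4 : κ * A3 ≤ A4 := int_bound_left ha hab.le
  have hB4 : B4 < κ * B3 := int_bound_right_strict hb hbc
  rw [← hsplit3, ← hsplit4]
  nlinarith [mul_lt_mul_of_pos_right hB4 hA3, mul_le_mul_of_nonneg_right hA4 hB3.le]
end

section
/- Fix α = β = 1 and θ > 0. For all φ ∈ (0, π), Im[(1 − e^{iφ})² / (θ e^{iφ} + 1)] < 0; equivalently, the derivative d/dφ Re[h(θe^{iφ})] is positive for φ ∈ (0,π), so the circle of radius θ is steep-descent for −Re[h]. -/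
theorem circle_steep_descent_uniform (θ : ℝ) (hθ : 0 < θ) (φ : ℝ)
    (hφ : φ ∈ Set.Ioo 0 Real.pi) :
    ((1 - Complex.exp (φ * Complex.I)) ^ 2
      / ((θ:ℂ) * Complex.exp (φ * Complex.I) + 1)).im < 0 := by
  obtain ⟨h0, hπ⟩ := hφ
  have hs : 0 < Real.sin φ := Real.sin_pos_of_pos_of_lt_pi h0 hπ
  have hpyth := Real.sin_sq_add_cos_sq φ
  have hc1 : Real.cos φ < 1 := by nlinarith
  have hexp : Complex.exp (φ * Complex.I)
      = Complex.ofReal (Real.cos φ) + Complex.ofReal (Real.sin φ) * Complex.I := by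
    rw [Complex.exp_mul_I, Complex.ofReal_cos, Complex.ofReal_sin]
  set c := Real.cos φ
  set s := Real.sin φ
  have hden : 0 < (θ * c + 1) ^ 2 + (θ * s) ^ 2 := by positivity
  rw [hexp, Complex.div_im]
  simp only [Complex.normSq_apply, pow_two, Complex.sub_re, Complex.sub_im,
    Complex.mul_re, Complex.mul_im, Complex.add_re, Complex.add_im, Complex.one_re,
    Complex.one_im, Complex.I_re, Complex.I_im, Complex.ofReal_re, Complex.ofReal_im]
  ring_nf
  have hD : (0:ℝ) < 1 + c * θ * 2 + c ^ 2 * θ ^ 2 + s ^ 2 * θ ^ 2 := by nlinarith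
  have hinv : (0:ℝ) < (1 + c * θ * 2 + c ^ 2 * θ ^ 2 + s ^ 2 * θ ^ 2)⁻¹ := inv_pos.mpr hD
  have key : c * s * (1 + c * θ * 2 + c ^ 2 * θ ^ 2 + s ^ 2 * θ ^ 2)⁻¹ * 2 +
          c ^ 2 * s * θ * (1 + c * θ * 2 + c ^ 2 * θ ^ 2 + s ^ 2 * θ ^ 2)⁻¹ -
          s * θ * (1 + c * θ * 2 + c ^ 2 * θ ^ 2 + s ^ 2 * θ ^ 2)⁻¹ -
          s * (1 + c * θ * 2 + c ^ 2 * θ ^ 2 + s ^ 2 * θ ^ 2)⁻¹ * 2 +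
      s ^ 3 * θ * (1 + c * θ * 2 + c ^ 2 * θ ^ 2 + s ^ 2 * θ ^ 2)⁻¹
      = 2 * s * (c - 1) * (1 + c * θ * 2 + c ^ 2 * θ ^ 2 + s ^ 2 * θ ^ 2)⁻¹ := by
    linear_combination (s * θ * (1 + c * θ * 2 + c ^ 2 * θ ^ 2 + s ^ 2 * θ ^ 2)⁻¹) * hpyth
  rw [key]
  exact mul_neg_of_neg_of_pos (by nlinarith) hinv
end

section
/- For all α, β, θ > 0 and all y > 0, the following inequality between ratios holds: (Ψ₁(θ) − Ψ₁(θ+α))/(Φ(θ) − Φ(θ+α)) > (Ψ₁(θ+α) − Ψ₁(θ+α+β))/(Φ(θ+α) − Φ(θ+α+β)), where Φ(x) = Σ_{n≥0} 1/((n+x)² + y²) and Ψ₁ is the trigamma function. Consequently the vertical line through θ is steep-descent for Re[h]: Im[h'(θ+iy)] > 0 for y > 0. -/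
set_option maxHeartbeats 1000000

open Set

/-- `Φ(x) = Σ_{n≥0} 1/((n+x)² + y²)`. -/
noncomputable def Phi (y x : ℝ) : ℝ := ∑' n : ℕ, 1 / (((n:ℝ) + x) ^ 2 + y ^ 2)

/-- `Fd x = -Ψ₁'(x) = Σ_{n≥0} 2/(n+x)³`. -/
noncomputable def Fd (x : ℝ) : ℝ := ∑' n : ℕ, 2 / ((n:ℝ) + x) ^ 3

/-- `Gd y x = -Φ'(x) = Σ_{n≥0} 2(n+x)/((n+x)²+y²)²`. -/
noncomputable def Gd (y x : ℝ) : ℝ := ∑' n : ℕ, 2 * ((n:ℝ) + x) / (((n:ℝ) + x) ^ 2 + y ^ 2) ^ 2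

lemma nx_pos {x : ℝ} (hx : 0 < x) (n : ℕ) : (0:ℝ) < (n:ℝ) + x :=
  add_pos_of_nonneg_of_pos (Nat.cast_nonneg n) hx

lemma summable_inv_pow {x : ℝ} (hx : 0 < x) {p : ℕ} (hp : 2 ≤ p) :
    Summable (fun n : ℕ => 1 / ((n:ℝ) + x) ^ p) := by
  have hb : Summable (fun n : ℕ => 1 / ((n:ℝ) + 1) ^ p) := by
    have := (_root_.summable_nat_add_iff (f := fun n : ℕ => 1 / (n:ℝ) ^ p) 1).2
      (Real.summable_one_div_nat_pow.2 (by omega))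
    simpa using this
  set c := min x 1 with hc
  have hc0 : 0 < c := lt_min hx one_pos
  refine Summable.of_nonneg_of_le (fun n => by positivity) (fun n => ?_) (hb.mul_left (1 / c ^ p))
  have h1 : c * ((n:ℝ) + 1) ≤ (n:ℝ) + x := by
    have h2 : c ≤ x := min_le_left _ _
    have h3 : c ≤ 1 := min_le_right _ _
    nlinarith [(by positivity : (0:ℝ) ≤ (n:ℝ))]
  have h4 : c ^ p * ((n:ℝ)+1) ^ p ≤ ((n:ℝ) + x) ^ p := by
    rw [← mul_pow]; exact pow_le_pow_left₀ (by positivity) h1 p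
  calc 1 / ((n:ℝ)+x) ^ p ≤ 1 / (c ^ p * ((n:ℝ)+1) ^ p) :=
        one_div_le_one_div_of_le (by positivity) h4
    _ = 1 / c ^ p * (1 / ((n:ℝ)+1) ^ p) := (one_div_mul_one_div _ _).symm

lemma summable_cube2 {x : ℝ} (hx : 0 < x) : Summable (fun n : ℕ => 2 / ((n:ℝ) + x) ^ 3) := by
  have := (summable_inv_pow hx (p := 3) (by norm_num)).mul_left 2
  simpa [div_eq_mul_inv] using this

lemma summable_phi {x y : ℝ} (hx : 0 < x) :
    Summable (fun n : ℕ => 1 / (((n:ℝ) + x) ^ 2 + y ^ 2)) := by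
  refine Summable.of_nonneg_of_le (fun n => by positivity) (fun n => ?_)
    (summable_inv_pow hx (p := 2) le_rfl)
  have h0 := nx_pos hx n
  exact one_div_le_one_div_of_le (by positivity) (by nlinarith [sq_nonneg y])

lemma G_bound {x y : ℝ} (hx : 0 < x) (n : ℕ) :
    2 * ((n:ℝ) + x) / (((n:ℝ) + x) ^ 2 + y ^ 2) ^ 2 ≤ 2 / ((n:ℝ) + x) ^ 3 := by
  have h0 := nx_pos hx n
  calc 2 * ((n:ℝ) + x) / (((n:ℝ) + x) ^ 2 + y ^ 2) ^ 2
      ≤ 2 * ((n:ℝ) + x) / (((n:ℝ) + x) ^ 2) ^ 2 :=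
        div_le_div_of_nonneg_left (by positivity) (by positivity)
          (pow_le_pow_left₀ (by positivity) (by nlinarith [sq_nonneg y]) 2)
    _ = 2 / ((n:ℝ) + x) ^ 3 := by
        rw [div_eq_div_iff (by positivity) (by positivity)]; ring

lemma summable_G {x y : ℝ} (hx : 0 < x) :
    Summable (fun n : ℕ => 2 * ((n:ℝ) + x) / (((n:ℝ) + x) ^ 2 + y ^ 2) ^ 2) := by
  refine Summable.of_nonneg_of_le (fun n => ?_) (fun n => G_bound hx n) (summable_cube2 hx)
  have h0 := nx_pos hx n
  positivity

lemma Fd_pos {x : ℝ} (hx : 0 < x) : 0 < Fd x := by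
  refine Summable.tsum_pos (summable_cube2 hx) (fun n => ?_) 0 ?_
  · have := nx_pos hx n; positivity
  · have := nx_pos hx 0; positivity

lemma Gd_pos {x y : ℝ} (hx : 0 < x) : 0 < Gd y x := by
  refine Summable.tsum_pos (summable_G hx) (fun n => ?_) 0 ?_
  · have := nx_pos hx n; positivity
  · have := nx_pos hx 0; positivity

lemma Phi_strict {x δ y : ℝ} (hx : 0 < x) (hδ : 0 < δ) : Phi y (x + δ) < Phi y x := by
  refine Summable.tsum_lt_tsum (i := 0) (fun n => ?_) ?_
    (summable_phi (by linarith)) (summable_phi hx)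
  · have h0 := nx_pos hx n
    exact one_div_le_one_div_of_le (by positivity) (by nlinarith)
  · have h0 := nx_pos hx 0
    exact one_div_lt_one_div_of_lt (by positivity) (by nlinarith)

/-! ### Per-term comparison inequality -/

lemma hfun_lt {y u v : ℝ} (hy : 0 < y) (hu : 0 < u) (huv : u < v) :
    u^4 / (u^2 + y^2)^2 < v^4 / (v^2 + y^2)^2 := by
  have h1 : (0:ℝ) < (u^2+y^2)^2 := by positivity
  have h2 : (0:ℝ) < (v^2+y^2)^2 := by positivity
  rw [div_lt_div_iff₀ h1 h2]
  have hsq : u^2 < v^2 := by nlinarith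
  have key : u^2 * (v^2+y^2) < v^2 * (u^2+y^2) := by
    have := mul_lt_mul_of_pos_right hsq (mul_pos hy hy)
    nlinarith
  calc u^4 * (v^2+y^2)^2 = (u^2*(v^2+y^2))^2 := by ring
    _ < (v^2*(u^2+y^2))^2 := by
        apply pow_lt_pow_left₀ key (by positivity)
        norm_num
    _ = v^4 * (u^2+y^2)^2 := by ring

lemma hfun_le {y u v : ℝ} (hy : 0 < y) (hu : 0 < u) (huv : u ≤ v) :
    u^4 / (u^2 + y^2)^2 ≤ v^4 / (v^2 + y^2)^2 := by
  rcases eq_or_lt_of_le huv with rfl | h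
  · exact le_refl _
  · exact (hfun_lt hy hu h).le

lemma abstract4 {A B C D p q : ℝ} (hAB : A < B) (hCD : C < D) (hp : 0 < p) (hq : 0 < q)
    (t3 : 0 ≤ (A - C) * (p - q)) : C*p + A*q < D*q + B*p := by
  nlinarith [mul_pos (show (0:ℝ) < B - A by linarith) hp,
    mul_pos (show (0:ℝ) < D - C by linarith) hq]

lemma key4 {a b c d y : ℝ} (ha : 0 < a) (hc : 0 < c) (hab : a < b) (hcd : c < d)
    (hδ : b - a = d - c) (hy : 0 < y) :
    1/b^3 * (c/(c^2+y^2)^2) + 1/d^3 * (a/(a^2+y^2)^2)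
      < 1/a^3 * (d/(d^2+y^2)^2) + 1/c^3 * (b/(b^2+y^2)^2) := by
  have hb : 0 < b := ha.trans hab
  have hd : 0 < d := hc.trans hcd
  have hrw : ∀ u : ℝ, 0 < u → u/(u^2+y^2)^2 = (u^4/(u^2+y^2)^2) / u^3 := by
    intro u hu
    rw [div_div, div_eq_div_iff (by positivity) (by positivity)]
    ring
  rw [hrw a ha, hrw b hb, hrw c hc, hrw d hd]
  have hAB : a^4/(a^2+y^2)^2 < b^4/(b^2+y^2)^2 := hfun_lt hy ha hab
  have hCD : c^4/(c^2+y^2)^2 < d^4/(d^2+y^2)^2 := hfun_lt hy hc hcd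
  have hp : (0:ℝ) < 1/(b^3*c^3) := by positivity
  have hq : (0:ℝ) < 1/(a^3*d^3) := by positivity
  have e1 : 1/b^3 * (c^4/(c^2+y^2)^2 / c^3) = (c^4/(c^2+y^2)^2) * (1/(b^3*c^3)) := by ring
  have e2 : 1/d^3 * (a^4/(a^2+y^2)^2 / a^3) = (a^4/(a^2+y^2)^2) * (1/(a^3*d^3)) := by ring
  have e3 : 1/a^3 * (d^4/(d^2+y^2)^2 / d^3) = (d^4/(d^2+y^2)^2) * (1/(a^3*d^3)) := by ring
  have e4 : 1/c^3 * (b^4/(b^2+y^2)^2 / b^3) = (b^4/(b^2+y^2)^2) * (1/(b^3*c^3)) := by ring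
  rw [e1, e2, e3, e4]
  apply abstract4 hAB hCD hp hq
  rcases le_total c a with h | h
  · have hAC := hfun_le hy hc h
    have hbcad : b * c ≤ a * d := by nlinarith
    have hcube : (b*c)^3 ≤ (a*d)^3 := pow_le_pow_left₀ (by positivity) hbcad 3
    have hpq : 1/(a^3*d^3) ≤ 1/(b^3*c^3) := by
      apply one_div_le_one_div_of_le (by positivity)
      calc b^3*c^3 = (b*c)^3 := by ring
        _ ≤ (a*d)^3 := hcube
        _ = a^3*d^3 := by ring
    exact mul_nonneg (by linarith) (by linarith)
  · have hAC := hfun_le hy ha h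
    have hbcad : a * d ≤ b * c := by nlinarith
    have hcube : (a*d)^3 ≤ (b*c)^3 := pow_le_pow_left₀ (by positivity) hbcad 3
    have hpq : 1/(b^3*c^3) ≤ 1/(a^3*d^3) := by
      apply one_div_le_one_div_of_le (by positivity)
      calc a^3*d^3 = (a*d)^3 := by ring
        _ ≤ (b*c)^3 := hcube
        _ = b^3*c^3 := by ring
    have h1 : (0:ℝ) ≤ (c^4/(c^2+y^2)^2) - (a^4/(a^2+y^2)^2) := by linarith
    have h2 : (0:ℝ) ≤ 1/(a^3*d^3) - 1/(b^3*c^3) := by linarith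
    nlinarith [mul_nonneg h1 h2]

lemma key4' {a b c d y : ℝ} (ha : 0 < a) (hc : 0 < c) (hab : a < b) (hcd : c < d)
    (hδ : b - a = d - c) (hy : 0 < y) :
    0 < 2 / a ^ 3 * (2 * d / (d ^ 2 + y ^ 2) ^ 2) - 2 / b ^ 3 * (2 * c / (c ^ 2 + y ^ 2) ^ 2) +
      (2 / c ^ 3 * (2 * b / (b ^ 2 + y ^ 2) ^ 2) - 2 / d ^ 3 * (2 * a / (a ^ 2 + y ^ 2) ^ 2)) := by
  have k4 := key4 ha hc hab hcd hδ hy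
  have h : 2 / a ^ 3 * (2 * d / (d ^ 2 + y ^ 2) ^ 2) - 2 / b ^ 3 * (2 * c / (c ^ 2 + y ^ 2) ^ 2) +
      (2 / c ^ 3 * (2 * b / (b ^ 2 + y ^ 2) ^ 2) - 2 / d ^ 3 * (2 * a / (a ^ 2 + y ^ 2) ^ 2))
      = 4 * ((1 / a ^ 3 * (d / (d ^ 2 + y ^ 2) ^ 2) + 1 / c ^ 3 * (b / (b ^ 2 + y ^ 2) ^ 2)) -
        (1 / b ^ 3 * (c / (c ^ 2 + y ^ 2) ^ 2) + 1 / d ^ 3 * (a / (a ^ 2 + y ^ 2) ^ 2))) := by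
    ring
  rw [h]
  linarith

/-! ### The cross inequality between `Fd` and `Gd` -/

lemma norm_eq_self_of_nonneg {f : ℕ → ℝ} (hf : ∀ n, 0 ≤ f n) :
    (fun n => ‖f n‖) = f := funext fun n => Real.norm_of_nonneg (hf n)

lemma cross {s t y : ℝ} (hs : 0 < s) (hst : s < t) (hy : 0 < y) :
    Fd t * Gd y s < Fd s * Gd y t := by
  have ht : 0 < t := hs.trans hst
  set fs : ℕ → ℝ := fun n => 2 / ((n:ℝ) + s) ^ 3 with hfs
  set ft : ℕ → ℝ := fun n => 2 / ((n:ℝ) + t) ^ 3 with hft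
  set gs : ℕ → ℝ := fun n => 2 * ((n:ℝ) + s) / (((n:ℝ) + s) ^ 2 + y ^ 2) ^ 2 with hgs
  set gt' : ℕ → ℝ := fun n => 2 * ((n:ℝ) + t) / (((n:ℝ) + t) ^ 2 + y ^ 2) ^ 2 with hgt
  have Sfs : Summable fs := summable_cube2 hs
  have Sft : Summable ft := summable_cube2 ht
  have Sgs : Summable gs := summable_G hs
  have Sgt : Summable gt' := summable_G ht
  have fsn : ∀ n, 0 ≤ fs n := fun n => by have := nx_pos hs n; positivity
  have ftn : ∀ n, 0 ≤ ft n := fun n => by have := nx_pos ht n; positivity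
  have gsn : ∀ n, 0 ≤ gs n := fun n => by have := nx_pos hs n; positivity
  have gtn : ∀ n, 0 ≤ gt' n := fun n => by have := nx_pos ht n; positivity
  have P1 : Summable (fun z : ℕ × ℕ => ft z.1 * gs z.2) := by
    apply summable_mul_of_summable_norm
    · rw [norm_eq_self_of_nonneg ftn]; exact Sft
    · rw [norm_eq_self_of_nonneg gsn]; exact Sgs
  have P2 : Summable (fun z : ℕ × ℕ => fs z.1 * gt' z.2) := by
    apply summable_mul_of_summable_norm
    · rw [norm_eq_self_of_nonneg fsn]; exact Sfs
    · rw [norm_eq_self_of_nonneg gtn]; exact Sgt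
  have e1 : Fd t * Gd y s = ∑' z : ℕ × ℕ, ft z.1 * gs z.2 := Summable.tsum_mul_tsum Sft Sgs P1
  have e2 : Fd s * Gd y t = ∑' z : ℕ × ℕ, fs z.1 * gt' z.2 := Summable.tsum_mul_tsum Sfs Sgt P2
  set c : ℕ × ℕ → ℝ := fun z => fs z.1 * gt' z.2 - ft z.1 * gs z.2 with hc
  have Sc : Summable c := P2.sub P1
  have hsum : ∑' z, c z = Fd s * Gd y t - Fd t * Gd y s := by
    rw [hc, Summable.tsum_sub P2 P1, ← e2, ← e1]
  have Scs : Summable (fun z : ℕ × ℕ => c z.swap) := by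
    have := ((Equiv.prodComm ℕ ℕ).summable_iff (f := c)).2 Sc
    exact this
  have heq : ∑' z : ℕ × ℕ, c z.swap = ∑' z, c z := by
    have := (Equiv.prodComm ℕ ℕ).tsum_eq c
    simpa [Function.comp] using this
  have perterm : ∀ z : ℕ × ℕ, 0 < c z + c z.swap := by
    rintro ⟨n, m⟩
    have k4 := key4' (a := (n:ℝ) + s) (b := (n:ℝ) + t) (c := (m:ℝ) + s) (d := (m:ℝ) + t)
      (nx_pos hs n) (nx_pos hs m) (by linarith) (by linarith) (by ring) hy
    simp only [hc, hfs, hft, hgs, hgt, Prod.swap]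
    linarith [k4]
  have hpos : 0 < ∑' z : ℕ × ℕ, (c z + c z.swap) :=
    Summable.tsum_pos (Sc.add Scs) (fun z => (perterm z).le) (0, 0) (perterm (0, 0))
  have h2 : ∑' z : ℕ × ℕ, (c z + c z.swap) = 2 * ∑' z, c z := by
    rw [Summable.tsum_add Sc Scs, heq, two_mul]
  rw [h2] at hpos
  have h3 : 0 < ∑' z, c z := by linarith
  rw [hsum] at h3
  linarith

/-! ### Derivatives of `trigamma` and `Phi` -/

lemma hasDerivAt_term_tri {x : ℝ} (n : ℕ) (hx : 0 < x) :
    HasDerivAt (fun z : ℝ => 1 / ((n:ℝ) + z) ^ 2) (-(2 / ((n:ℝ) + x) ^ 3)) x := by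
  have h0 := nx_pos hx n
  have h1 : HasDerivAt (fun z : ℝ => (n:ℝ) + z) 1 x := (hasDerivAt_id x).const_add (n:ℝ)
  have h2 := (h1.pow 2).inv (by positivity : (0:ℝ) < ((n:ℝ)+x)^2).ne'
  simp only [one_div]
  refine h2.congr_deriv ?_
  simp only [Pi.pow_apply]
  rw [neg_div, neg_inj, div_eq_div_iff (by positivity) (by positivity)]
  push_cast
  ring

lemma hasDerivAt_term_phi {x y : ℝ} (n : ℕ) (hx : 0 < x) :
    HasDerivAt (fun z : ℝ => 1 / (((n:ℝ) + z) ^ 2 + y ^ 2))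
      (-(2 * ((n:ℝ) + x) / (((n:ℝ) + x) ^ 2 + y ^ 2) ^ 2)) x := by
  have h0 := nx_pos hx n
  have h1 : HasDerivAt (fun z : ℝ => (n:ℝ) + z) 1 x := (hasDerivAt_id x).const_add (n:ℝ)
  have h2 := ((h1.pow 2).add_const (y^2)).inv
    (by positivity : (0:ℝ) < ((n:ℝ)+x)^2 + y^2).ne'
  simp only [one_div]
  refine h2.congr_deriv ?_
  simp only [Pi.pow_apply]
  rw [neg_div, neg_inj, div_eq_div_iff (by positivity) (by positivity)]
  push_cast
  ring

lemma hasDerivAt_trigamma {ε x : ℝ} (hε : 0 < ε) (hx : ε < x) :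
    HasDerivAt trigamma (-(Fd x)) x := by
  have key := hasDerivAt_tsum_of_isPreconnected (summable_cube2 hε) isOpen_Ioi
    (isPreconnected_Ioi)
    (g := fun (n : ℕ) (z : ℝ) => 1 / ((n:ℝ) + z) ^ 2)
    (g' := fun (n : ℕ) (z : ℝ) => -(2 / ((n:ℝ) + z) ^ 3))
    (fun n z hz => hasDerivAt_term_tri n (hε.trans hz))
    (fun n z hz => by
      have h1 := nx_pos hε n
      have h0 := nx_pos (hε.trans (mem_Ioi.1 hz)) n
      have h2 : (n:ℝ) + ε ≤ (n:ℝ) + z := by have : ε < z := hz; linarith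
      rw [norm_neg, Real.norm_of_nonneg (by positivity)]
      exact div_le_div_of_nonneg_left (by norm_num) (by positivity)
        (pow_le_pow_left₀ h1.le h2 3))
    (mem_Ioi.2 (by linarith : ε < ε + 1))
    (summable_inv_pow (by linarith : (0:ℝ) < ε + 1) (p := 2) le_rfl)
    (mem_Ioi.2 hx)
  have h : HasDerivAt (fun z => ∑' n : ℕ, 1 / ((n:ℝ) + z) ^ 2)
      (∑' n : ℕ, -(2 / ((n:ℝ) + x) ^ 3)) x := key
  rw [tsum_neg] at h
  exact h

lemma hasDerivAt_Phi {ε x y : ℝ} (hε : 0 < ε) (hx : ε < x) :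
    HasDerivAt (Phi y) (-(Gd y x)) x := by
  have key := hasDerivAt_tsum_of_isPreconnected (summable_cube2 hε) isOpen_Ioi
    (isPreconnected_Ioi)
    (g := fun (n : ℕ) (z : ℝ) => 1 / (((n:ℝ) + z) ^ 2 + y ^ 2))
    (g' := fun (n : ℕ) (z : ℝ) => -(2 * ((n:ℝ) + z) / (((n:ℝ) + z) ^ 2 + y ^ 2) ^ 2))
    (fun n z hz => hasDerivAt_term_phi n (hε.trans hz))
    (fun n z hz => by
      have hz0 : 0 < z := hε.trans hz
      have h1 := nx_pos hε n
      have h0 := nx_pos hz0 n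
      have h2 : (n:ℝ) + ε ≤ (n:ℝ) + z := by have : ε < z := hz; linarith
      rw [norm_neg, Real.norm_of_nonneg (by positivity)]
      calc 2 * ((n:ℝ) + z) / (((n:ℝ) + z) ^ 2 + y ^ 2) ^ 2
          ≤ 2 / ((n:ℝ) + z) ^ 3 := G_bound hz0 n
        _ ≤ 2 / ((n:ℝ) + ε) ^ 3 := div_le_div_of_nonneg_left (by norm_num) (by positivity)
            (pow_le_pow_left₀ h1.le h2 3))
    (mem_Ioi.2 (by linarith : ε < ε + 1))
    (summable_phi (by linarith : (0:ℝ) < ε + 1))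
    (mem_Ioi.2 hx)
  have h : HasDerivAt (fun z => ∑' n : ℕ, 1 / (((n:ℝ) + z) ^ 2 + y ^ 2))
      (∑' n : ℕ, -(2 * ((n:ℝ) + x) / (((n:ℝ) + x) ^ 2 + y ^ 2) ^ 2)) x := key
  rw [tsum_neg] at h
  exact h

/-- The ratio inequality implying that the vertical line through `θ` is steep-descent
for `Re[h]` in the Beta RWRE asymptotic analysis. -/
theorem steep_descent_ratio_inequality (α β θ y : ℝ)
    (hα : 0 < α) (hβ : 0 < β) (hθ : 0 < θ) (hy : 0 < y) :
    (trigamma (θ + α) - trigamma (θ + α + β))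
        / (Phi y (θ + α) - Phi y (θ + α + β))
      < (trigamma θ - trigamma (θ + α)) / (Phi y θ - Phi y (θ + α)) := by
  have hθ2 : 0 < θ / 2 := by linarith
  have contT1 : ContinuousOn trigamma (Icc θ (θ + α)) := fun x hx =>
    (hasDerivAt_trigamma hθ2 (by have := hx.1; simp only [mem_Icc] at hx; linarith [hx.1])
      ).continuousAt.continuousWithinAt
  have contT2 : ContinuousOn trigamma (Icc (θ + α) (θ + α + β)) := fun x hx =>
    (hasDerivAt_trigamma hθ2 (by simp only [mem_Icc] at hx; linarith [hx.1])
      ).continuousAt.continuousWithinAt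
  have contP1 : ContinuousOn (Phi y) (Icc θ (θ + α)) := fun x hx =>
    (hasDerivAt_Phi hθ2 (by simp only [mem_Icc] at hx; linarith [hx.1])
      ).continuousAt.continuousWithinAt
  have contP2 : ContinuousOn (Phi y) (Icc (θ + α) (θ + α + β)) := fun x hx =>
    (hasDerivAt_Phi hθ2 (by simp only [mem_Icc] at hx; linarith [hx.1])
      ).continuousAt.continuousWithinAt
  obtain ⟨η, hη, hEq1⟩ := exists_ratio_hasDerivAt_eq_ratio_slope trigamma
    (fun x => -(Fd x)) (by linarith : θ < θ + α) contT1
    (fun x hx => hasDerivAt_trigamma hθ2 (by linarith [hx.1]))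
    (Phi y) (fun x => -(Gd y x)) contP1
    (fun x hx => hasDerivAt_Phi hθ2 (by linarith [hx.1]))
  obtain ⟨ξ, hξ, hEq2⟩ := exists_ratio_hasDerivAt_eq_ratio_slope trigamma
    (fun x => -(Fd x)) (by linarith : θ + α < θ + α + β) contT2
    (fun x hx => hasDerivAt_trigamma hθ2 (by linarith [hx.1]))
    (Phi y) (fun x => -(Gd y x)) contP2
    (fun x hx => hasDerivAt_Phi hθ2 (by linarith [hx.1]))
  have hη0 : 0 < η := hθ.trans hη.1
  have hξ0 : 0 < ξ := by have := hξ.1; linarith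
  have hGη : 0 < Gd y η := Gd_pos hη0
  have hGξ : 0 < Gd y ξ := Gd_pos hξ0
  have hP1 : 0 < Phi y θ - Phi y (θ + α) := sub_pos.2 (Phi_strict hθ hα)
  have hP2 : 0 < Phi y (θ + α) - Phi y (θ + α + β) := sub_pos.2 (Phi_strict (by linarith) hβ)
  have r1 : (trigamma θ - trigamma (θ + α)) / (Phi y θ - Phi y (θ + α)) = Fd η / Gd y η := by
    rw [div_eq_div_iff (ne_of_gt hP1) (ne_of_gt hGη)]
    linear_combination -hEq1
  have r2 : (trigamma (θ + α) - trigamma (θ + α + β)) / (Phi y (θ + α) - Phi y (θ + α + β))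
      = Fd ξ / Gd y ξ := by
    rw [div_eq_div_iff (ne_of_gt hP2) (ne_of_gt hGξ)]
    linear_combination -hEq2
  rw [r1, r2, div_lt_div_iff₀ hGξ hGη]
  exact cross hη0 (by linarith [hη.2, hξ.1]) hy
end

section
/- For 0 < θ₁ < θ₂ and fixed y > 0, with Ψ₂(x) = −Σ_{n≥0} 2/(n+x)³ and Φ(x) = Σ_{n≥0} 1/((n+x)²+y²), one has Ψ₂(θ₁)Φ'(θ₂) > Ψ₂(θ₂)Φ'(θ₁), i.e. Σ_n 2/(n+θ₁)³ · Σ_m 2(m+θ₂)/((m+θ₂)²+y²)² > Σ_n 2/(n+θ₂)³ · Σ_m 2(m+θ₁)/((m+θ₁)²+y²)². -/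
private lemma Gmono {y : ℝ} (hy : 0 < y) {s t : ℝ} (hs : 0 < s) (hst : s ≤ t) :
    s^4/(s^2+y^2)^2 ≤ t^4/(t^2+y^2)^2 := by
  have ht : 0 < t := lt_of_lt_of_le hs hst
  rw [div_le_div_iff₀ (by positivity) (by positivity)]
  have hst2 : s^2 ≤ t^2 := by nlinarith
  have h1 : s^2*(t^2+y^2) ≤ t^2*(s^2+y^2) := by
    nlinarith [mul_le_mul_of_nonneg_right hst2 (sq_nonneg y)]
  nlinarith [pow_le_pow_left₀ (by positivity : (0:ℝ) ≤ s^2*(t^2+y^2)) h1 2]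

private lemma key_pair {y a b A B : ℝ} (hy : 0 < y) (ha : 0 < a) (hb : 0 < b)
    (haA : a < A) (hAB : A - a = B - b) :
    2/A^3 * (2*b/((b^2+y^2)^2)) + 2/B^3 * (2*a/((a^2+y^2)^2))
      ≤ 2/a^3 * (2*B/((B^2+y^2)^2)) + 2/b^3 * (2*A/((A^2+y^2)^2)) := by
  have hbB : b < B := by linarith
  have hA : 0 < A := ha.trans haA
  have hB : 0 < B := hb.trans hbB
  set G : ℝ → ℝ := fun t => t^4/(t^2+y^2)^2 with hG
  have key2 : a^3*B^3 * G b + b^3*A^3 * G a ≤ b^3*A^3 * G B + a^3*B^3 * G A := by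
    have hGAa : G a ≤ G A := Gmono hy ha haA.le
    have hGBb : G b ≤ G B := Gmono hy hb hbB.le
    rcases le_total a b with hab | hab
    · have hGBa : G a ≤ G B := Gmono hy ha (by linarith)
      have hcoef : a^3*B^3 ≤ b^3*A^3 := by
        have h3 : (a*B)^3 ≤ (b*A)^3 :=
          pow_le_pow_left₀ (by positivity) (by nlinarith) 3
        nlinarith [h3]
      have h1 : 0 ≤ a^3*B^3*(G A + G B - G a - G b) :=
        mul_nonneg (by positivity) (by linarith)
      have h2 : 0 ≤ (b^3*A^3 - a^3*B^3) * (G B - G a) :=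
        mul_nonneg (by linarith) (by linarith)
      nlinarith [h1, h2]
    · have hGAb : G b ≤ G A := Gmono hy hb (by linarith)
      have hcoef : b^3*A^3 ≤ a^3*B^3 := by
        have h3 : (b*A)^3 ≤ (a*B)^3 :=
          pow_le_pow_left₀ (by positivity) (by nlinarith) 3
        nlinarith [h3]
      have h1 : 0 ≤ b^3*A^3*(G A + G B - G a - G b) :=
        mul_nonneg (by positivity) (by linarith)
      have h2 : 0 ≤ (a^3*B^3 - b^3*A^3) * (G A - G b) :=
        mul_nonneg (by linarith) (by linarith)
      nlinarith [h1, h2]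
  have hD : (0:ℝ) < a^3*b^3*A^3*B^3 := by positivity
  have e1 : 2/A^3 * (2*b/((b^2+y^2)^2)) = 4*(a^3*B^3)*G b/(a^3*b^3*A^3*B^3) := by
    simp only [hG]; field_simp; ring
  have e2 : 2/B^3 * (2*a/((a^2+y^2)^2)) = 4*(b^3*A^3)*G a/(a^3*b^3*A^3*B^3) := by
    simp only [hG]; field_simp; ring
  have e3 : 2/a^3 * (2*B/((B^2+y^2)^2)) = 4*(b^3*A^3)*G B/(a^3*b^3*A^3*B^3) := by
    simp only [hG]; field_simp; ring
  have e4 : 2/b^3 * (2*A/((A^2+y^2)^2)) = 4*(a^3*B^3)*G A/(a^3*b^3*A^3*B^3) := by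
    simp only [hG]; field_simp; ring
  rw [e1, e2, e3, e4, ← add_div, ← add_div, div_le_div_iff₀ hD hD]
  nlinarith [mul_le_mul_of_nonneg_right key2 hD.le]

private lemma key_strict {y a A : ℝ} (hy : 0 < y) (ha : 0 < a) (haA : a < A) :
    2/A^3 * (2*a/((a^2+y^2)^2)) < 2/a^3 * (2*A/((A^2+y^2)^2)) := by
  have hA : 0 < A := ha.trans haA
  rw [div_mul_div_comm, div_mul_div_comm, div_lt_div_iff₀ (by positivity) (by positivity)]
  have hst2 : a^2 < A^2 := by nlinarith
  have h1 : a^2*(A^2+y^2) < A^2*(a^2+y^2) := by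
    nlinarith [mul_lt_mul_of_pos_right hst2 (by positivity : (0:ℝ) < y^2)]
  nlinarith [pow_lt_pow_left₀ h1 (by positivity : (0:ℝ) ≤ a^2*(A^2+y^2)) (by norm_num : 2 ≠ 0)]

private lemma summable_cube {θ : ℝ} (hθ : 0 < θ) :
    Summable (fun n : ℕ => 2/((n:ℝ)+θ)^3) := by
  have hc : 0 < min θ 1 := lt_min hθ one_pos
  have hbase : Summable (fun n : ℕ => 1/((n:ℝ)+1)^3) := by
    have h := (summable_nat_add_iff (f := fun n : ℕ => 1/((n:ℝ))^3) 1).mpr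
      (Real.summable_one_div_nat_pow.mpr (by norm_num))
    exact h.congr (fun n => by push_cast; ring)
  apply Summable.of_nonneg_of_le (fun n => by positivity) (fun n => ?_)
    (hbase.mul_left (2/(min θ 1)^3))
  have hn : (0:ℝ) ≤ (n:ℝ) := Nat.cast_nonneg n
  have h2 : (min θ 1)*((n:ℝ)+1) ≤ (n:ℝ)+θ := by
    have := min_le_left θ 1
    have := min_le_right θ 1
    nlinarith
  have h1 : 0 < (min θ 1)*((n:ℝ)+1) := by positivity
  calc 2/((n:ℝ)+θ)^3 ≤ 2/((min θ 1)*((n:ℝ)+1))^3 := by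
        apply div_le_div_of_nonneg_left (by norm_num) (by positivity)
        exact pow_le_pow_left₀ h1.le h2 3
    _ = 2/(min θ 1)^3 * (1/((n:ℝ)+1)^3) := by
        rw [mul_pow]; field_simp
  
private lemma summable_phi_s10 {θ y : ℝ} (hθ : 0 < θ) (hy : 0 < y) :
    Summable (fun m : ℕ => 2*((m:ℝ)+θ)/((((m:ℝ)+θ)^2+y^2)^2)) := by
  apply Summable.of_nonneg_of_le (fun n => by positivity) (fun n => ?_) (summable_cube hθ)
  have ht : (0:ℝ) < (n:ℝ)+θ := by positivity
  rw [div_le_div_iff₀ (by positivity) (by positivity)]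
  nlinarith [sq_nonneg (y^2), sq_nonneg (((n:ℝ)+θ)*y), sq_nonneg ((n:ℝ)+θ)]

private lemma tsum_prod_mul {f g : ℕ → ℝ} (hf : Summable f) (hg : Summable g)
    (hf0 : ∀ n, 0 ≤ f n) (hg0 : ∀ n, 0 ≤ g n) :
    (∑' n, f n) * (∑' m, g m) = ∑' p : ℕ × ℕ, f p.1 * g p.2 := by
  rw [Summable.tsum_prod' (hf.mul_of_nonneg hg hf0 hg0) (fun n => hg.mul_left (f n))]
  simp_rw [tsum_mul_left]
  rw [tsum_mul_right]

private lemma main_aux {F H : ℕ × ℕ → ℝ} (hFs : Summable F) (hHs : Summable H)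
    (hle : ∀ p : ℕ × ℕ, F p + F p.swap ≤ H p + H p.swap)
    (hlt : F (0, 0) < H (0, 0)) : ∑' p, F p < ∑' p, H p := by
  have hFswap : Summable (fun p : ℕ × ℕ => F p.swap) :=
    ((Equiv.prodComm ℕ ℕ).summable_iff (f := F)).mpr hFs
  have hHswap : Summable (fun p : ℕ × ℕ => H p.swap) :=
    ((Equiv.prodComm ℕ ℕ).summable_iff (f := H)).mpr hHs
  have eqswapF : ∑' p : ℕ × ℕ, F p.swap = ∑' p, F p := (Equiv.prodComm ℕ ℕ).tsum_eq F
  have eqswapH : ∑' p : ℕ × ℕ, H p.swap = ∑' p, H p := (Equiv.prodComm ℕ ℕ).tsum_eq H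
  have main : ∑' p : ℕ × ℕ, (F p + F p.swap) < ∑' p : ℕ × ℕ, (H p + H p.swap) := by
    refine Summable.tsum_lt_tsum (i := ((0:ℕ), (0:ℕ))) hle ?_ (hFs.add hFswap) (hHs.add hHswap)
    have : Prod.swap ((0:ℕ), (0:ℕ)) = ((0:ℕ), (0:ℕ)) := rfl
    rw [this]
    linarith
  rw [Summable.tsum_add hFs hFswap, Summable.tsum_add hHs hHswap, eqswapF, eqswapH] at main
  linarith

set_option maxHeartbeats 1000000 in
/-- For `0 < θ₁ < θ₂` and `y > 0`: `Ψ₂(θ₁)Φ'(θ₂) > Ψ₂(θ₂)Φ'(θ₁)`, in the explicit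
series form
`Σ_n 2/(n+θ₁)³ · Σ_m 2(m+θ₂)/((m+θ₂)²+y²)² > Σ_n 2/(n+θ₂)³ · Σ_m 2(m+θ₁)/((m+θ₁)²+y²)²`. -/
theorem tetragamma_phi_cross_inequality (θ₁ θ₂ y : ℝ)
    (h₁ : 0 < θ₁) (h₁₂ : θ₁ < θ₂) (hy : 0 < y) :
    (∑' n : ℕ, 2 / ((n:ℝ) + θ₂) ^ 3)
        * ∑' m : ℕ, 2 * ((m:ℝ) + θ₁) / ((((m:ℝ) + θ₁) ^ 2 + y ^ 2) ^ 2)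
      < (∑' n : ℕ, 2 / ((n:ℝ) + θ₁) ^ 3)
        * ∑' m : ℕ, 2 * ((m:ℝ) + θ₂) / ((((m:ℝ) + θ₂) ^ 2 + y ^ 2) ^ 2) := by
  have hθ₂ : 0 < θ₂ := h₁.trans h₁₂
  have hf1 := summable_cube h₁
  have hf2 := summable_cube hθ₂
  have hg1 := summable_phi_s10 h₁ hy
  have hg2 := summable_phi_s10 hθ₂ hy
  rw [tsum_prod_mul hf2 hg1 (fun n => by positivity) (fun n => by positivity),
      tsum_prod_mul hf1 hg2 (fun n => by positivity) (fun n => by positivity)]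
  refine main_aux
    (hf2.mul_of_nonneg hg1 (fun n => by positivity) (fun n => by positivity))
    (hf1.mul_of_nonneg hg2 (fun n => by positivity) (fun n => by positivity))
    ?_ ?_
  · rintro ⟨n, m⟩
    exact key_pair (y := y) (a := (n:ℝ)+θ₁) (b := (m:ℝ)+θ₁)
      (A := (n:ℝ)+θ₂) (B := (m:ℝ)+θ₂) hy (by positivity) (by positivity)
      (by linarith) (by ring)
  · simp only [Nat.cast_zero, zero_add]
    exact key_strict hy h₁ h₁₂
end

section
/- For all a, b, θ > 0 and y > 0: (1/(θ²+y²) − 1/((θ+a)²+y²))·(1/(a+θ)² − 1/(a+b+θ)²) < (1/((θ+a)²+y²) − 1/((θ+a+b)²+y²))·(1/θ² − 1/(a+θ)²). Consequently Im[H'(θ+iy)] > 0 for y > 0, i.e. the vertical line through θ is steep-descent for Re[H]. -/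
lemma im_one_div (x y : ℝ) : (1 / ((x:ℂ) + (y:ℂ) * Complex.I)).im = -y / (x^2 + y^2) := by
  simp [one_div, Complex.inv_im, Complex.normSq_apply]
  ring_nf

set_option maxHeartbeats 1600000 in
/-- Steep descent of the vertical line through `θ` for `Re[H]` in the
Bernoulli-Exponential FPP model: the key inequality, together with its consequence
`Im[H'(θ+iy)] > 0` where
`H'(z) = τ(θ) + 1/z − 1/(a+z) + κ(θ)(1/(a+b+z) − 1/(a+z))`. -/
theorem HFPP_steep_descent_vertical (a b θ y : ℝ)
    (ha : 0 < a) (hb : 0 < b) (hθ : 0 < θ) (hy : 0 < y) :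
    (1 / (θ ^ 2 + y ^ 2) - 1 / ((θ + a) ^ 2 + y ^ 2))
          * (1 / (a + θ) ^ 2 - 1 / (a + b + θ) ^ 2)
        < (1 / ((θ + a) ^ 2 + y ^ 2) - 1 / ((θ + a + b) ^ 2 + y ^ 2))
          * (1 / θ ^ 2 - 1 / (a + θ) ^ 2) ∧
    0 < (((a * (a + b) / (θ ^ 2 * (2 * a + b + 2 * θ)) : ℝ) : ℂ)
          + 1 / ((θ:ℂ) + (y:ℂ) * Complex.I)
          - 1 / ((a:ℂ) + (θ:ℂ) + (y:ℂ) * Complex.I)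
          + (((1 / θ ^ 2 - 1 / (a + θ) ^ 2)
                / (1 / (a + θ) ^ 2 - 1 / (a + b + θ) ^ 2) : ℝ) : ℂ)
            * (1 / ((a:ℂ) + (b:ℂ) + (θ:ℂ) + (y:ℂ) * Complex.I)
                - 1 / ((a:ℂ) + (θ:ℂ) + (y:ℂ) * Complex.I))).im := by
  have hd1 : (0:ℝ) < θ^2 + y^2 := by positivity
  have hd2 : (0:ℝ) < (θ+a)^2 + y^2 := by positivity
  have hd3 : (0:ℝ) < (θ+a+b)^2 + y^2 := by positivity
  have hA : (0:ℝ) < (a+θ)^2 := by positivity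
  have hAB : (0:ℝ) < (a+b+θ)^2 := by positivity
  have hθ2 : (0:ℝ) < θ^2 := by positivity
  have key : θ^2 * ((θ+a+b)^2 + y^2) < (θ^2 + y^2) * (a+b+θ)^2 := by
    nlinarith [mul_pos (mul_pos hy hy) (mul_pos (add_pos ha hb) (add_pos (add_pos ha hb) (add_pos hθ hθ)))]
  have p1 : (0:ℝ) < (θ+a)^2 - θ^2 := by nlinarith
  have p2 : (0:ℝ) < (a+b+θ)^2 - (a+θ)^2 := by nlinarith
  have hC : (0:ℝ) < (((θ+a)^2 - θ^2) * ((a+b+θ)^2 - (a+θ)^2)) * (((θ+a)^2 + y^2) * (a+θ)^2) :=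
    mul_pos (mul_pos p1 p2) (mul_pos hd2 hA)
  have part1 : (1 / (θ ^ 2 + y ^ 2) - 1 / ((θ + a) ^ 2 + y ^ 2))
          * (1 / (a + θ) ^ 2 - 1 / (a + b + θ) ^ 2)
        < (1 / ((θ + a) ^ 2 + y ^ 2) - 1 / ((θ + a + b) ^ 2 + y ^ 2))
          * (1 / θ ^ 2 - 1 / (a + θ) ^ 2) := by
    rw [div_sub_div _ _ hd1.ne' (by positivity), div_sub_div _ _ hA.ne' hAB.ne',
        div_sub_div _ _ (by positivity) hd3.ne', div_sub_div _ _ hθ2.ne' hA.ne',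
        div_mul_div_comm, div_mul_div_comm,
        div_lt_div_iff₀ (by positivity) (by positivity)]
    nlinarith [mul_lt_mul_of_pos_left key hC]
  refine ⟨part1, ?_⟩
  have hQ : (0:ℝ) < 1/(a+θ)^2 - 1/(a+b+θ)^2 := by
    rw [sub_pos]
    apply one_div_lt_one_div_of_lt hA
    nlinarith
  have hk : (1/(θ^2+y^2) - 1/((θ+a)^2+y^2)) <
      ((1/θ^2 - 1/(a+θ)^2)/(1/(a+θ)^2 - 1/(a+b+θ)^2))
        * (1/((θ+a)^2+y^2) - 1/((θ+a+b)^2+y^2)) := by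
    rw [div_mul_eq_mul_div, lt_div_iff₀ hQ]
    nlinarith [part1]
  have hrw1 : (a:ℂ) + (θ:ℂ) + (y:ℂ)*Complex.I = ((a+θ:ℝ):ℂ) + (y:ℂ)*Complex.I := by
    push_cast; ring
  have hrw2 : (a:ℂ) + (b:ℂ) + (θ:ℂ) + (y:ℂ)*Complex.I = ((a+b+θ:ℝ):ℂ) + (y:ℂ)*Complex.I := by
    push_cast; ring
  rw [hrw1, hrw2]
  simp only [Complex.add_im, Complex.sub_im, Complex.ofReal_im, im_one_div,
    Complex.re_ofReal_mul, Complex.ofReal_im, Complex.mul_im, Complex.ofReal_re, zero_mul, add_zero]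
  rw [show ((a+θ)^2+y^2 : ℝ) = (θ+a)^2+y^2 from by ring,
      show ((a+b+θ)^2+y^2 : ℝ) = (θ+a+b)^2+y^2 from by ring]
  have h2 := mul_lt_mul_of_pos_left hk hy
  ring_nf at h2 ⊢
  linarith
end

section
/- Let X and Y generate an associative algebra over ℝ subject to the single relation YX = (1/(1+ν))XX + ((ν−1)/(1+ν))XY + (1/(1+ν))YY, for a parameter ν > 0. Then for all n ≥ 0 and p = (ν−μ)/ν with 0 < μ < ν: (pX + (1−p)Y)^n = Σ_{j=0}^n C(n,j) · (ν−μ)_j (μ)_{n−j}/(ν)_n · X^j Y^{n−j}. -/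
open Polynomial Finset

private lemma pochVander (a b : ℝ) : ∀ m : ℕ,
    ∑ j ∈ range (m + 1),
        (m.choose j : ℝ) * (ascPochhammer ℝ j).eval a * (ascPochhammer ℝ (m - j)).eval b
      = (ascPochhammer ℝ m).eval (a + b) := by
  intro m
  induction m with
  | zero => simp
  | succ m ih =>
    rw [ascPochhammer_succ_eval, ← ih, Finset.sum_mul]
    have hterm : ∀ j ∈ range (m + 1),
        (m.choose j : ℝ) * (ascPochhammer ℝ j).eval a * (ascPochhammer ℝ (m - j)).eval b
            * ((a + b) + m)
          = (m.choose j : ℝ) * (ascPochhammer ℝ (j + 1)).eval a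
              * (ascPochhammer ℝ (m - j)).eval b
            + (m.choose j : ℝ) * (ascPochhammer ℝ j).eval a
              * (ascPochhammer ℝ (m - j + 1)).eval b := by
      intro j hj
      rw [mem_range, Nat.lt_succ_iff] at hj
      have hj' : ((m - j : ℕ) : ℝ) = (m : ℝ) - (j : ℝ) := by
        rw [Nat.cast_sub hj]
      rw [ascPochhammer_succ_eval, ascPochhammer_succ_eval, hj']
      ring
    rw [Finset.sum_congr rfl hterm, Finset.sum_add_distrib]
    have hsub : ∀ j ∈ range (m + 1),
        (m.choose j : ℝ) * (ascPochhammer ℝ j).eval a * (ascPochhammer ℝ (m - j + 1)).eval b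
          = (m.choose j : ℝ) * (ascPochhammer ℝ j).eval a
              * (ascPochhammer ℝ (m + 1 - j)).eval b := by
      intro j hj
      rw [mem_range, Nat.lt_succ_iff] at hj
      rw [Nat.succ_sub hj]
    rw [Finset.sum_congr rfl hsub]
    rw [Finset.sum_range_succ' (fun j => ((m + 1).choose j : ℝ) * (ascPochhammer ℝ j).eval a
          * (ascPochhammer ℝ (m + 1 - j)).eval b)]
    simp only [Nat.succ_sub_succ, Nat.choose_succ_succ m, Nat.cast_add, Nat.choose_zero_right,
      Nat.cast_one, one_mul, Nat.sub_zero, add_mul]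
    rw [Finset.sum_add_distrib]
    rw [Finset.sum_range_succ' (fun j => (m.choose j : ℝ) * (ascPochhammer ℝ j).eval a
          * (ascPochhammer ℝ (m + 1 - j)).eval b)]
    rw [Finset.sum_range_succ (fun j => (m.choose (j + 1) : ℝ) * (ascPochhammer ℝ (j + 1)).eval a
          * (ascPochhammer ℝ (m - j)).eval b)]
    simp only [Nat.succ_sub_succ, Nat.choose_succ_self, Nat.cast_zero, zero_mul, add_zero,
      Nat.choose_zero_right, Nat.cast_one, one_mul, Nat.sub_zero]
    simp [ascPochhammer_zero, eval_one]
    ring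

private lemma key_expand {R : Type*} [Ring R] [Algebra ℝ R] (ν : ℝ) (hν : ν ≠ 0)
    (X D : R) (hDX : D * X = X * D + ν⁻¹ • (D * D)) (t : ℝ) :
    ∀ m : ℕ, (X + (t / ν) • D) ^ m
      = ∑ k ∈ range (m + 1),
          ((m.choose k : ℝ) * (ascPochhammer ℝ k).eval t / ν ^ k) • (X ^ (m - k) * D ^ k) := by
  have hDpow : ∀ k : ℕ, D ^ k * X = X * D ^ k + ((k : ℝ) / ν) • D ^ (k + 1) := by
    intro k
    induction k with
    | zero => simp
    | succ k ih =>
      have h1 : D ^ (k + 1) * X = D ^ k * (D * X) := by rw [pow_succ, mul_assoc]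
      rw [h1, hDX, mul_add, ← mul_assoc, ih, add_mul, smul_mul_assoc, mul_smul_comm,
        mul_assoc, ← pow_succ, ← pow_succ,
        show D ^ k * (D * D) = D ^ (k + 2) by rw [← mul_assoc, ← pow_succ, ← pow_succ],
        add_assoc, ← add_smul]
      congr 2
      push_cast
      field_simp
  intro m
  induction m with
  | zero => simp
  | succ m ih =>
    rw [pow_succ, ih, Finset.sum_mul]
    have hterm : ∀ k ∈ range (m + 1),
        (((m.choose k : ℝ) * (ascPochhammer ℝ k).eval t / ν ^ k) • (X ^ (m - k) * D ^ k))
            * (X + (t / ν) • D)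
          = ((m.choose k : ℝ) * (ascPochhammer ℝ k).eval t / ν ^ k)
                • (X ^ (m + 1 - k) * D ^ k)
            + ((m.choose k : ℝ) * (ascPochhammer ℝ (k + 1)).eval t / ν ^ (k + 1))
                • (X ^ (m - k) * D ^ (k + 1)) := by
      intro k hk
      rw [mem_range, Nat.lt_succ_iff] at hk
      have eW : X ^ (m - k) * D ^ k * X
          = X ^ (m + 1 - k) * D ^ k + ((k : ℝ) / ν) • (X ^ (m - k) * D ^ (k + 1)) := by
        rw [mul_assoc, hDpow, mul_add, mul_smul_comm, ← mul_assoc, ← pow_succ,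
          Nat.succ_sub hk]
      have eD : X ^ (m - k) * D ^ k * ((t / ν) • D)
          = (t / ν) • (X ^ (m - k) * D ^ (k + 1)) := by
        rw [mul_smul_comm, mul_assoc, ← pow_succ]
      rw [smul_mul_assoc, mul_add, eW, eD, smul_add, smul_add, smul_smul, smul_smul,
        add_assoc, ← add_smul]
      congr 2
      rw [ascPochhammer_succ_eval]
      field_simp
      ring
    rw [Finset.sum_congr rfl hterm, Finset.sum_add_distrib]
    rw [Finset.sum_range_succ' (fun k => (((m + 1).choose k : ℝ) * (ascPochhammer ℝ k).eval t
          / ν ^ k) • (X ^ (m + 1 - k) * D ^ k))]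
    have hsplit : ∀ k ∈ range (m + 1),
        (((m + 1).choose (k + 1) : ℝ) * (ascPochhammer ℝ (k + 1)).eval t / ν ^ (k + 1))
            • (X ^ (m + 1 - (k + 1)) * D ^ (k + 1))
          = ((m.choose (k + 1) : ℝ) * (ascPochhammer ℝ (k + 1)).eval t / ν ^ (k + 1))
                • (X ^ (m - k) * D ^ (k + 1))
            + ((m.choose k : ℝ) * (ascPochhammer ℝ (k + 1)).eval t / ν ^ (k + 1))
                • (X ^ (m - k) * D ^ (k + 1)) := by
      intro k hk
      rw [Nat.succ_sub_succ, ← add_smul]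
      congr 1
      push_cast [Nat.choose_succ_succ']
      ring
    rw [Finset.sum_congr rfl hsplit, Finset.sum_add_distrib]
    rw [Finset.sum_range_succ (fun k => ((m.choose (k + 1) : ℝ)
          * (ascPochhammer ℝ (k + 1)).eval t / ν ^ (k + 1)) • (X ^ (m - k) * D ^ (k + 1)))]
    rw [Finset.sum_range_succ' (fun k => ((m.choose k : ℝ) * (ascPochhammer ℝ k).eval t
          / ν ^ k) • (X ^ (m + 1 - k) * D ^ k))]
    simp only [Nat.succ_sub_succ, Nat.choose_succ_self, Nat.cast_zero, zero_mul, zero_div,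
      zero_smul, add_zero, Nat.choose_zero_right, Nat.cast_one, one_mul, Nat.sub_zero,
      pow_zero, mul_one, div_one, ascPochhammer_zero, eval_one]
    abel

private lemma poch_split (x : ℝ) (i m : ℕ) (h : i ≤ m) :
    (ascPochhammer ℝ m).eval x
      = (ascPochhammer ℝ i).eval x * (ascPochhammer ℝ (m - i)).eval (x + i) := by
  have h2 := ascPochhammer_mul (S := ℝ) i (m - i)
  rw [Nat.add_sub_cancel' h] at h2
  rw [← h2, eval_mul, eval_comp]
  simp

private lemma coeff_claim (μ ν : ℝ) (hν : 0 < ν) (n i : ℕ) (hi : i ≤ n) :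
    ∑ j ∈ range (n + 1),
        ((n.choose j : ℝ) * ((ascPochhammer ℝ j).eval (ν - μ) * (ascPochhammer ℝ (n - j)).eval μ)
            / (ascPochhammer ℝ n).eval ν)
          * (((n - j).choose i : ℝ) * (ascPochhammer ℝ i).eval ν / ν ^ i)
      = (n.choose i : ℝ) * (ascPochhammer ℝ i).eval μ / ν ^ i := by
  have hν0 : ν ≠ 0 := ne_of_gt hν
  have hvn : (0 : ℝ) < (ascPochhammer ℝ n).eval ν := ascPochhammer_pos n ν hν
  have hvi : (0 : ℝ) < (ascPochhammer ℝ i).eval ν := ascPochhammer_pos i ν hν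
  have hvni : (0 : ℝ) < (ascPochhammer ℝ (n - i)).eval (ν + i) :=
    ascPochhammer_pos _ _ (by positivity)
  have htrunc := Finset.sum_subset (f := fun j =>
      ((n.choose j : ℝ) * ((ascPochhammer ℝ j).eval (ν - μ) * (ascPochhammer ℝ (n - j)).eval μ)
            / (ascPochhammer ℝ n).eval ν)
          * (((n - j).choose i : ℝ) * (ascPochhammer ℝ i).eval ν / ν ^ i))
    (Finset.range_subset_range.mpr (show n - i + 1 ≤ n + 1 by omega))
    (by
      intro j hj hnj
      rw [mem_range] at hj hnj
      push_neg at hnj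
      simp [Nat.choose_eq_zero_of_lt (show n - j < i by omega)])
  rw [← htrunc]
  have hper : ∀ j ∈ range (n - i + 1),
      ((n.choose j : ℝ) * ((ascPochhammer ℝ j).eval (ν - μ) * (ascPochhammer ℝ (n - j)).eval μ)
            / (ascPochhammer ℝ n).eval ν)
          * (((n - j).choose i : ℝ) * (ascPochhammer ℝ i).eval ν / ν ^ i)
        = ((n.choose i : ℝ) * (ascPochhammer ℝ i).eval μ * (ascPochhammer ℝ i).eval ν
              / ((ascPochhammer ℝ n).eval ν * ν ^ i))
            * (((n - i).choose j : ℝ) * (ascPochhammer ℝ j).eval (ν - μ)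
                * (ascPochhammer ℝ (n - i - j)).eval (μ + i)) := by
    intro j hj
    rw [mem_range, Nat.lt_succ_iff] at hj
    have hch : (n.choose j : ℝ) * ((n - j).choose i : ℝ)
        = (n.choose i : ℝ) * ((n - i).choose j : ℝ) := by
      have h1 : n.choose (n - j) * (n - j).choose i
          = n.choose i * (n - i).choose (n - j - i) :=
        Nat.choose_mul (by omega)
      rw [Nat.choose_symm (by omega : j ≤ n)] at h1
      rw [show n - j - i = (n - i) - j by omega, Nat.choose_symm (by omega : j ≤ n - i)] at h1
      exact_mod_cast congrArg (Nat.cast : ℕ → ℝ) h1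
    have hμs : (ascPochhammer ℝ (n - j)).eval μ
        = (ascPochhammer ℝ i).eval μ * (ascPochhammer ℝ (n - i - j)).eval (μ + i) := by
      rw [poch_split μ i (n - j) (by omega), show n - j - i = n - i - j by omega]
    rw [hμs]
    linear_combination ((ascPochhammer ℝ j).eval (ν - μ) * (ascPochhammer ℝ i).eval μ
        * (ascPochhammer ℝ (n - i - j)).eval (μ + i) * (ascPochhammer ℝ i).eval ν
        / ((ascPochhammer ℝ n).eval ν * ν ^ i)) * hch
  rw [Finset.sum_congr rfl hper, ← Finset.mul_sum, pochVander]
  rw [show ν - μ + (μ + i) = ν + i by ring]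
  rw [poch_split ν i n hi]
  field_simp

/-- Non-commutative binomial identity (q → 1 degeneration of Povolotsky's theorem):
if `YX = 1/(1+ν)·XX + (ν−1)/(1+ν)·XY + 1/(1+ν)·YY`, then with `p = (ν−μ)/ν`,
`(pX + (1−p)Y)^n = Σ_j C(n,j) (ν−μ)_j (μ)_{n−j}/(ν)_n · X^j Y^{n−j}`. -/
theorem noncommutative_beta_binomial {R : Type*} [Ring R] [Algebra ℝ R]
    (μ ν : ℝ) (hμ : 0 < μ) (hμν : μ < ν) (X Y : R)
    (hrel : Y * X = (1 / (1 + ν)) • (X * X) + ((ν - 1) / (1 + ν)) • (X * Y)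
      + (1 / (1 + ν)) • (Y * Y)) (n : ℕ) :
    (((ν - μ) / ν) • X + (1 - (ν - μ) / ν) • Y) ^ n
      = ∑ j ∈ range (n + 1),
          ((n.choose j : ℝ)
              * ((ascPochhammer ℝ j).eval (ν - μ) * (ascPochhammer ℝ (n - j)).eval μ)
              / (ascPochhammer ℝ n).eval ν) • (X ^ j * Y ^ (n - j)) := by
  have hν : (0 : ℝ) < ν := hμ.trans hμν
  have hν0 : ν ≠ 0 := ne_of_gt hν
  have h1 : (1 + ν) • (Y * X) = X * X + (ν - 1) • (X * Y) + Y * Y := by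
    have hν1 : (1 : ℝ) + ν ≠ 0 := by positivity
    have e1 : (1 + ν) * (1 / (1 + ν)) = 1 := by field_simp
    have e2 : (1 + ν) * ((ν - 1) / (1 + ν)) = ν - 1 := by field_simp
    rw [hrel, smul_add, smul_add, smul_smul, smul_smul, smul_smul, e1, e2]
    simp
  have hDX2 : ν • ((Y - X) * X) = ν • (X * (Y - X)) + (Y - X) * (Y - X) := by
    simp only [sub_mul, mul_sub, smul_sub]
    linear_combination (norm := module) h1
  have hDX : (Y - X) * X = X * (Y - X) + ν⁻¹ • ((Y - X) * (Y - X)) := by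
    have h2 := congrArg (fun z => ν⁻¹ • z) hDX2
    simpa [smul_smul, inv_mul_cancel₀ hν0, smul_add] using h2
  have hkey := key_expand ν hν0 X (Y - X) hDX
  have hc : (ν - μ) / ν = 1 - μ / ν := by field_simp
  have hc2 : 1 - (ν - μ) / ν = μ / ν := by rw [hc]; ring
  have hZ : ((ν - μ) / ν) • X + (1 - (ν - μ) / ν) • Y = X + (μ / ν) • (Y - X) := by
    rw [hc2, hc]
    module
  have hY : X + (ν / ν) • (Y - X) = Y := by
    rw [div_self hν0, one_smul]; abel
  rw [hZ, hkey μ n]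
  have hstep : ∀ j, j ≤ n → X ^ j * Y ^ (n - j)
      = ∑ i ∈ range (n + 1),
          (((n - j).choose i : ℝ) * (ascPochhammer ℝ i).eval ν / ν ^ i)
            • (X ^ (n - i) * (Y - X) ^ i) := by
    intro j hj
    have hYpow : Y ^ (n - j) = ∑ k ∈ range (n - j + 1),
        (((n - j).choose k : ℝ) * (ascPochhammer ℝ k).eval ν / ν ^ k)
          • (X ^ (n - j - k) * (Y - X) ^ k) := by
      conv_lhs => rw [← hY]
      rw [hkey ν (n - j)]
    rw [hYpow, Finset.mul_sum]
    have hinner : ∀ i ∈ range (n - j + 1),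
        X ^ j * ((((n - j).choose i : ℝ) * (ascPochhammer ℝ i).eval ν / ν ^ i)
            • (X ^ (n - j - i) * (Y - X) ^ i))
          = (((n - j).choose i : ℝ) * (ascPochhammer ℝ i).eval ν / ν ^ i)
              • (X ^ (n - i) * (Y - X) ^ i) := by
      intro i hi
      rw [mem_range, Nat.lt_succ_iff] at hi
      rw [mul_smul_comm, ← mul_assoc, ← pow_add, show j + (n - j - i) = n - i by omega]
    rw [Finset.sum_congr rfl hinner]
    apply Finset.sum_subset (Finset.range_subset_range.mpr (show n - j + 1 ≤ n + 1 by omega))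
    intro i hi hni
    rw [mem_range] at hi hni
    push_neg at hni
    rw [Nat.choose_eq_zero_of_lt (by omega)]
    simp
  have hmain : ∀ j ∈ range (n + 1),
      ((n.choose j : ℝ)
          * ((ascPochhammer ℝ j).eval (ν - μ) * (ascPochhammer ℝ (n - j)).eval μ)
          / (ascPochhammer ℝ n).eval ν) • (X ^ j * Y ^ (n - j))
        = ∑ i ∈ range (n + 1),
            (((n.choose j : ℝ)
                * ((ascPochhammer ℝ j).eval (ν - μ) * (ascPochhammer ℝ (n - j)).eval μ)
                / (ascPochhammer ℝ n).eval ν)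
              * (((n - j).choose i : ℝ) * (ascPochhammer ℝ i).eval ν / ν ^ i))
              • (X ^ (n - i) * (Y - X) ^ i) := by
    intro j hj
    rw [mem_range, Nat.lt_succ_iff] at hj
    rw [hstep j hj, Finset.smul_sum]
    simp only [smul_smul]
  rw [Finset.sum_congr rfl hmain, Finset.sum_comm]
  refine Finset.sum_congr rfl fun i hi => ?_
  rw [mem_range, Nat.lt_succ_iff] at hi
  rw [← Finset.sum_smul, coeff_claim μ ν hν n i hi]
end

section
/- Let X_t^{(1)}, X_t^{(2)} be two independent Beta(α,β) random walks in a common space-time i.i.d. environment, and let E denote expectation over both environment and walks. Then E[X_t^{(1)} X_t^{(2)}] = (t(α−β)/(α+β))² + (4αβ / ((α+β)²(α+β+1))) · Σ_{s=0}^{t−1} P(X_s^{(1)} = X_s^{(2)}). -/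
open MeasureTheory ProbabilityTheory
open scoped ENNReal NNReal
set_option linter.unusedSectionVars false
set_option maxHeartbeats 1000000


/-- The Beta(a,b) probability measure on ℝ, with density
`x^{a−1}(1−x)^{b−1} Γ(a+b)/(Γ(a)Γ(b))` on `(0,1)`. -/
noncomputable def betaMeasure (a b : ℝ) : Measure ℝ :=
  volume.withDensity fun x =>
    ENNReal.ofReal
      (if x ∈ Set.Ioo (0:ℝ) 1 then
        x ^ (a - 1) * (1 - x) ^ (b - 1) * (Real.Gamma (a + b) / (Real.Gamma a * Real.Gamma b))
      else 0)

lemma real_beta_integral {a b : ℝ} (ha : 0 < a) (hb : 0 < b) :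
    ∫ x in (0:ℝ)..1, x ^ (a-1) * (1-x) ^ (b-1)
      = Real.Gamma a * Real.Gamma b / Real.Gamma (a+b) := by
  have h1 : Complex.betaIntegral a b
      = ((∫ x in (0:ℝ)..1, x ^ (a-1) * (1-x) ^ (b-1) : ℝ) : ℂ) := by
    rw [Complex.betaIntegral, ← intervalIntegral.integral_ofReal]
    apply intervalIntegral.integral_congr
    intro x hx
    rw [Set.uIcc_of_le zero_le_one] at hx
    simp only []
    rw [Complex.ofReal_mul, Complex.ofReal_cpow hx.1 (a-1), Complex.ofReal_cpow (by linarith [hx.2] : (0:ℝ) ≤ 1 - x) (b-1)]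
    push_cast
    ring
  have h2 := Complex.Gamma_mul_Gamma_eq_betaIntegral
    (s := (a:ℂ)) (t := (b:ℂ)) (by simpa using ha) (by simpa using hb)
  rw [h1, ← Complex.ofReal_add, Complex.Gamma_ofReal, Complex.Gamma_ofReal,
    Complex.Gamma_ofReal, ← Complex.ofReal_mul, ← Complex.ofReal_mul] at h2
  have h3 : Real.Gamma a * Real.Gamma b
      = Real.Gamma (a+b) * ∫ x in (0:ℝ)..1, x ^ (a-1) * (1-x) ^ (b-1) := by
    exact_mod_cast h2
  have h4 : Real.Gamma (a+b) ≠ 0 := (Real.Gamma_pos_of_pos (by linarith)).ne'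
  field_simp [h3]
  rw [h3]; ring

section betaAux
variable {a b : ℝ}

noncomputable def betaDens (a b : ℝ) : ℝ → ℝ := fun x =>
  if x ∈ Set.Ioo (0:ℝ) 1 then
    x ^ (a - 1) * (1 - x) ^ (b - 1) * (Real.Gamma (a + b) / (Real.Gamma a * Real.Gamma b))
  else 0

lemma betaDens_nonneg (ha : 0 < a) (hb : 0 < b) (x : ℝ) : 0 ≤ betaDens a b x := by
  unfold betaDens
  split_ifs with h
  · have h1 : (0:ℝ) ≤ x ^ (a-1) := Real.rpow_nonneg h.1.le _
    have h2 : (0:ℝ) ≤ (1-x) ^ (b-1) := Real.rpow_nonneg (by linarith [h.2]) _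
    have h3 : (0:ℝ) ≤ Real.Gamma (a+b) / (Real.Gamma a * Real.Gamma b) :=
      div_nonneg (Real.Gamma_pos_of_pos (by linarith)).le
        (mul_nonneg (Real.Gamma_pos_of_pos ha).le (Real.Gamma_pos_of_pos hb).le)
    positivity
  · exact le_refl 0

lemma betaDens_measurable : Measurable (betaDens a b) := by
  unfold betaDens
  apply Measurable.ite measurableSet_Ioo _ measurable_const
  fun_prop

lemma betaMeasure_eq : _root_.betaMeasure a b
    = volume.withDensity fun x => ENNReal.ofReal (betaDens a b x) := rfl

lemma betaMeasure_ae_Ioo : ∀ᵐ x ∂(_root_.betaMeasure a b), x ∈ Set.Ioo (0:ℝ) 1 := by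
  rw [ae_iff, betaMeasure_eq]
  have hset : {x | ¬ x ∈ Set.Ioo (0:ℝ) 1} = (Set.Ioo (0:ℝ) 1)ᶜ := rfl
  rw [hset, withDensity_apply _ measurableSet_Ioo.compl]
  have : ∀ x ∈ (Set.Ioo (0:ℝ) 1)ᶜ, ENNReal.ofReal (betaDens a b x) = 0 := by
    intro x hx
    rw [Set.mem_compl_iff] at hx
    simp [betaDens, hx]
  calc ∫⁻ x in (Set.Ioo (0:ℝ) 1)ᶜ, ENNReal.ofReal (betaDens a b x) ∂volume
      = ∫⁻ _ in (Set.Ioo (0:ℝ) 1)ᶜ, 0 ∂volume := by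
        apply setLIntegral_congr_fun measurableSet_Ioo.compl
        exact fun x hx => this x hx
    _ = 0 := by simp

lemma betaMeasure_integral_pow (ha : 0 < a) (hb : 0 < b) (n : ℕ) :
    ∫ x, x ^ n ∂(_root_.betaMeasure a b)
      = (Real.Gamma (a+b) / (Real.Gamma a * Real.Gamma b))
        * (Real.Gamma (a+n) * Real.Gamma b / Real.Gamma (a+n+b)) := by
  set C := Real.Gamma (a+b) / (Real.Gamma a * Real.Gamma b) with hC
  have hrw : _root_.betaMeasure a b
      = volume.withDensity fun x => ((betaDens a b x).toNNReal : ℝ≥0∞) := rfl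
  rw [hrw, integral_withDensity_eq_integral_smul
    (by exact betaDens_measurable.real_toNNReal) (fun x => x ^ n)]
  have key : (fun x => (betaDens a b x).toNNReal • x ^ n)
      = Set.indicator (Set.Ioo (0:ℝ) 1)
          (fun x => C * (x ^ (a + n - 1) * (1-x) ^ (b-1))) := by
    funext x
    rw [NNReal.smul_def, Real.coe_toNNReal _ (betaDens_nonneg ha hb x)]
    by_cases hx : x ∈ Set.Ioo (0:ℝ) 1
    · rw [Set.indicator_of_mem hx]
      simp only [betaDens, if_pos hx, smul_eq_mul]
      have : x ^ (a + n - 1) = x ^ (a-1) * x ^ n := by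
        rw [← Real.rpow_natCast x n, ← Real.rpow_add hx.1]
        ring_nf
      rw [this]; ring
    · rw [Set.indicator_of_notMem hx]
      simp [betaDens, hx]
  rw [key, integral_indicator measurableSet_Ioo, ← integral_Ioc_eq_integral_Ioo,
    ← intervalIntegral.integral_of_le zero_le_one, intervalIntegral.integral_const_mul,
    real_beta_integral (by positivity) hb]
end betaAux

lemma betaMeasure_mean {a b : ℝ} (ha : 0 < a) (hb : 0 < b) :
    ∫ x, x ∂(_root_.betaMeasure a b) = a / (a+b) := by
  have h := betaMeasure_integral_pow ha hb 1
  simp only [pow_one, Nat.cast_one] at h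
  rw [h]
  have e1 : Real.Gamma (a+1) = a * Real.Gamma a := Real.Gamma_add_one ha.ne'
  have e2 : Real.Gamma (a+1+b) = (a+b) * Real.Gamma (a+b) := by
    rw [show a+1+b = (a+b)+1 by ring, Real.Gamma_add_one (by positivity)]
  have p1 := Real.Gamma_pos_of_pos ha
  have p2 := Real.Gamma_pos_of_pos hb
  have p3 := Real.Gamma_pos_of_pos (show (0:ℝ) < a + b by positivity)
  rw [e1, e2]
  field_simp

lemma betaMeasure_m2 {a b : ℝ} (ha : 0 < a) (hb : 0 < b) :
    ∫ x, x^2 ∂(_root_.betaMeasure a b) = a * (a+1) / ((a+b) * (a+b+1)) := by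
  have h := betaMeasure_integral_pow ha hb 2
  simp only [Nat.cast_ofNat] at h
  rw [h]
  have e1 : Real.Gamma (a+2) = (a+1) * (a * Real.Gamma a) := by
    rw [show a+2 = (a+1)+1 by ring, Real.Gamma_add_one (by positivity),
      Real.Gamma_add_one ha.ne']
  have e2 : Real.Gamma (a+2+b) = (a+b+1) * ((a+b) * Real.Gamma (a+b)) := by
    rw [show a+2+b = ((a+b)+1)+1 by ring, Real.Gamma_add_one (by positivity),
      Real.Gamma_add_one (by positivity)]
  have p1 := Real.Gamma_pos_of_pos ha
  have p2 := Real.Gamma_pos_of_pos hb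
  have p3 := Real.Gamma_pos_of_pos (show (0:ℝ) < a + b by positivity)
  rw [e1, e2]
  field_simp

section prob
variable {Ω : Type*} [MeasurableSpace Ω] (Pr : Measure Ω) [IsProbabilityMeasure Pr]
variable {α β : ℝ}

/-- Integrability of bounded measurable functions. -/
lemma integrable_of_bdd {f : Ω → ℝ} (hf : Measurable f) (C : ℝ) (h : ∀ ω, |f ω| ≤ C) :
    Integrable f Pr :=
  Integrable.mono' (integrable_const C) hf.aestronglyMeasurable
    (Filter.Eventually.of_forall (by simpa [Real.norm_eq_abs] using h))

lemma prob_lt_beta (hα : 0 < α) (hβ : 0 < β) {Bv Uv : Ω → ℝ}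
    (hB : Measurable Bv) (hU : Measurable Uv)
    (hBlaw : Measure.map Bv Pr = _root_.betaMeasure α β)
    (hUlaw : Measure.map Uv Pr = volume.restrict (Set.Ioo (0:ℝ) 1))
    (hind : IndepFun Bv Uv Pr) :
    Pr {ω | Uv ω < Bv ω} = ENNReal.ofReal (α/(α+β)) := by
  have hprob : IsProbabilityMeasure (_root_.betaMeasure α β) := by
    rw [← hBlaw]; exact Measure.isProbabilityMeasure_map hB.aemeasurable
  have hprod : Measure.map (fun ω => (Bv ω, Uv ω)) Pr
      = (_root_.betaMeasure α β).prod (volume.restrict (Set.Ioo (0:ℝ) 1)) := by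
    rw [← hBlaw, ← hUlaw]
    exact (indepFun_iff_map_prod_eq_prod_map_map hB.aemeasurable hU.aemeasurable).mp hind
  have hs : MeasurableSet {p : ℝ × ℝ | p.2 < p.1} :=
    measurableSet_lt measurable_snd measurable_fst
  have h1 : {ω | Uv ω < Bv ω} = (fun ω => (Bv ω, Uv ω)) ⁻¹' {p : ℝ × ℝ | p.2 < p.1} := rfl
  rw [h1, ← Measure.map_apply (hB.prodMk hU) hs, hprod, Measure.prod_apply hs]
  have h2 : ∀ᵐ x ∂(_root_.betaMeasure α β),
      (volume.restrict (Set.Ioo (0:ℝ) 1)) (Prod.mk x ⁻¹' {p : ℝ × ℝ | p.2 < p.1})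
        = ENNReal.ofReal x := by
    filter_upwards [betaMeasure_ae_Ioo] with x hx
    have : Prod.mk x ⁻¹' {p : ℝ × ℝ | p.2 < p.1} = Set.Iio x := rfl
    rw [this, Measure.restrict_apply measurableSet_Iio]
    have : Set.Iio x ∩ Set.Ioo (0:ℝ) 1 = Set.Ioo 0 x := by
      ext u
      simp only [Set.mem_inter_iff, Set.mem_Iio, Set.mem_Ioo]
      constructor
      · rintro ⟨h1, h2, h3⟩; exact ⟨h2, h1⟩
      · rintro ⟨h1, h2⟩; exact ⟨h2, h1, lt_trans h2 hx.2⟩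
    rw [this, Real.volume_Ioo, sub_zero]
  rw [lintegral_congr_ae h2, ← ofReal_integral_eq_lintegral_ofReal]
  · rw [betaMeasure_mean hα hβ]
  · refine Integrable.mono' (integrable_const 1) measurable_id.aestronglyMeasurable ?_
    filter_upwards [betaMeasure_ae_Ioo] with x hx
    rw [Real.norm_eq_abs, abs_of_pos hx.1]
    exact hx.2.le
  · filter_upwards [betaMeasure_ae_Ioo] with x hx using hx.1.le

lemma prob_lt_lt_beta (hα : 0 < α) (hβ : 0 < β) {Bv U0 U1 : Ω → ℝ}
    (hB : Measurable Bv) (hU0 : Measurable U0) (hU1 : Measurable U1)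
    (hBlaw : Measure.map Bv Pr = _root_.betaMeasure α β)
    (hU0law : Measure.map U0 Pr = volume.restrict (Set.Ioo (0:ℝ) 1))
    (hU1law : Measure.map U1 Pr = volume.restrict (Set.Ioo (0:ℝ) 1))
    (hindBU : IndepFun Bv (fun ω => (U0 ω, U1 ω)) Pr)
    
    (hindUU : IndepFun U0 U1 Pr) :
    Pr {ω | U0 ω < Bv ω ∧ U1 ω < Bv ω}
      = ENNReal.ofReal (α * (α+1) / ((α+β) * (α+β+1))) := by
  have hprob : IsProbabilityMeasure (_root_.betaMeasure α β) := by
    rw [← hBlaw]; exact Measure.isProbabilityMeasure_map hB.aemeasurable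
  set ν := volume.restrict (Set.Ioo (0:ℝ) 1) with hν
  have hUU : Measure.map (fun ω => (U0 ω, U1 ω)) Pr = ν.prod ν := by
    have h := (indepFun_iff_map_prod_eq_prod_map_map hU0.aemeasurable hU1.aemeasurable).mp hindUU
    rw [h, hU0law, hU1law]
  have hprod : Measure.map (fun ω => (Bv ω, (U0 ω, U1 ω))) Pr
      = (_root_.betaMeasure α β).prod (ν.prod ν) := by
    rw [← hBlaw, ← hUU]
    exact (indepFun_iff_map_prod_eq_prod_map_map hB.aemeasurable
      (hU0.prodMk hU1).aemeasurable).mp hindBU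
  have hs : MeasurableSet {p : ℝ × (ℝ × ℝ) | p.2.1 < p.1 ∧ p.2.2 < p.1} := by
    exact MeasurableSet.inter
      (measurableSet_lt (measurable_fst.comp measurable_snd) measurable_fst)
      (measurableSet_lt (measurable_snd.comp measurable_snd) measurable_fst)
  have h1 : {ω | U0 ω < Bv ω ∧ U1 ω < Bv ω}
      = (fun ω => (Bv ω, (U0 ω, U1 ω))) ⁻¹' {p : ℝ × (ℝ × ℝ) | p.2.1 < p.1 ∧ p.2.2 < p.1} := rfl
  rw [h1, ← Measure.map_apply (hB.prodMk (hU0.prodMk hU1)) hs, hprod,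
    Measure.prod_apply hs]
  have h2 : ∀ᵐ x ∂(_root_.betaMeasure α β),
      (ν.prod ν) (Prod.mk x ⁻¹' {p : ℝ × (ℝ × ℝ) | p.2.1 < p.1 ∧ p.2.2 < p.1})
        = ENNReal.ofReal (x^2) := by
    filter_upwards [betaMeasure_ae_Ioo] with x hx
    have hpre : Prod.mk x ⁻¹' {p : ℝ × (ℝ × ℝ) | p.2.1 < p.1 ∧ p.2.2 < p.1}
        = Set.Iio x ×ˢ Set.Iio x := rfl
    rw [hpre, Measure.prod_prod, hν, Measure.restrict_apply measurableSet_Iio]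
    have : Set.Iio x ∩ Set.Ioo (0:ℝ) 1 = Set.Ioo 0 x := by
      ext u
      simp only [Set.mem_inter_iff, Set.mem_Iio, Set.mem_Ioo]
      constructor
      · rintro ⟨h1, h2, h3⟩; exact ⟨h2, h1⟩
      · rintro ⟨h1, h2⟩; exact ⟨h2, h1, lt_trans h2 hx.2⟩
    rw [this, Real.volume_Ioo, sub_zero, ← ENNReal.ofReal_mul hx.1.le, ← sq]
  rw [lintegral_congr_ae h2, ← ofReal_integral_eq_lintegral_ofReal]
  · rw [betaMeasure_m2 hα hβ]
  · refine Integrable.mono' (integrable_const 1)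
      (measurable_id.pow_const 2).aestronglyMeasurable ?_
    filter_upwards [betaMeasure_ae_Ioo] with x hx
    rw [Real.norm_eq_abs, abs_of_nonneg (sq_nonneg x)]
    nlinarith [hx.1, hx.2]
  · filter_upwards [betaMeasure_ae_Ioo] with x hx using by positivity

lemma integral_pm {f : Ω → ℝ} {A : Set Ω} (hA : MeasurableSet A)
    (h1 : ∀ ω ∈ A, f ω = 1) (h2 : ∀ ω ∉ A, f ω = -1) :
    ∫ ω, f ω ∂Pr = 2 * (Pr A).toReal - 1 := by
  have h : f = fun ω => 2 * Set.indicator A (fun _ => (1:ℝ)) ω - 1 := by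
    funext ω
    by_cases h : ω ∈ A
    · rw [h1 ω h, Set.indicator_of_mem h]; norm_num
    · rw [h2 ω h, Set.indicator_of_notMem h]; norm_num
  have i2 : Integrable (fun ω => 2 * Set.indicator A (fun _ => (1:ℝ)) ω) Pr :=
    ((integrable_const (1:ℝ)).indicator hA).const_mul 2
  rw [h]
  have e1 := integral_sub i2 (integrable_const (1:ℝ))
  simp only [Pi.sub_apply] at e1
  rw [e1, integral_const_mul]
  simp [integral_indicator_const (1:ℝ) hA, measureReal_def]

lemma integral_pm_mul {f g : Ω → ℝ} {A A' : Set Ω}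
    (hA : MeasurableSet A) (hA' : MeasurableSet A')
    (hf1 : ∀ ω ∈ A, f ω = 1) (hf2 : ∀ ω ∉ A, f ω = -1)
    (hg1 : ∀ ω ∈ A', g ω = 1) (hg2 : ∀ ω ∉ A', g ω = -1) :
    ∫ ω, f ω * g ω ∂Pr
      = 4 * (Pr (A ∩ A')).toReal - 2 * (Pr A).toReal - 2 * (Pr A').toReal + 1 := by
  have h : (fun ω => f ω * g ω)
      = fun ω => 4 * Set.indicator (A ∩ A') (fun _ => (1:ℝ)) ω
          - 2 * Set.indicator A (fun _ => (1:ℝ)) ω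
          - 2 * Set.indicator A' (fun _ => (1:ℝ)) ω + 1 := by
    funext ω
    by_cases h1 : ω ∈ A <;> by_cases h2 : ω ∈ A'
    · rw [hf1 ω h1, hg1 ω h2, Set.indicator_of_mem (Set.mem_inter h1 h2),
        Set.indicator_of_mem h1, Set.indicator_of_mem h2]; norm_num
    · rw [hf1 ω h1, hg2 ω h2, Set.indicator_of_notMem (fun h => h2 h.2),
        Set.indicator_of_mem h1, Set.indicator_of_notMem h2]; norm_num
    · rw [hf2 ω h1, hg1 ω h2, Set.indicator_of_notMem (fun h => h1 h.1),
        Set.indicator_of_notMem h1, Set.indicator_of_mem h2]; norm_num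
    · rw [hf2 ω h1, hg2 ω h2, Set.indicator_of_notMem (fun h => h1 h.1),
        Set.indicator_of_notMem h1, Set.indicator_of_notMem h2]; norm_num
  have i1 : Integrable (fun ω => 4 * Set.indicator (A ∩ A') (fun _ => (1:ℝ)) ω) Pr :=
    ((integrable_const (1:ℝ)).indicator (hA.inter hA')).const_mul 4
  have i2 : Integrable (fun ω => 2 * Set.indicator A (fun _ => (1:ℝ)) ω) Pr :=
    ((integrable_const (1:ℝ)).indicator hA).const_mul 2
  have i3 : Integrable (fun ω => 2 * Set.indicator A' (fun _ => (1:ℝ)) ω) Pr :=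
    ((integrable_const (1:ℝ)).indicator hA').const_mul 2
  rw [h]
  have e1 := integral_add ((i1.sub i2).sub i3) (integrable_const (1:ℝ))
  have e2 := integral_sub (i1.sub i2) i3
  have e3 := integral_sub i1 i2
  simp only [Pi.add_apply, Pi.sub_apply] at e1 e2 e3
  rw [e1, e2, e3, integral_const_mul, integral_const_mul, integral_const_mul]
  simp [integral_indicator_const (1:ℝ) hA, integral_indicator_const (1:ℝ) hA',
    integral_indicator_const (1:ℝ) (hA.inter hA'), measureReal_def]

lemma integral_ind {f : Ω → ℝ} {A : Set Ω} (hA : MeasurableSet A)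
    (h1 : ∀ ω ∈ A, f ω = 1) (h2 : ∀ ω ∉ A, f ω = 0) :
    ∫ ω, f ω ∂Pr = (Pr A).toReal := by
  have h : f = fun ω => Set.indicator A (fun _ => (1:ℝ)) ω := by
    funext ω
    by_cases h : ω ∈ A
    · rw [h1 ω h, Set.indicator_of_mem h]
    · rw [h2 ω h, Set.indicator_of_notMem h]
  rw [h]
  simp [integral_indicator_const (1:ℝ) hA, measureReal_def]

lemma sum_toReal_meas {κ : Type*} [MeasurableSpace κ] [MeasurableSingletonClass κ]
    {V : Ω → κ} (hV : Measurable V) (s : Finset κ) :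
    ∑ z ∈ s, (Pr (V ⁻¹' {z})).toReal = (Pr (V ⁻¹' ↑s)).toReal := by
  have h1 : V ⁻¹' ↑s = ⋃ z ∈ s, V ⁻¹' {z} := by ext ω; simp
  rw [h1, measure_biUnion_finset ?_ (fun z _ => hV (measurableSet_singleton z)),
    ENNReal.toReal_sum (fun z _ => measure_ne_top Pr _)]
  intro z _ y _ hzy
  exact Set.disjoint_iff.mpr (fun ω hω => hzy (by
    simp only [Set.mem_inter_iff, Set.mem_preimage, Set.mem_singleton_iff] at hω
    rw [← hω.1, hω.2]))
end prob

section machinery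
variable {Ω : Type*} [MeasurableSpace Ω] (Pr : Measure Ω) [IsProbabilityMeasure Pr]
variable (B : ℕ → ℤ → Ω → ℝ) (U : Fin 2 → ℕ → Ω → ℝ)

/-- index type -/
abbrev RWIdx := (ℕ × ℤ) ⊕ (Fin 2 × ℕ)

noncomputable def famF : RWIdx → Ω → ℝ :=
  Sum.elim (fun p : ℕ × ℤ => B p.1 p.2) (fun p : Fin 2 × ℕ => U p.1 p.2)

def pastSet (T : ℕ) : Set RWIdx :=
  {i | Sum.elim (fun p : ℕ × ℤ => p.1 < T) (fun q : Fin 2 × ℕ => q.2 < T) i}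

noncomputable def sigPast (T : ℕ) : MeasurableSpace Ω :=
  ⨆ i ∈ pastSet T, MeasurableSpace.comap (famF B U i) inferInstance

noncomputable def sigCur (T : ℕ) : MeasurableSpace Ω :=
  ⨆ i ∈ (pastSet T)ᶜ, MeasurableSpace.comap (famF B U i) inferInstance

variable {B U}
variable (hBmeas : ∀ s x, Measurable (B s x)) (hUmeas : ∀ i s, Measurable (U i s))
include hBmeas hUmeas
set_option linter.unusedSectionVars false

lemma famF_meas (i : RWIdx) : Measurable (famF B U i) := by
  cases i with
  | inl p => exact hBmeas p.1 p.2
  | inr q => exact hUmeas q.1 q.2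

lemma sigPast_le (T : ℕ) : sigPast B U T ≤ ‹MeasurableSpace Ω› :=
  iSup₂_le fun i _ => (famF_meas hBmeas hUmeas i).comap_le

lemma sigCur_le (T : ℕ) : sigCur B U T ≤ ‹MeasurableSpace Ω› :=
  iSup₂_le fun i _ => (famF_meas hBmeas hUmeas i).comap_le

lemma indep_past_cur
    (hindep : iIndepFun (m := fun _ : RWIdx => (inferInstance : MeasurableSpace ℝ))
      (famF B U) Pr) (T : ℕ) :
    Indep (sigPast B U T) (sigCur B U T) Pr :=
  indep_biSup_compl (fun i => (famF_meas hBmeas hUmeas i).comap_le) hindep.iIndep _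

lemma B_cur_meas (T : ℕ) (x : ℤ) : Measurable[sigCur B U T] (B T x) := by
  have hmem : (Sum.inl (T, x) : RWIdx) ∈ (pastSet T)ᶜ := by
    simp [pastSet]
  exact measurable_iff_comap_le.mpr
    (le_biSup (fun i => MeasurableSpace.comap (famF B U i) inferInstance) hmem)

lemma U_cur_meas (T : ℕ) (i : Fin 2) : Measurable[sigCur B U T] (U i T) := by
  have hmem : (Sum.inr (i, T) : RWIdx) ∈ (pastSet T)ᶜ := by
    simp [pastSet]
  exact measurable_iff_comap_le.mpr
    (le_biSup (fun i => MeasurableSpace.comap (famF B U i) inferInstance) hmem)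

lemma B_past_meas {s T : ℕ} (hs : s < T) (x : ℤ) : Measurable[sigPast B U T] (B s x) := by
  have hmem : (Sum.inl (s, x) : RWIdx) ∈ pastSet T := hs
  exact measurable_iff_comap_le.mpr
    (le_biSup (fun i => MeasurableSpace.comap (famF B U i) inferInstance) hmem)

lemma U_past_meas {s T : ℕ} (hs : s < T) (i : Fin 2) : Measurable[sigPast B U T] (U i s) := by
  have hmem : (Sum.inr (i, s) : RWIdx) ∈ pastSet T := hs
  exact measurable_iff_comap_le.mpr
    (le_biSup (fun i => MeasurableSpace.comap (famF B U i) inferInstance) hmem)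

variable {X : Fin 2 → ℕ → Ω → ℤ}
variable (hX0 : ∀ i ω, X i 0 ω = 0)
variable (hXrec : ∀ i s ω,
  X i (s + 1) ω = X i s ω + (if U i s ω < B s (X i s ω) ω then 1 else -1))
include hX0 hXrec

lemma X_past_meas (T : ℕ) (i : Fin 2) :
    ∀ s, s ≤ T → Measurable[sigPast B U T] (X i s) := by
  intro s
  induction s with
  | zero =>
    intro _
    have : X i 0 = fun _ => (0:ℤ) := funext (hX0 i)
    rw [this]; exact measurable_const
  | succ s ih =>
    intro hsT
    have hs : s < T := Nat.lt_of_succ_le hsT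
    have ihs := ih hs.le
    have hA : MeasurableSet[sigPast B U T] {ω | U i s ω < B s (X i s ω) ω} := by
      have : {ω | U i s ω < B s (X i s ω) ω}
          = ⋃ x : ℤ, ({ω | X i s ω = x} ∩ {ω | U i s ω < B s x ω}) := by
        ext ω
        simp only [Set.mem_setOf_eq, Set.mem_iUnion, Set.mem_inter_iff]
        constructor
        · intro h; exact ⟨X i s ω, rfl, h⟩
        · rintro ⟨x, rfl, h⟩; exact h
      rw [this]
      refine MeasurableSet.iUnion fun x => (ihs (measurableSet_singleton x)).inter ?_
      exact measurableSet_lt (U_past_meas hBmeas hUmeas hs i) (B_past_meas hBmeas hUmeas hs x)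
    have : X i (s+1) = fun ω => X i s ω + (if U i s ω < B s (X i s ω) ω then 1 else -1) :=
      funext (hXrec i s)
    rw [this]
    exact ihs.add (Measurable.ite hA measurable_const measurable_const)

lemma X_meas (i : Fin 2) (s : ℕ) : Measurable (X i s) :=
  (X_past_meas hBmeas hUmeas hX0 hXrec s i s le_rfl).mono (sigPast_le hBmeas hUmeas s) le_rfl

lemma stepSet_past_meas (T : ℕ) (i : Fin 2) :
    MeasurableSet[sigPast B U (T+1)] {ω | U i T ω < B T (X i T ω) ω} := by
  have hXm := X_past_meas hBmeas hUmeas hX0 hXrec (T+1) i T (Nat.le_succ T)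
  have : {ω | U i T ω < B T (X i T ω) ω}
      = ⋃ x : ℤ, ({ω | X i T ω = x} ∩ {ω | U i T ω < B T x ω}) := by
    ext ω
    simp only [Set.mem_setOf_eq, Set.mem_iUnion, Set.mem_inter_iff]
    constructor
    · intro h; exact ⟨X i T ω, rfl, h⟩
    · rintro ⟨x, rfl, h⟩; exact h
  rw [this]
  refine MeasurableSet.iUnion fun x => (hXm (measurableSet_singleton x)).inter ?_
  exact measurableSet_lt (U_past_meas hBmeas hUmeas (Nat.lt_succ_self T) i)
    (B_past_meas hBmeas hUmeas (Nat.lt_succ_self T) x)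

lemma X_bdd (i : Fin 2) : ∀ s ω, |X i s ω| ≤ (s:ℤ) := by
  intro s
  induction s with
  | zero => intro ω; simp [hX0 i ω]
  | succ s ih =>
    intro ω
    have h := abs_le.mp (ih ω)
    rw [hXrec i s ω]
    split_ifs <;> (apply abs_le.mpr; push_cast; omega)

omit hX0 hXrec in
lemma indepFun_of_past_cur
    (hindep : iIndepFun (m := fun _ : RWIdx => (inferInstance : MeasurableSpace ℝ))
      (famF B U) Pr) (T : ℕ) {f g : Ω → ℝ}
    (hf : Measurable[sigPast B U T] f) (hg : Measurable[sigCur B U T] g) :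
    IndepFun f g Pr := by
  rw [IndepFun_iff_Indep]
  exact indep_of_indep_of_le_right
    (indep_of_indep_of_le_left (indep_past_cur Pr hBmeas hUmeas hindep T)
      (measurable_iff_comap_le.mp hf))
    (measurable_iff_comap_le.mp hg)

end machinery


/-- Covariance formula for two independent Beta RWREs in a common space-time i.i.d.
Beta(α,β) environment `B`:
`E[X⁽¹⁾_t X⁽²⁾_t] = (t(α−β)/(α+β))² + (4αβ/((α+β)²(α+β+1))) Σ_{s<t} P(X⁽¹⁾_s = X⁽²⁾_s)`.
The walks are realized via auxiliary i.i.d. uniform variables `U i s`, jointly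
independent of the environment: `X i (s+1) = X i s + 1` if `U i s < B s (X i s)`,
and `X i (s+1) = X i s − 1` otherwise. -/
theorem beta_rwre_covariance {Ω : Type*} [MeasurableSpace Ω]
    (Pr : Measure Ω) [IsProbabilityMeasure Pr]
    (α β : ℝ) (hα : 0 < α) (hβ : 0 < β)
    (B : ℕ → ℤ → Ω → ℝ) (U : Fin 2 → ℕ → Ω → ℝ)
    (hBmeas : ∀ s x, Measurable (B s x)) (hUmeas : ∀ i s, Measurable (U i s))
    (hindep : iIndepFun (m := fun _ : (ℕ × ℤ) ⊕ (Fin 2 × ℕ) => (inferInstance : MeasurableSpace ℝ))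
      (Sum.elim (fun p : ℕ × ℤ => B p.1 p.2) (fun p : Fin 2 × ℕ => U p.1 p.2)) Pr)
    (hBlaw : ∀ s x, Measure.map (B s x) Pr = _root_.betaMeasure α β)
    (hUlaw : ∀ i s, Measure.map (U i s) Pr = volume.restrict (Set.Ioo (0:ℝ) 1))
    (X : Fin 2 → ℕ → Ω → ℤ)
    (hX0 : ∀ i ω, X i 0 ω = 0)
    (hXrec : ∀ i s ω,
      X i (s + 1) ω = X i s ω + (if U i s ω < B s (X i s ω) ω then 1 else -1))
    (t : ℕ) :
    ∫ ω, ((X 0 t ω : ℝ) * (X 1 t ω : ℝ)) ∂Pr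
      = ((t : ℝ) * (α - β) / (α + β)) ^ 2
        + 4 * α * β / ((α + β) ^ 2 * (α + β + 1))
          * ∑ s ∈ Finset.range t, (Pr {ω | X 0 s ω = X 1 s ω}).toReal := by
  have hAB : (0:ℝ) < α + β := by linarith
  have hAB1 : (0:ℝ) < α + β + 1 := by linarith
  set m : ℝ := (α - β)/(α + β) with hm
  set v : ℝ := 4*α*β/((α+β)^2*(α+β+1)) with hv
  set q : ℝ := α/(α+β) with hq
  set q2 : ℝ := α*(α+1)/((α+β)*(α+β+1)) with hq2
  have hF : iIndepFun (m := fun _ : RWIdx => (inferInstance : MeasurableSpace ℝ)) (famF B U) Pr :=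
    hindep
  have hFm : ∀ i, Measurable (famF B U i) := famF_meas hBmeas hUmeas
  have hXm : ∀ (i : Fin 2) s, Measurable (X i s) := fun i s =>
    X_meas hBmeas hUmeas hX0 hXrec i s
  have hXP : ∀ T (i : Fin 2) s, s ≤ T → Measurable[sigPast B U T] (X i s) := fun T i s h =>
    X_past_meas hBmeas hUmeas hX0 hXrec T i s h
  have hbdd : ∀ (i : Fin 2) s ω, |X i s ω| ≤ (s:ℤ) := fun i s ω =>
    X_bdd hBmeas hUmeas hX0 hXrec i s ω
  have hXin : ∀ (i : Fin 2) (T : ℕ) (ω : Ω), X i T ω ∈ Finset.Icc (-(T:ℤ)) (T:ℤ) := by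
    intro i T ω
    rw [Finset.mem_Icc]
    exact abs_le.mp (hbdd i T ω)
  -- probability of a step up
  have hprobq : ∀ (i : Fin 2) T x, Pr {ω | U i T ω < B T x ω} = ENNReal.ofReal q := by
    intro i T x
    exact prob_lt_beta Pr hα hβ (hBmeas T x) (hUmeas i T) (hBlaw T x) (hUlaw i T)
      (hF.indepFun (show (Sum.inl (T,x) : RWIdx) ≠ Sum.inr (i,T) by simp))
  have hq_nonneg : 0 ≤ q := by rw [hq]; positivity
  have hq_toReal : (ENNReal.ofReal q).toReal = q := ENNReal.toReal_ofReal hq_nonneg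
  -- expectation of a single sign
  have hsign : ∀ (i : Fin 2) T x,
      ∫ ω, (if U i T ω < B T x ω then (1:ℝ) else -1) ∂Pr = m := by
    intro i T x
    have h := integral_pm (f := fun ω => if U i T ω < B T x ω then (1:ℝ) else -1)
      (A := {ω | U i T ω < B T x ω}) Pr (measurableSet_lt (hUmeas i T) (hBmeas T x))
      (fun ω h => if_pos h) (fun ω h => if_neg h)
    rw [h, hprobq, hq_toReal, hq, hm]
    field_simp
    ring
  -- same site product
  have hsame : ∀ T x,
      ∫ ω, (if U 0 T ω < B T x ω then (1:ℝ) else -1)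
        * (if U 1 T ω < B T x ω then (1:ℝ) else -1) ∂Pr = m^2 + v := by
    intro T x
    have hBU : IndepFun (B T x) (fun ω => (U 0 T ω, U 1 T ω)) Pr :=
      (hF.indepFun_prodMk hFm (Sum.inr (0,T)) (Sum.inr (1,T)) (Sum.inl (T,x))
        (by simp) (by simp)).symm
    have hUU : IndepFun (U 0 T) (U 1 T) Pr :=
      hF.indepFun (show (Sum.inr ((0:Fin 2),T) : RWIdx) ≠ Sum.inr (1,T) by simp)
    have h := integral_pm_mul (f := fun ω => if U 0 T ω < B T x ω then (1:ℝ) else -1)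
      (g := fun ω => if U 1 T ω < B T x ω then (1:ℝ) else -1)
      (A := {ω | U 0 T ω < B T x ω}) (A' := {ω | U 1 T ω < B T x ω}) Pr
      (measurableSet_lt (hUmeas 0 T) (hBmeas T x))
      (measurableSet_lt (hUmeas 1 T) (hBmeas T x))
      (fun ω h => if_pos h) (fun ω h => if_neg h)
      (fun ω h => if_pos h) (fun ω h => if_neg h)
    rw [h]
    have hinter : {ω | U 0 T ω < B T x ω} ∩ {ω | U 1 T ω < B T x ω}
        = {ω | U 0 T ω < B T x ω ∧ U 1 T ω < B T x ω} := rfl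
    rw [hinter, prob_lt_lt_beta Pr hα hβ (hBmeas T x) (hUmeas 0 T) (hUmeas 1 T)
      (hBlaw T x) (hUlaw 0 T) (hUlaw 1 T) hBU hUU, hprobq 0, hprobq 1, hq_toReal,
      ENNReal.toReal_ofReal (by positivity), hq, hm, hv]
    field_simp
    ring
  -- different site product
  have hdiff : ∀ T x y, x ≠ y →
      ∫ ω, (if U 0 T ω < B T x ω then (1:ℝ) else -1)
        * (if U 1 T ω < B T y ω then (1:ℝ) else -1) ∂Pr = m^2 := by
    intro T x y hxy
    have hpair : IndepFun (fun ω => (B T x ω, U 0 T ω)) (fun ω => (B T y ω, U 1 T ω)) Pr :=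
      hF.indepFun_prodMk_prodMk hFm (Sum.inl (T,x)) (Sum.inr (0,T))
        (Sum.inl (T,y)) (Sum.inr (1,T)) (by simp [hxy]) (by simp) (by simp) (by simp)
    have hφ : Measurable (fun p : ℝ × ℝ => if p.2 < p.1 then (1:ℝ) else -1) :=
      Measurable.ite (measurableSet_lt measurable_snd measurable_fst)
        measurable_const measurable_const
    have hind := hpair.comp hφ hφ
    have int0 : Integrable (fun ω => if U 0 T ω < B T x ω then (1:ℝ) else -1) Pr := by
      refine integrable_of_bdd Pr (Measurable.ite (measurableSet_lt (hUmeas 0 T) (hBmeas T x))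
        measurable_const measurable_const) 1 ?_
      intro ω; split_ifs <;> simp
    have int1 : Integrable (fun ω => if U 1 T ω < B T y ω then (1:ℝ) else -1) Pr := by
      refine integrable_of_bdd Pr (Measurable.ite (measurableSet_lt (hUmeas 1 T) (hBmeas T y))
        measurable_const measurable_const) 1 ?_
      intro ω; split_ifs <;> simp
    have hmul := hind.integral_fun_mul_eq_mul_integral int0.aestronglyMeasurable int1.aestronglyMeasurable
    calc ∫ ω, (if U 0 T ω < B T x ω then (1:ℝ) else -1)
          * (if U 1 T ω < B T y ω then (1:ℝ) else -1) ∂Pr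
        = (∫ ω, (if U 0 T ω < B T x ω then (1:ℝ) else -1) ∂Pr)
          * ∫ ω, (if U 1 T ω < B T y ω then (1:ℝ) else -1) ∂Pr := hmul
      _ = m * m := by rw [hsign 0 T x, hsign 1 T y]
      _ = m^2 := (sq m).symm
  -- measurability and integrability scaffolding
  have hsmeas : ∀ (i : Fin 2) (T : ℕ),
      Measurable fun ω => (if U i T ω < B T (X i T ω) ω then (1:ℝ) else -1) := by
    intro i T
    have hset : MeasurableSet {ω | U i T ω < B T (X i T ω) ω} :=
      (sigPast_le hBmeas hUmeas (T+1)) _ (stepSet_past_meas hBmeas hUmeas hX0 hXrec T i)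
    exact Measurable.ite hset measurable_const measurable_const
  have hstep_bdd : ∀ (i : Fin 2) (T : ℕ) (ω : Ω),
      |if U i T ω < B T (X i T ω) ω then (1:ℝ) else -1| ≤ 1 := by
    intro i T ω; split_ifs <;> simp
  have hcast_meas : ∀ (j : Fin 2) (S : ℕ), Measurable (fun ω => ((X j S ω : ℤ):ℝ)) :=
    fun j S => (measurable_of_countable (fun z : ℤ => (z:ℝ))).comp (hXm j S)
  have hcast_bdd : ∀ (j : Fin 2) (S:ℕ) (ω : Ω), |((X j S ω : ℤ):ℝ)| ≤ (S:ℝ) := by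
    intro j S ω
    rw [← Int.cast_abs]
    exact_mod_cast hbdd j S ω
  -- weighted step expectation
  have hweight : ∀ (T:ℕ) (i : Fin 2) (W : Ω → ℝ) (C : ℝ), 0 ≤ C →
      Measurable[sigPast B U T] W → (∀ ω, |W ω| ≤ C) →
      ∫ ω, W ω * (if U i T ω < B T (X i T ω) ω then (1:ℝ) else -1) ∂Pr
        = (∫ ω, W ω ∂Pr) * m := by
    intro T i W C hC hWm hWb
    have hWmeas : Measurable W := hWm.mono (sigPast_le hBmeas hUmeas T) le_rfl
    have hind_bdd : ∀ (x : ℤ) (ω : Ω), |if X i T ω = x then (1:ℝ) else 0| ≤ 1 := by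
      intro x ω; split_ifs <;> simp
    have hindm : ∀ x : ℤ, Measurable (fun ω => if X i T ω = x then (1:ℝ) else 0) :=
      fun x => Measurable.ite ((hXm i T) (measurableSet_singleton x))
        measurable_const measurable_const
    have intf : ∀ x : ℤ, Integrable (fun ω => W ω * (if X i T ω = x then (1:ℝ) else 0)) Pr := by
      intro x
      refine integrable_of_bdd Pr (hWmeas.mul (hindm x)) C ?_
      intro ω
      rw [abs_mul]
      calc |W ω| * |if X i T ω = x then (1:ℝ) else 0| ≤ C * 1 :=
            mul_le_mul (hWb ω) (hind_bdd x ω) (abs_nonneg _) hC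
        _ = C := mul_one C
    have hdecomp : ∀ ω, W ω * (if U i T ω < B T (X i T ω) ω then (1:ℝ) else -1)
        = ∑ x ∈ Finset.Icc (-(T:ℤ)) (T:ℤ),
            (W ω * (if X i T ω = x then (1:ℝ) else 0))
              * (if U i T ω < B T x ω then (1:ℝ) else -1) := by
      intro ω
      rw [Finset.sum_eq_single_of_mem (X i T ω) (hXin i T ω)]
      · rw [if_pos rfl, mul_one]
      · intro x _ hx
        rw [if_neg (fun h => hx (h.symm)), mul_zero, zero_mul]
    have hterm : ∀ x ∈ Finset.Icc (-(T:ℤ)) (T:ℤ),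
        ∫ ω, (W ω * (if X i T ω = x then (1:ℝ) else 0))
            * (if U i T ω < B T x ω then (1:ℝ) else -1) ∂Pr
          = (∫ ω, W ω * (if X i T ω = x then (1:ℝ) else 0) ∂Pr) * m := by
      intro x _
      have hindmeasP : Measurable[sigPast B U T] (fun ω => if X i T ω = x then (1:ℝ) else 0) :=
        Measurable.ite (hXP T i T le_rfl (measurableSet_singleton x))
          measurable_const measurable_const
      have hfP : Measurable[sigPast B U T]
          (fun ω => W ω * (if X i T ω = x then (1:ℝ) else 0)) := hWm.mul hindmeasP
      have hgC : Measurable[sigCur B U T]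
          (fun ω => if U i T ω < B T x ω then (1:ℝ) else -1) :=
        Measurable.ite (measurableSet_lt (U_cur_meas hBmeas hUmeas T i)
          (B_cur_meas hBmeas hUmeas T x)) measurable_const measurable_const
      have hIF := indepFun_of_past_cur Pr hBmeas hUmeas hF T hfP hgC
      have intg : Integrable (fun ω => if U i T ω < B T x ω then (1:ℝ) else -1) Pr := by
        refine integrable_of_bdd Pr (Measurable.ite (measurableSet_lt (hUmeas i T)
          (hBmeas T x)) measurable_const measurable_const) 1 ?_
        intro ω; split_ifs <;> simp
      have h2 := hIF.integral_fun_mul_eq_mul_integral (intf x).aestronglyMeasurable intg.aestronglyMeasurable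
      rw [hsign i T x] at h2
      exact h2
    calc ∫ ω, W ω * (if U i T ω < B T (X i T ω) ω then (1:ℝ) else -1) ∂Pr
        = ∫ ω, ∑ x ∈ Finset.Icc (-(T:ℤ)) (T:ℤ),
            (W ω * (if X i T ω = x then (1:ℝ) else 0))
              * (if U i T ω < B T x ω then (1:ℝ) else -1) ∂Pr :=
          integral_congr_ae (Filter.Eventually.of_forall hdecomp)
      _ = ∑ x ∈ Finset.Icc (-(T:ℤ)) (T:ℤ), ∫ ω,
            (W ω * (if X i T ω = x then (1:ℝ) else 0))
              * (if U i T ω < B T x ω then (1:ℝ) else -1) ∂Pr := by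
          refine integral_finset_sum _ (fun x _ => ?_)
          refine integrable_of_bdd Pr ((hWmeas.mul (hindm x)).mul (Measurable.ite
            (measurableSet_lt (hUmeas i T) (hBmeas T x)) measurable_const
            measurable_const)) C ?_
          intro ω
          rw [abs_mul, abs_mul]
          have h1 : |W ω| ≤ C := hWb ω
          have h2 := hind_bdd x ω
          have h3 : |if U i T ω < B T x ω then (1:ℝ) else -1| ≤ 1 := by split_ifs <;> simp
          have h4 : |W ω| * |if X i T ω = x then (1:ℝ) else 0| ≤ C := by
            calc |W ω| * |if X i T ω = x then (1:ℝ) else 0| ≤ C * 1 :=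
                  mul_le_mul h1 h2 (abs_nonneg _) hC
              _ = C := mul_one C
          calc |W ω| * |if X i T ω = x then (1:ℝ) else 0|
                * |if U i T ω < B T x ω then (1:ℝ) else -1| ≤ C * 1 :=
                mul_le_mul h4 h3 (abs_nonneg _) hC
            _ = C := mul_one C
      _ = ∑ x ∈ Finset.Icc (-(T:ℤ)) (T:ℤ),
            (∫ ω, W ω * (if X i T ω = x then (1:ℝ) else 0) ∂Pr) * m :=
          Finset.sum_congr rfl hterm
      _ = (∑ x ∈ Finset.Icc (-(T:ℤ)) (T:ℤ),
            ∫ ω, W ω * (if X i T ω = x then (1:ℝ) else 0) ∂Pr) * m :=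
          (Finset.sum_mul _ _ _).symm
      _ = (∫ ω, ∑ x ∈ Finset.Icc (-(T:ℤ)) (T:ℤ),
            W ω * (if X i T ω = x then (1:ℝ) else 0) ∂Pr) * m := by
          rw [integral_finset_sum _ (fun x _ => intf x)]
      _ = (∫ ω, W ω ∂Pr) * m := by
          congr 1
          refine integral_congr_ae (Filter.Eventually.of_forall fun ω => ?_)
          show ∑ x ∈ Finset.Icc (-(T:ℤ)) (T:ℤ), W ω * (if X i T ω = x then (1:ℝ) else 0)
            = W ω
          rw [Finset.sum_eq_single_of_mem (X i T ω) (hXin i T ω)]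
          · rw [if_pos rfl, mul_one]
          · intro x _ hx
            rw [if_neg (fun h => hx h.symm), mul_zero]
  -- mean of the walk
  have hmean : ∀ (i : Fin 2) (T : ℕ), ∫ ω, ((X i T ω : ℤ) : ℝ) ∂Pr = (T:ℝ) * m := by
    intro i T
    induction T with
    | zero =>
      have h0 : ∀ ω : Ω, ((X i 0 ω : ℤ):ℝ) = 0 := fun ω => by rw [hX0]; simp
      calc ∫ ω, ((X i 0 ω : ℤ):ℝ) ∂Pr = ∫ (_ : Ω), (0:ℝ) ∂Pr :=
            integral_congr_ae (Filter.Eventually.of_forall h0)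
        _ = 0 := integral_zero _ _
        _ = ((0:ℕ):ℝ) * m := by simp
    | succ T ih =>
      have hrw : ∀ ω, ((X i (T+1) ω : ℤ):ℝ)
          = ((X i T ω : ℤ):ℝ)
            + (1:ℝ) * (if U i T ω < B T (X i T ω) ω then (1:ℝ) else -1) := by
        intro ω
        rw [hXrec i T ω]
        split_ifs <;> push_cast <;> ring
      have int1 : Integrable (fun ω => ((X i T ω : ℤ):ℝ)) Pr :=
        integrable_of_bdd Pr (hcast_meas i T) (T:ℝ) (hcast_bdd i T)
      have int2 : Integrable
          (fun ω => (1:ℝ) * (if U i T ω < B T (X i T ω) ω then (1:ℝ) else -1)) Pr := by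
        refine integrable_of_bdd Pr (measurable_const.mul (hsmeas i T)) 1 ?_
        intro ω
        rw [one_mul]
        exact hstep_bdd i T ω
      calc ∫ ω, ((X i (T+1) ω : ℤ):ℝ) ∂Pr
          = ∫ ω, (((X i T ω : ℤ):ℝ)
              + (1:ℝ) * (if U i T ω < B T (X i T ω) ω then (1:ℝ) else -1)) ∂Pr :=
            integral_congr_ae (Filter.Eventually.of_forall hrw)
        _ = (∫ ω, ((X i T ω : ℤ):ℝ) ∂Pr)
              + ∫ ω, (1:ℝ) * (if U i T ω < B T (X i T ω) ω then (1:ℝ) else -1) ∂Pr :=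
            integral_add int1 int2
        _ = (T:ℝ) * m + (∫ (_ : Ω), (1:ℝ) ∂Pr) * m := by
            rw [ih, hweight T i (fun _ => (1:ℝ)) 1 zero_le_one measurable_const
              (by intro ω; simp)]
        _ = ((T+1:ℕ):ℝ) * m := by
            simp
            push_cast
            ring
  -- product of the two steps at time T
  have hDD : ∀ T : ℕ,
      ∫ ω, (if U 0 T ω < B T (X 0 T ω) ω then (1:ℝ) else -1)
        * (if U 1 T ω < B T (X 1 T ω) ω then (1:ℝ) else -1) ∂Pr
        = m^2 + v * (Pr {ω | X 0 T ω = X 1 T ω}).toReal := by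
    intro T
    classical
    set sfin : Finset (ℤ × ℤ) :=
      Finset.Icc (-(T:ℤ)) (T:ℤ) ×ˢ Finset.Icc (-(T:ℤ)) (T:ℤ) with hsfin
    set V : Ω → ℤ × ℤ := fun ω => (X 0 T ω, X 1 T ω) with hVdef
    have hVmeas : Measurable V := (hXm 0 T).prodMk (hXm 1 T)
    have hVP : Measurable[sigPast B U T] V :=
      (hXP T 0 T le_rfl).prodMk (hXP T 1 T le_rfl)
    have hVin : ∀ ω, V ω ∈ sfin := fun ω =>
      Finset.mem_product.mpr ⟨hXin 0 T ω, hXin 1 T ω⟩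
    have hzero : ∀ ω, ∀ p ∈ sfin, p ≠ V ω →
        (if V ω = p then (1:ℝ) else 0)
          * ((if U 0 T ω < B T p.1 ω then (1:ℝ) else -1)
            * (if U 1 T ω < B T p.2 ω then (1:ℝ) else -1)) = 0 := by
      intro ω p _ hp
      rw [if_neg (fun h => hp h.symm), zero_mul]
    have hdec : ∀ ω, (if U 0 T ω < B T (X 0 T ω) ω then (1:ℝ) else -1)
        * (if U 1 T ω < B T (X 1 T ω) ω then (1:ℝ) else -1)
        = ∑ p ∈ sfin, (if V ω = p then (1:ℝ) else 0)
            * ((if U 0 T ω < B T p.1 ω then (1:ℝ) else -1)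
              * (if U 1 T ω < B T p.2 ω then (1:ℝ) else -1)) := by
      intro ω
      rw [Finset.sum_eq_single_of_mem (V ω) (hVin ω) (hzero ω)]
      rw [if_pos rfl, one_mul]
    have hterm : ∀ p ∈ sfin,
        ∫ ω, (if V ω = p then (1:ℝ) else 0)
            * ((if U 0 T ω < B T p.1 ω then (1:ℝ) else -1)
              * (if U 1 T ω < B T p.2 ω then (1:ℝ) else -1)) ∂Pr
          = (Pr (V ⁻¹' {p})).toReal * (m^2 + if p.1 = p.2 then v else 0) := by
      intro p _
      have hfP : Measurable[sigPast B U T] (fun ω => if V ω = p then (1:ℝ) else 0) :=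
        Measurable.ite (hVP (measurableSet_singleton p)) measurable_const measurable_const
      have hgC : Measurable[sigCur B U T]
          (fun ω => (if U 0 T ω < B T p.1 ω then (1:ℝ) else -1)
            * (if U 1 T ω < B T p.2 ω then (1:ℝ) else -1)) :=
        Measurable.mul
          (Measurable.ite (measurableSet_lt (U_cur_meas hBmeas hUmeas T 0)
            (B_cur_meas hBmeas hUmeas T p.1)) measurable_const measurable_const)
          (Measurable.ite (measurableSet_lt (U_cur_meas hBmeas hUmeas T 1)
            (B_cur_meas hBmeas hUmeas T p.2)) measurable_const measurable_const)
      have hIF := indepFun_of_past_cur Pr hBmeas hUmeas hF T hfP hgC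
      have intf : Integrable (fun ω => if V ω = p then (1:ℝ) else 0) Pr := by
        refine integrable_of_bdd Pr (Measurable.ite (hVmeas (measurableSet_singleton p))
          measurable_const measurable_const) 1 ?_
        intro ω; split_ifs <;> simp
      have intg : Integrable (fun ω => (if U 0 T ω < B T p.1 ω then (1:ℝ) else -1)
          * (if U 1 T ω < B T p.2 ω then (1:ℝ) else -1)) Pr := by
        refine integrable_of_bdd Pr ((Measurable.ite (measurableSet_lt (hUmeas 0 T)
          (hBmeas T p.1)) measurable_const measurable_const).mul (Measurable.ite
          (measurableSet_lt (hUmeas 1 T) (hBmeas T p.2)) measurable_const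
          measurable_const)) 1 ?_
        intro ω
        rw [abs_mul]
        have h1 : |if U 0 T ω < B T p.1 ω then (1:ℝ) else -1| ≤ 1 := by split_ifs <;> simp
        have h2 : |if U 1 T ω < B T p.2 ω then (1:ℝ) else -1| ≤ 1 := by split_ifs <;> simp
        calc |if U 0 T ω < B T p.1 ω then (1:ℝ) else -1|
              * |if U 1 T ω < B T p.2 ω then (1:ℝ) else -1| ≤ 1 * 1 :=
              mul_le_mul h1 h2 (abs_nonneg _) zero_le_one
          _ = 1 := mul_one 1
      have h2 := hIF.integral_fun_mul_eq_mul_integral intf.aestronglyMeasurable intg.aestronglyMeasurable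
      have hf_int : ∫ ω, (if V ω = p then (1:ℝ) else 0) ∂Pr
          = (Pr (V ⁻¹' {p})).toReal := by
        refine integral_ind (f := fun ω => if V ω = p then (1:ℝ) else 0) Pr
          (hVmeas (measurableSet_singleton p)) ?_ ?_
        · intro ω h; exact if_pos h
        · intro ω h; exact if_neg h
      have hg_int : ∫ ω, (if U 0 T ω < B T p.1 ω then (1:ℝ) else -1)
          * (if U 1 T ω < B T p.2 ω then (1:ℝ) else -1) ∂Pr
          = m^2 + if p.1 = p.2 then v else 0 := by
        by_cases hp : p.1 = p.2
        · rw [if_pos hp, hp]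
          exact hsame T p.2
        · rw [if_neg hp, add_zero]
          exact hdiff T p.1 p.2 hp
      rw [hf_int, hg_int] at h2
      exact h2
    have hsum1 : ∑ p ∈ sfin, (Pr (V ⁻¹' {p})).toReal = 1 := by
      rw [sum_toReal_meas Pr hVmeas sfin]
      have : V ⁻¹' ↑sfin = Set.univ := by
        ext ω; simp only [Set.mem_preimage, Finset.coe_sort_coe, Set.mem_univ, iff_true]
        exact_mod_cast hVin ω
      rw [this, measure_univ, ENNReal.toReal_one]
    have hsum2 : ∑ p ∈ sfin, (Pr (V ⁻¹' {p})).toReal * (if p.1 = p.2 then v else 0)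
        = v * (Pr {ω | X 0 T ω = X 1 T ω}).toReal := by
      simp only [mul_ite, mul_zero]
      rw [← Finset.sum_filter]
      rw [← Finset.sum_mul, sum_toReal_meas Pr hVmeas]
      have : V ⁻¹' ↑(sfin.filter (fun p => p.1 = p.2)) = {ω | X 0 T ω = X 1 T ω} := by
        ext ω
        simp only [Set.mem_preimage, Finset.coe_filter, Set.mem_setOf_eq]
        constructor
        · intro h; exact h.2
        · intro h; exact ⟨hVin ω, h⟩
      rw [this, mul_comm]
    calc ∫ ω, (if U 0 T ω < B T (X 0 T ω) ω then (1:ℝ) else -1)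
          * (if U 1 T ω < B T (X 1 T ω) ω then (1:ℝ) else -1) ∂Pr
        = ∫ ω, ∑ p ∈ sfin, (if V ω = p then (1:ℝ) else 0)
            * ((if U 0 T ω < B T p.1 ω then (1:ℝ) else -1)
              * (if U 1 T ω < B T p.2 ω then (1:ℝ) else -1)) ∂Pr :=
          integral_congr_ae (Filter.Eventually.of_forall hdec)
      _ = ∑ p ∈ sfin, ∫ ω, (if V ω = p then (1:ℝ) else 0)
            * ((if U 0 T ω < B T p.1 ω then (1:ℝ) else -1)
              * (if U 1 T ω < B T p.2 ω then (1:ℝ) else -1)) ∂Pr := by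
          refine integral_finset_sum _ (fun p _ => ?_)
          refine integrable_of_bdd Pr ((Measurable.ite (hVmeas (measurableSet_singleton p))
            measurable_const measurable_const).mul ((Measurable.ite (measurableSet_lt
            (hUmeas 0 T) (hBmeas T p.1)) measurable_const measurable_const).mul
            (Measurable.ite (measurableSet_lt (hUmeas 1 T) (hBmeas T p.2))
            measurable_const measurable_const))) 1 ?_
          intro ω
          rw [abs_mul, abs_mul]
          have h0 : |if V ω = p then (1:ℝ) else 0| ≤ 1 := by split_ifs <;> simp
          have h1 : |if U 0 T ω < B T p.1 ω then (1:ℝ) else -1| ≤ 1 := by split_ifs <;> simp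
          have h2 : |if U 1 T ω < B T p.2 ω then (1:ℝ) else -1| ≤ 1 := by split_ifs <;> simp
          have h3 : |if U 0 T ω < B T p.1 ω then (1:ℝ) else -1|
              * |if U 1 T ω < B T p.2 ω then (1:ℝ) else -1| ≤ 1 := by
            calc |if U 0 T ω < B T p.1 ω then (1:ℝ) else -1|
                * |if U 1 T ω < B T p.2 ω then (1:ℝ) else -1| ≤ 1 * 1 :=
                mul_le_mul h1 h2 (abs_nonneg _) zero_le_one
              _ = 1 := mul_one 1
          calc |if V ω = p then (1:ℝ) else 0|
              * (|if U 0 T ω < B T p.1 ω then (1:ℝ) else -1|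
                * |if U 1 T ω < B T p.2 ω then (1:ℝ) else -1|) ≤ 1 * 1 :=
              mul_le_mul h0 h3 (by positivity) zero_le_one
            _ = 1 := mul_one 1
      _ = ∑ p ∈ sfin, (Pr (V ⁻¹' {p})).toReal * (m^2 + if p.1 = p.2 then v else 0) :=
          Finset.sum_congr rfl hterm
      _ = (∑ p ∈ sfin, (Pr (V ⁻¹' {p})).toReal) * m^2
            + ∑ p ∈ sfin, (Pr (V ⁻¹' {p})).toReal * (if p.1 = p.2 then v else 0) := by
          simp only [mul_add]
          rw [Finset.sum_add_distrib, ← Finset.sum_mul]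
      _ = m^2 + v * (Pr {ω | X 0 T ω = X 1 T ω}).toReal := by
          rw [hsum1, hsum2, one_mul]
  -- the main induction
  have main : ∀ T : ℕ, ∫ ω, ((X 0 T ω : ℤ):ℝ) * ((X 1 T ω : ℤ):ℝ) ∂Pr
      = ((T:ℝ) * m)^2 + v * ∑ s ∈ Finset.range T, (Pr {ω | X 0 s ω = X 1 s ω}).toReal := by
    intro T
    induction T with
    | zero =>
      have h0 : ∀ ω : Ω, ((X 0 0 ω : ℤ):ℝ) * ((X 1 0 ω : ℤ):ℝ) = 0 := fun ω => by
        rw [hX0, hX0]; simp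
      calc ∫ ω, ((X 0 0 ω : ℤ):ℝ) * ((X 1 0 ω : ℤ):ℝ) ∂Pr
          = ∫ (_ : Ω), (0:ℝ) ∂Pr := integral_congr_ae (Filter.Eventually.of_forall h0)
        _ = 0 := integral_zero _ _
        _ = (((0:ℕ):ℝ) * m)^2 + v * ∑ s ∈ Finset.range 0,
              (Pr {ω | X 0 s ω = X 1 s ω}).toReal := by simp
    | succ T ih =>
      have hrw : ∀ ω, ((X 0 (T+1) ω : ℤ):ℝ) * ((X 1 (T+1) ω : ℤ):ℝ)
          = ((X 0 T ω : ℤ):ℝ) * ((X 1 T ω : ℤ):ℝ)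
            + ((X 0 T ω : ℤ):ℝ) * (if U 1 T ω < B T (X 1 T ω) ω then (1:ℝ) else -1)
            + ((X 1 T ω : ℤ):ℝ) * (if U 0 T ω < B T (X 0 T ω) ω then (1:ℝ) else -1)
            + (if U 0 T ω < B T (X 0 T ω) ω then (1:ℝ) else -1)
              * (if U 1 T ω < B T (X 1 T ω) ω then (1:ℝ) else -1) := by
        intro ω
        rw [hXrec 0 T ω, hXrec 1 T ω]
        split_ifs <;> push_cast <;> ring
      have iA : Integrable (fun ω => ((X 0 T ω : ℤ):ℝ) * ((X 1 T ω : ℤ):ℝ)) Pr := by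
        refine integrable_of_bdd Pr ((hcast_meas 0 T).mul (hcast_meas 1 T)) ((T:ℝ)*T) ?_
        intro ω
        rw [abs_mul]
        exact mul_le_mul (hcast_bdd 0 T ω) (hcast_bdd 1 T ω) (abs_nonneg _)
          (Nat.cast_nonneg T)
      have iB : Integrable (fun ω => ((X 0 T ω : ℤ):ℝ)
          * (if U 1 T ω < B T (X 1 T ω) ω then (1:ℝ) else -1)) Pr := by
        refine integrable_of_bdd Pr ((hcast_meas 0 T).mul (hsmeas 1 T)) (T:ℝ) ?_
        intro ω
        rw [abs_mul]
        calc |((X 0 T ω : ℤ):ℝ)| * |if U 1 T ω < B T (X 1 T ω) ω then (1:ℝ) else -1|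
            ≤ (T:ℝ) * 1 := mul_le_mul (hcast_bdd 0 T ω) (hstep_bdd 1 T ω) (abs_nonneg _)
              (Nat.cast_nonneg T)
          _ = (T:ℝ) := mul_one _
      have iC : Integrable (fun ω => ((X 1 T ω : ℤ):ℝ)
          * (if U 0 T ω < B T (X 0 T ω) ω then (1:ℝ) else -1)) Pr := by
        refine integrable_of_bdd Pr ((hcast_meas 1 T).mul (hsmeas 0 T)) (T:ℝ) ?_
        intro ω
        rw [abs_mul]
        calc |((X 1 T ω : ℤ):ℝ)| * |if U 0 T ω < B T (X 0 T ω) ω then (1:ℝ) else -1|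
            ≤ (T:ℝ) * 1 := mul_le_mul (hcast_bdd 1 T ω) (hstep_bdd 0 T ω) (abs_nonneg _)
              (Nat.cast_nonneg T)
          _ = (T:ℝ) := mul_one _
      have iD : Integrable (fun ω => (if U 0 T ω < B T (X 0 T ω) ω then (1:ℝ) else -1)
          * (if U 1 T ω < B T (X 1 T ω) ω then (1:ℝ) else -1)) Pr := by
        refine integrable_of_bdd Pr ((hsmeas 0 T).mul (hsmeas 1 T)) 1 ?_
        intro ω
        rw [abs_mul]
        calc |if U 0 T ω < B T (X 0 T ω) ω then (1:ℝ) else -1|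
              * |if U 1 T ω < B T (X 1 T ω) ω then (1:ℝ) else -1| ≤ 1 * 1 :=
            mul_le_mul (hstep_bdd 0 T ω) (hstep_bdd 1 T ω) (abs_nonneg _) zero_le_one
          _ = 1 := mul_one 1
      have e1 := integral_add ((iA.add iB).add iC) iD
      have e2 := integral_add (iA.add iB) iC
      have e3 := integral_add iA iB
      simp only [Pi.add_apply] at e1 e2 e3
      have hB' : ∫ ω, ((X 0 T ω : ℤ):ℝ)
          * (if U 1 T ω < B T (X 1 T ω) ω then (1:ℝ) else -1) ∂Pr = ((T:ℝ) * m) * m := by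
        rw [hweight T 1 (fun ω => ((X 0 T ω : ℤ):ℝ)) (T:ℝ) (Nat.cast_nonneg T)
          ((measurable_of_countable (fun z : ℤ => (z:ℝ))).comp (hXP T 0 T le_rfl))
          (hcast_bdd 0 T), hmean 0 T]
      have hC' : ∫ ω, ((X 1 T ω : ℤ):ℝ)
          * (if U 0 T ω < B T (X 0 T ω) ω then (1:ℝ) else -1) ∂Pr = ((T:ℝ) * m) * m := by
        rw [hweight T 0 (fun ω => ((X 1 T ω : ℤ):ℝ)) (T:ℝ) (Nat.cast_nonneg T)
          ((measurable_of_countable (fun z : ℤ => (z:ℝ))).comp (hXP T 1 T le_rfl))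
          (hcast_bdd 1 T), hmean 1 T]
      calc ∫ ω, ((X 0 (T+1) ω : ℤ):ℝ) * ((X 1 (T+1) ω : ℤ):ℝ) ∂Pr
          = ∫ ω, (((X 0 T ω : ℤ):ℝ) * ((X 1 T ω : ℤ):ℝ)
            + ((X 0 T ω : ℤ):ℝ) * (if U 1 T ω < B T (X 1 T ω) ω then (1:ℝ) else -1)
            + ((X 1 T ω : ℤ):ℝ) * (if U 0 T ω < B T (X 0 T ω) ω then (1:ℝ) else -1)
            + (if U 0 T ω < B T (X 0 T ω) ω then (1:ℝ) else -1)
              * (if U 1 T ω < B T (X 1 T ω) ω then (1:ℝ) else -1)) ∂Pr :=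
            integral_congr_ae (Filter.Eventually.of_forall hrw)
        _ = (((T:ℝ) * m)^2 + v * ∑ s ∈ Finset.range T, (Pr {ω | X 0 s ω = X 1 s ω}).toReal)
            + ((T:ℝ) * m) * m + ((T:ℝ) * m) * m
            + (m^2 + v * (Pr {ω | X 0 T ω = X 1 T ω}).toReal) := by
            rw [e1, e2, e3, ih, hB', hC', hDD T]
        _ = (((T+1:ℕ):ℝ) * m)^2 + v * ∑ s ∈ Finset.range (T+1),
              (Pr {ω | X 0 s ω = X 1 s ω}).toReal := by
            rw [Finset.sum_range_succ]
            push_cast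
            ring
  rw [main t, hm]
  ring
end
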